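/- Define N_γ(u) := p × γ(u) × γ'(u) (Lorentzian triple product), the unit normal field of the timelike conical surface ξ(u,v) := −N_γ(u), and κ_γ(u) := det(γ(u), γ'(u), γ''(u), p) (4×4 determinant with these rows). Then for all (u,v) with sin(v) ≠ 0: ⟨ξ(u,v), ξ(u,v)⟩ = 1; ξ(u,v) is ⟨,⟩-orthogonal to Φ(u,v), ∂Φ/∂u(u,v) and ∂Φ/∂v(u,v); ∂ξ/∂v(u,v) = 0; and ∂ξ/∂u(u,v) = −(κ_γ(u)/sin(v))·∂Φ/∂u(u,v). (Hence the Weingarten map of the cone has eigenvalues κ_γ(u)/sin(v) and 0, so the cone has Gaussian curvature K = 1 and mean curvature H = κ_γ(u)/(2 sin(v)).) -/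

import Mathlib

open Real

/-- The Minkowski scalar product on `ℝ⁴₁`:
`⟨x,y⟩ = -x₁y₁ + x₂y₂ + x₃y₃ + x₄y₄`. -/
noncomputable def mdot (x y : Fin 4 → ℝ) : ℝ :=
  -(x 0 * y 0) + x 1 * y 1 + x 2 * y 2 + x 3 * y 3

private lemma det4_expand (x p a b : Fin 4 → ℝ) :
    (Matrix.of ![x, p, a, b]).det =
      x 0 * (p 1 * (a 2 * b 3 - a 3 * b 2) - p 2 * (a 1 * b 3 - a 3 * b 1) + p 3 * (a 1 * b 2 - a 2 * b 1))
    - x 1 * (p 0 * (a 2 * b 3 - a 3 * b 2) - p 2 * (a 0 * b 3 - a 3 * b 0) + p 3 * (a 0 * b 2 - a 2 * b 0))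
    + x 2 * (p 0 * (a 1 * b 3 - a 3 * b 1) - p 1 * (a 0 * b 3 - a 3 * b 0) + p 3 * (a 0 * b 1 - a 1 * b 0))
    - x 3 * (p 0 * (a 1 * b 2 - a 2 * b 1) - p 1 * (a 0 * b 2 - a 2 * b 0) + p 2 * (a 0 * b 1 - a 1 * b 0)) := by
  simp [Matrix.det_succ_row_zero, Fin.sum_univ_succ, Matrix.det_fin_three,
    show (Fin.succ 2 : Fin 4) = 3 from rfl, show Fin.succAbove 2 2 = (3:Fin 4) from rfl,
    show Fin.succAbove 1 2 = (3:Fin 4) from rfl, show (Fin.castSucc 2 : Fin 4) = 2 from rfl,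
    show Fin.succAbove 3 2 = (2:Fin 4) from rfl]
  ring

private lemma normal_eq (p a b n : Fin 4 → ℝ)
    (h : ∀ x : Fin 4 → ℝ, mdot x n = (Matrix.of ![x, p, a, b]).det) :
    n = ![ -(p 1 * (a 2 * b 3 - a 3 * b 2) - p 2 * (a 1 * b 3 - a 3 * b 1) + p 3 * (a 1 * b 2 - a 2 * b 1)),
           -(p 0 * (a 2 * b 3 - a 3 * b 2) - p 2 * (a 0 * b 3 - a 3 * b 0) + p 3 * (a 0 * b 2 - a 2 * b 0)),
           p 0 * (a 1 * b 3 - a 3 * b 1) - p 1 * (a 0 * b 3 - a 3 * b 0) + p 3 * (a 0 * b 1 - a 1 * b 0),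
           -(p 0 * (a 1 * b 2 - a 2 * b 1) - p 1 * (a 0 * b 2 - a 2 * b 0) + p 2 * (a 0 * b 1 - a 1 * b 0))] := by
  funext i
  have h0 := h ![1,0,0,0]
  have h1 := h ![0,1,0,0]
  have h2 := h ![0,0,1,0]
  have h3 := h ![0,0,0,1]
  rw [det4_expand] at h0 h1 h2 h3
  simp [mdot] at h0 h1 h2 h3
  fin_cases i <;> simp <;> linarith

private lemma mdot_comm (x y : Fin 4 → ℝ) : mdot x y = mdot y x := by
  simp only [mdot]; ring

private lemma mdot_neg_neg (x y : Fin 4 → ℝ) : mdot (-x) (-y) = mdot x y := by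
  simp only [mdot, Pi.neg_apply]; ring

private lemma hasDerivAt_mdot {f g : ℝ → Fin 4 → ℝ} {f' g' : Fin 4 → ℝ} {t : ℝ}
    (hf : HasDerivAt f f' t) (hg : HasDerivAt g g' t) :
    HasDerivAt (fun s => mdot (f s) (g s)) (mdot f' (g t) + mdot (f t) g') t := by
  have hfi := fun i => hasDerivAt_pi.mp hf i
  have hgi := fun i => hasDerivAt_pi.mp hg i
  have H := ((((hfi 0).mul (hgi 0)).neg.add ((hfi 1).mul (hgi 1))).add
      ((hfi 2).mul (hgi 2))).add ((hfi 3).mul (hgi 3))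
  have e1 : (fun s => mdot (f s) (g s)) =
      fun s => -(f s 0 * g s 0) + f s 1 * g s 1 + f s 2 * g s 2 + f s 3 * g s 3 := rfl
  rw [e1, show mdot f' (g t) + mdot (f t) g'
      = -(f' 0 * g t 0 + f t 0 * g' 0) + (f' 1 * g t 1 + f t 1 * g' 1)
        + (f' 2 * g t 2 + f t 2 * g' 2) + (f' 3 * g t 3 + f t 3 * g' 3) from by
    simp [mdot]; ring]
  exact H

private lemma key1 (p0 p1 p2 p3 a0 a1 a2 a3 b0 b1 b2 b3 : ℝ)
    (h1 : -(p0*p0)+p1*p1+p2*p2+p3*p3 = 1)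
    (h2 : -(a0*a0)+a1*a1+a2*a2+a3*a3 = 1)
    (h3 : -(a0*p0)+a1*p1+a2*p2+a3*p3 = 0)
    (h4 : -(b0*b0)+b1*b1+b2*b2+b3*b3 = -1)
    (h5 : -(a0*b0)+a1*b1+a2*b2+a3*b3 = 0)
    (h6 : -(b0*p0)+b1*p1+b2*p2+b3*p3 = 0) :
    (-1)*p3^2*a2^2*b1^2 + p3^2*a2^2*b0^2 + (2)*p3^2*a1*a2*b1*b2 + (-1)*p3^2*a1^2*b2^2 + p3^2*a1^2*b0^2 + (-2)*p3^2*a0*a2*b0*b2 + (-2)*p3^2*a0*a1*b0*b1 + p3^2*a0^2*b2^2 + p3^2*a0^2*b1^2 + (2)*p2*p3*a2*a3*b1^2 + (-2)*p2*p3*a2*a3*b0^2 + (-2)*p2*p3*a1*a3*b1*b2 + (-2)*p2*p3*a1*a2*b1*b3 + (2)*p2*p3*a1^2*b2*b3 + (2)*p2*p3*a0*a3*b0*b2 + (2)*p2*p3*a0*a2*b0*b3 + (-2)*p2*p3*a0^2*b2*b3 + (-1)*p2^2*a3^2*b1^2 + p2^2*a3^2*b0^2 + (2)*p2^2*a1*a3*b1*b3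 + (-1)*p2^2*a1^2*b3^2 + p2^2*a1^2*b0^2 + (-2)*p2^2*a0*a3*b0*b3 + (-2)*p2^2*a0*a1*b0*b1 + p2^2*a0^2*b3^2 + p2^2*a0^2*b1^2 + (-2)*p1*p3*a2*a3*b1*b2 + (2)*p1*p3*a2^2*b1*b3 + (2)*p1*p3*a1*a3*b2^2 + (-2)*p1*p3*a1*a3*b0^2 + (-2)*p1*p3*a1*a2*b2*b3 + (2)*p1*p3*a0*a3*b0*b1 + (2)*p1*p3*a0*a1*b0*b3 + (-2)*p1*p3*a0^2*b1*b3 + (2)*p1*p2*a3^2*b1*b2 + (-2)*p1*p2*a2*a3*b1*b3 + (-2)*p1*p2*a1*a3*b2*b3 + (2)*p1*p2*a1*a2*b3^2 + (-2)*p1*p2*a1*a2*b0^2 + (2)*p1*p2*a0*a2*b0*b1 + (2)*p1*p2*a0*a1*b0*b2 + (-2)*p1*p2*a0^2*b1*b2 + (-1)*p1^2*a3^2*b2^2 + p1^2*a3^2*b0^2 + (2)*p1^2*a2*a3*b2*b3 + (-1)*p1^2*a2^2*b3^2 + p1^2*a2^2*b0^2 + (-2)*p1^2*a0*a3*b0*b3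 + (-2)*p1^2*a0*a2*b0*b2 + p1^2*a0^2*b3^2 + p1^2*a0^2*b2^2 + (2)*p0*p3*a2*a3*b0*b2 + (-2)*p0*p3*a2^2*b0*b3 + (2)*p0*p3*a1*a3*b0*b1 + (-2)*p0*p3*a1^2*b0*b3 + (-2)*p0*p3*a0*a3*b2^2 + (-2)*p0*p3*a0*a3*b1^2 + (2)*p0*p3*a0*a2*b2*b3 + (2)*p0*p3*a0*a1*b1*b3 + (-2)*p0*p2*a3^2*b0*b2 + (2)*p0*p2*a2*a3*b0*b3 + (2)*p0*p2*a1*a2*b0*b1 + (-2)*p0*p2*a1^2*b0*b2 + (2)*p0*p2*a0*a3*b2*b3 + (-2)*p0*p2*a0*a2*b3^2 + (-2)*p0*p2*a0*a2*b1^2 + (2)*p0*p2*a0*a1*b1*b2 + (-2)*p0*p1*a3^2*b0*b1 + (-2)*p0*p1*a2^2*b0*b1 + (2)*p0*p1*a1*a3*b0*b3 + (2)*p0*p1*a1*a2*b0*b2 + (2)*p0*p1*a0*a3*b1*b3 + (2)*p0*p1*a0*a2*b1*b2 + (-2)*p0*p1*a0*a1*b3^2 + (-2)*p0*p1*a0*a1*b2^2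 + p0^2*a3^2*b2^2 + p0^2*a3^2*b1^2 + (-2)*p0^2*a2*a3*b2*b3 + p0^2*a2^2*b3^2 + p0^2*a2^2*b1^2 + (-2)*p0^2*a1*a3*b1*b3 + (-2)*p0^2*a1*a2*b1*b2 + p0^2*a1^2*b3^2 + p0^2*a1^2*b2^2 = 1 := by
  linear_combination ((1)) * h1 + (p3^2 + p2^2 + p1^2 + (-1)*p0^2) * h2 + ((-1)*p3*a3 + (-1)*p2*a2 + (-1)*p1*a1 + p0*a0) * h3 + ((-1)*p3^2*a2^2 + (-1)*p3^2*a1^2 + p3^2*a0^2 + (2)*p2*p3*a2*a3 + (-1)*p2^2*a3^2 + (-1)*p2^2*a1^2 + p2^2*a0^2 + (2)*p1*p3*a1*a3 + (2)*p1*p2*a1*a2 + (-1)*p1^2*a3^2 + (-1)*p1^2*a2^2 + p1^2*a0^2 + (-2)*p0*p3*a0*a3 + (-2)*p0*p2*a0*a2 + (-2)*p0*p1*a0*a1 + p0^2*a3^2 + p0^2*a2^2 + p0^2*a1^2) * h4 + (p3^2*a2*b2 + p3^2*a1*b1 + (-1)*p3^2*a0*b0 + (-1)*p2*p3*a3*b2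 + (-1)*p2*p3*a2*b3 + p2^2*a3*b3 + p2^2*a1*b1 + (-1)*p2^2*a0*b0 + (-1)*p1*p3*a3*b1 + (-1)*p1*p3*a1*b3 + (-1)*p1*p2*a2*b1 + (-1)*p1*p2*a1*b2 + p1^2*a3*b3 + p1^2*a2*b2 + (-1)*p1^2*a0*b0 + p0*p3*a3*b0 + p0*p3*a0*b3 + p0*p2*a2*b0 + p0*p2*a0*b2 + p0*p1*a1*b0 + p0*p1*a0*b1 + (-1)*p0^2*a3*b3 + (-1)*p0^2*a2*b2 + (-1)*p0^2*a1*b1) * h5 + ((-1)*p3*a2*a3*b2 + p3*a2^2*b3 + (-1)*p3*a1*a3*b1 + p3*a1^2*b3 + p3*a0*a3*b0 + (-1)*p3*a0^2*b3 + p2*a3^2*b2 + (-1)*p2*a2*a3*b3 + (-1)*p2*a1*a2*b1 + p2*a1^2*b2 + p2*a0*a2*b0 + (-1)*p2*a0^2*b2 + p1*a3^2*b1 + p1*a2^2*b1 + (-1)*p1*a1*a3*b3 + (-1)*p1*a1*a2*b2 + p1*a0*a1*b0 + (-1)*p1*a0^2*b1 + (-1)*p0*a3^2*b0 + (-1)*p0*a2^2*b0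 + (-1)*p0*a1^2*b0 + p0*a0*a3*b3 + p0*a0*a2*b2 + p0*a0*a1*b1) * h6

private lemma key2_0 (p0 p1 p2 p3 a0 a1 a2 a3 b0 b1 b2 b3 c0 c1 c2 c3 : ℝ)
    (h1 : -(p0*p0)+p1*p1+p2*p2+p3*p3 = 1)
    (h2 : -(a0*a0)+a1*a1+a2*a2+a3*a3 = 1)
    (h3 : -(a0*p0)+a1*p1+a2*p2+a3*p3 = 0)
    (h4 : -(b0*b0)+b1*b1+b2*b2+b3*b3 = -1)
    (h5 : -(a0*b0)+a1*b1+a2*b2+a3*b3 = 0)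
    (h6 : -(b0*p0)+b1*p1+b2*p2+b3*p3 = 0)
    (h7 : -(a0*c0)+a1*c1+a2*c2+a3*c3 = 1)
    (h8 : -(c0*p0)+c1*p1+c2*p2+c3*p3 = 0)
    (h9 : -(b0*c0)+b1*c1+b2*c2+b3*c3 = 0) :
    p3*a2*c1 + (-1)*p3*a1*c2 + (-1)*p2*a3*c1 + p2*a1*c3 + p1*a3*c2 + (-1)*p1*a2*c3 = ((-1)*p3*a2*b1*c0 + p3*a2*b0*c1 + p3*a1*b2*c0 + (-1)*p3*a1*b0*c2 + (-1)*p3*a0*b2*c1 + p3*a0*b1*c2 + p2*a3*b1*c0 + (-1)*p2*a3*b0*c1 + (-1)*p2*a1*b3*c0 + p2*a1*b0*c3 + p2*a0*b3*c1 + (-1)*p2*a0*b1*c3 + (-1)*p1*a3*b2*c0 + p1*a3*b0*c2 + p1*a2*b3*c0 + (-1)*p1*a2*b0*c3 + (-1)*p1*a0*b3*c2 + p1*a0*b2*c3 + p0*a3*b2*c1 + (-1)*p0*a3*b1*c2 + (-1)*p0*a2*b3*c1 + p0*a2*b1*c3 + p0*a1*b3*c2 + (-1)*p0*a1*b2*c3)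 * b0 := by
  linear_combination ((-1)*p3*a2*c1 + (-1)*p3*a2*b0*b1*c0 + p3*a2*b0^2*c1 + p3*a1*c2 + p3*a1*b0*b2*c0 + (-1)*p3*a1*b0^2*c2 + (-1)*p3*a0*b0*b2*c1 + p3*a0*b0*b1*c2 + p2*a3*c1 + p2*a3*b0*b1*c0 + (-1)*p2*a3*b0^2*c1 + (-1)*p2*a1*c3 + (-1)*p2*a1*b0*b3*c0 + p2*a1*b0^2*c3 + p2*a0*b0*b3*c1 + (-1)*p2*a0*b0*b1*c3 + (-1)*p1*a3*c2 + (-1)*p1*a3*b0*b2*c0 + p1*a3*b0^2*c2 + p1*a2*c3 + p1*a2*b0*b3*c0 + (-1)*p1*a2*b0^2*c3 + (-1)*p1*a0*b0*b3*c2 + p1*a0*b0*b2*c3 + p0*a3*b0*b2*c1 + (-1)*p0*a3*b0*b1*c2 + (-1)*p0*a2*b0*b3*c1 + p0*a2*b0*b1*c3 + p0*a1*b0*b3*c2 + (-1)*p0*a1*b0*b2*c3) * h1 + ((-1)*p3^3*a2*c1 + (-1)*p3^3*a2*b0*b1*c0 + p3^3*a2*b0^2*c1 + p3^3*a1*c2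 + p3^3*a1*b0*b2*c0 + (-1)*p3^3*a1*b0^2*c2 + (-1)*p3^3*a0*b0*b2*c1 + p3^3*a0*b0*b1*c2 + p2*p3^2*a3*c1 + p2*p3^2*a3*b0*b1*c0 + (-1)*p2*p3^2*a3*b0^2*c1 + (-1)*p2*p3^2*a1*c3 + (-1)*p2*p3^2*a1*b0*b3*c0 + p2*p3^2*a1*b0^2*c3 + p2*p3^2*a0*b0*b3*c1 + (-1)*p2*p3^2*a0*b0*b1*c3 + (-1)*p2^2*p3*a2*c1 + (-1)*p2^2*p3*a2*b0*b1*c0 + p2^2*p3*a2*b0^2*c1 + p2^2*p3*a1*c2 + p2^2*p3*a1*b0*b2*c0 + (-1)*p2^2*p3*a1*b0^2*c2 + (-1)*p2^2*p3*a0*b0*b2*c1 + p2^2*p3*a0*b0*b1*c2 + p2^3*a3*c1 + p2^3*a3*b0*b1*c0 + (-1)*p2^3*a3*b0^2*c1 + (-1)*p2^3*a1*c3 + (-1)*p2^3*a1*b0*b3*c0 + p2^3*a1*b0^2*c3 + p2^3*a0*b0*b3*c1 + (-1)*p2^3*a0*b0*b1*c3 + (-1)*p1*p3^2*a3*c2 +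 (-1)*p1*p3^2*a3*b0*b2*c0 + p1*p3^2*a3*b0^2*c2 + p1*p3^2*a2*c3 + p1*p3^2*a2*b0*b3*c0 + (-1)*p1*p3^2*a2*b0^2*c3 + (-1)*p1*p3^2*a0*b0*b3*c2 + p1*p3^2*a0*b0*b2*c3 + (-1)*p1*p2^2*a3*c2 + (-1)*p1*p2^2*a3*b0*b2*c0 + p1*p2^2*a3*b0^2*c2 + p1*p2^2*a2*c3 + p1*p2^2*a2*b0*b3*c0 + (-1)*p1*p2^2*a2*b0^2*c3 + (-1)*p1*p2^2*a0*b0*b3*c2 + p1*p2^2*a0*b0*b2*c3 + (-1)*p1^2*p3*a2*c1 + (-1)*p1^2*p3*a2*b0*b1*c0 + p1^2*p3*a2*b0^2*c1 + p1^2*p3*a1*c2 + p1^2*p3*a1*b0*b2*c0 + (-1)*p1^2*p3*a1*b0^2*c2 + (-1)*p1^2*p3*a0*b0*b2*c1 + p1^2*p3*a0*b0*b1*c2 + p1^2*p2*a3*c1 + p1^2*p2*a3*b0*b1*c0 + (-1)*p1^2*p2*a3*b0^2*c1 + (-1)*p1^2*p2*a1*c3 + (-1)*p1^2*p2*a1*b0*b3*c0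 + p1^2*p2*a1*b0^2*c3 + p1^2*p2*a0*b0*b3*c1 + (-1)*p1^2*p2*a0*b0*b1*c3 + (-1)*p1^3*a3*c2 + (-1)*p1^3*a3*b0*b2*c0 + p1^3*a3*b0^2*c2 + p1^3*a2*c3 + p1^3*a2*b0*b3*c0 + (-1)*p1^3*a2*b0^2*c3 + (-1)*p1^3*a0*b0*b3*c2 + p1^3*a0*b0*b2*c3 + p0*p3^2*a3*b0*b2*c1 + (-1)*p0*p3^2*a3*b0*b1*c2 + p0*p3^2*a2*b1*b3*c0 + (-2)*p0*p3^2*a2*b0*b3*c1 + p0*p3^2*a2*b0*b1*c3 + (-1)*p0*p3^2*a1*b2*b3*c0 + (2)*p0*p3^2*a1*b0*b3*c2 + (-1)*p0*p3^2*a1*b0*b2*c3 + p0*p3^2*a0*b2*b3*c1 + (-1)*p0*p3^2*a0*b1*b3*c2 + (-1)*p0*p2*p3*a3*b1*b3*c0 + p0*p2*p3*a3*b0*b3*c1 + p0*p2*p3*a2*b1*b2*c0 + (-1)*p0*p2*p3*a2*b0*b2*c1 + p0*p2*p3*a1*b3^2*c0 + (-1)*p0*p2*p3*a1*b2^2*c0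 + (-1)*p0*p2*p3*a1*b0*b3*c3 + p0*p2*p3*a1*b0*b2*c2 + (-1)*p0*p2*p3*a0*b3^2*c1 + p0*p2*p3*a0*b2^2*c1 + p0*p2*p3*a0*b1*b3*c3 + (-1)*p0*p2*p3*a0*b1*b2*c2 + (-1)*p0*p2^2*a3*b1*b2*c0 + (2)*p0*p2^2*a3*b0*b2*c1 + (-1)*p0*p2^2*a3*b0*b1*c2 + (-1)*p0*p2^2*a2*b0*b3*c1 + p0*p2^2*a2*b0*b1*c3 + p0*p2^2*a1*b2*b3*c0 + p0*p2^2*a1*b0*b3*c2 + (-2)*p0*p2^2*a1*b0*b2*c3 + (-1)*p0*p2^2*a0*b2*b3*c1 + p0*p2^2*a0*b1*b2*c3 + p0*p1*p3*a3*b2*b3*c0 + (-1)*p0*p1*p3*a3*b0*b3*c2 + (-1)*p0*p1*p3*a2*b3^2*c0 + p0*p1*p3*a2*b1^2*c0 + p0*p1*p3*a2*b0*b3*c3 + (-1)*p0*p1*p3*a2*b0*b1*c1 + (-1)*p0*p1*p3*a1*b1*b2*c0 + p0*p1*p3*a1*b0*b1*c2 + p0*p1*p3*a0*b3^2*c2 +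 (-1)*p0*p1*p3*a0*b2*b3*c3 + p0*p1*p3*a0*b1*b2*c1 + (-1)*p0*p1*p3*a0*b1^2*c2 + p0*p1*p2*a3*b2^2*c0 + (-1)*p0*p1*p2*a3*b1^2*c0 + (-1)*p0*p1*p2*a3*b0*b2*c2 + p0*p1*p2*a3*b0*b1*c1 + (-1)*p0*p1*p2*a2*b2*b3*c0 + p0*p1*p2*a2*b0*b2*c3 + p0*p1*p2*a1*b1*b3*c0 + (-1)*p0*p1*p2*a1*b0*b1*c3 + p0*p1*p2*a0*b2*b3*c2 + (-1)*p0*p1*p2*a0*b2^2*c3 + (-1)*p0*p1*p2*a0*b1*b3*c1 + p0*p1*p2*a0*b1^2*c3 + p0*p1^2*a3*b1*b2*c0 + p0*p1^2*a3*b0*b2*c1 + (-2)*p0*p1^2*a3*b0*b1*c2 + (-1)*p0*p1^2*a2*b1*b3*c0 + (-1)*p0*p1^2*a2*b0*b3*c1 + (2)*p0*p1^2*a2*b0*b1*c3 + p0*p1^2*a1*b0*b3*c2 + (-1)*p0*p1^2*a1*b0*b2*c3 + p0*p1^2*a0*b1*b3*c2 + (-1)*p0*p1^2*a0*b1*b2*c3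 + (-1)*p0^2*p3*a3*b2*b3*c1 + p0^2*p3*a3*b1*b3*c2 + p0^2*p3*a2*c1 + p0^2*p3*a2*b3^2*c1 + (-1)*p0^2*p3*a2*b1*b3*c3 + (-1)*p0^2*p3*a1*c2 + (-1)*p0^2*p3*a1*b3^2*c2 + p0^2*p3*a1*b2*b3*c3 + (-1)*p0^2*p2*a3*c1 + (-1)*p0^2*p2*a3*b2^2*c1 + p0^2*p2*a3*b1*b2*c2 + p0^2*p2*a2*b2*b3*c1 + (-1)*p0^2*p2*a2*b1*b2*c3 + p0^2*p2*a1*c3 + (-1)*p0^2*p2*a1*b2*b3*c2 + p0^2*p2*a1*b2^2*c3 + p0^2*p1*a3*c2 + (-1)*p0^2*p1*a3*b1*b2*c1 + p0^2*p1*a3*b1^2*c2 + (-1)*p0^2*p1*a2*c3 + p0^2*p1*a2*b1*b3*c1 + (-1)*p0^2*p1*a2*b1^2*c3 + (-1)*p0^2*p1*a1*b1*b3*c2 + p0^2*p1*a1*b1*b2*c3) * h2 + (p3^2*a2*a3*c1 + p3^2*a2*a3*b0*b1*c0 + (-1)*p3^2*a2*a3*b0^2*c1 + (-1)*p3^2*a1*a3*c2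 + (-1)*p3^2*a1*a3*b0*b2*c0 + p3^2*a1*a3*b0^2*c2 + p3^2*a0*a3*b0*b2*c1 + (-1)*p3^2*a0*a3*b0*b1*c2 + (-1)*p3^2*a0*a2*b1*b3*c0 + p3^2*a0*a2*b0*b3*c1 + p3^2*a0*a1*b2*b3*c0 + (-1)*p3^2*a0*a1*b0*b3*c2 + (-1)*p3^2*a0^2*b2*b3*c1 + p3^2*a0^2*b1*b3*c2 + (-1)*p2*p3*a3^2*c1 + (-1)*p2*p3*a3^2*b0*b1*c0 + p2*p3*a3^2*b0^2*c1 + p2*p3*a2^2*c1 + p2*p3*a2^2*b0*b1*c0 + (-1)*p2*p3*a2^2*b0^2*c1 + p2*p3*a1*a3*c3 + p2*p3*a1*a3*b0*b3*c0 + (-1)*p2*p3*a1*a3*b0^2*c3 + (-1)*p2*p3*a1*a2*c2 + (-1)*p2*p3*a1*a2*b0*b2*c0 + p2*p3*a1*a2*b0^2*c2 + p2*p3*a0*a3*b1*b3*c0 + (-2)*p2*p3*a0*a3*b0*b3*c1 + p2*p3*a0*a3*b0*b1*c3 + (-1)*p2*p3*a0*a2*b1*b2*c0 + (2)*p2*p3*a0*a2*b0*b2*c1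 + (-1)*p2*p3*a0*a2*b0*b1*c2 + (-1)*p2*p3*a0*a1*b3^2*c0 + p2*p3*a0*a1*b2^2*c0 + p2*p3*a0*a1*b0*b3*c3 + (-1)*p2*p3*a0*a1*b0*b2*c2 + p2*p3*a0^2*b3^2*c1 + (-1)*p2*p3*a0^2*b2^2*c1 + (-1)*p2*p3*a0^2*b1*b3*c3 + p2*p3*a0^2*b1*b2*c2 + (-1)*p2^2*a2*a3*c1 + (-1)*p2^2*a2*a3*b0*b1*c0 + p2^2*a2*a3*b0^2*c1 + p2^2*a1*a2*c3 + p2^2*a1*a2*b0*b3*c0 + (-1)*p2^2*a1*a2*b0^2*c3 + p2^2*a0*a3*b1*b2*c0 + (-1)*p2^2*a0*a3*b0*b2*c1 + (-1)*p2^2*a0*a2*b0*b3*c1 + p2^2*a0*a2*b0*b1*c3 + (-1)*p2^2*a0*a1*b2*b3*c0 + p2^2*a0*a1*b0*b2*c3 + p2^2*a0^2*b2*b3*c1 + (-1)*p2^2*a0^2*b1*b2*c3 + p1*p3*a3^2*c2 + p1*p3*a3^2*b0*b2*c0 + (-1)*p1*p3*a3^2*b0^2*c2 + (-1)*p1*p3*a2*a3*c3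 + (-1)*p1*p3*a2*a3*b0*b3*c0 + p1*p3*a2*a3*b0^2*c3 + p1*p3*a1*a2*c1 + p1*p3*a1*a2*b0*b1*c0 + (-1)*p1*p3*a1*a2*b0^2*c1 + (-1)*p1*p3*a1^2*c2 + (-1)*p1*p3*a1^2*b0*b2*c0 + p1*p3*a1^2*b0^2*c2 + (-1)*p1*p3*a0*a3*b2*b3*c0 + (2)*p1*p3*a0*a3*b0*b3*c2 + (-1)*p1*p3*a0*a3*b0*b2*c3 + p1*p3*a0*a2*b3^2*c0 + (-1)*p1*p3*a0*a2*b1^2*c0 + (-1)*p1*p3*a0*a2*b0*b3*c3 + p1*p3*a0*a2*b0*b1*c1 + p1*p3*a0*a1*b1*b2*c0 + p1*p3*a0*a1*b0*b2*c1 + (-2)*p1*p3*a0*a1*b0*b1*c2 + (-1)*p1*p3*a0^2*b3^2*c2 + p1*p3*a0^2*b2*b3*c3 + (-1)*p1*p3*a0^2*b1*b2*c1 + p1*p3*a0^2*b1^2*c2 + p1*p2*a2*a3*c2 + p1*p2*a2*a3*b0*b2*c0 + (-1)*p1*p2*a2*a3*b0^2*c2 + (-1)*p1*p2*a2^2*c3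 + (-1)*p1*p2*a2^2*b0*b3*c0 + p1*p2*a2^2*b0^2*c3 + (-1)*p1*p2*a1*a3*c1 + (-1)*p1*p2*a1*a3*b0*b1*c0 + p1*p2*a1*a3*b0^2*c1 + p1*p2*a1^2*c3 + p1*p2*a1^2*b0*b3*c0 + (-1)*p1*p2*a1^2*b0^2*c3 + (-1)*p1*p2*a0*a3*b2^2*c0 + p1*p2*a0*a3*b1^2*c0 + p1*p2*a0*a3*b0*b2*c2 + (-1)*p1*p2*a0*a3*b0*b1*c1 + p1*p2*a0*a2*b2*b3*c0 + p1*p2*a0*a2*b0*b3*c2 + (-2)*p1*p2*a0*a2*b0*b2*c3 + (-1)*p1*p2*a0*a1*b1*b3*c0 + (-1)*p1*p2*a0*a1*b0*b3*c1 + (2)*p1*p2*a0*a1*b0*b1*c3 + (-1)*p1*p2*a0^2*b2*b3*c2 + p1*p2*a0^2*b2^2*c3 + p1*p2*a0^2*b1*b3*c1 + (-1)*p1*p2*a0^2*b1^2*c3 + p1^2*a1*a3*c2 + p1^2*a1*a3*b0*b2*c0 + (-1)*p1^2*a1*a3*b0^2*c2 + (-1)*p1^2*a1*a2*c3 + (-1)*p1^2*a1*a2*b0*b3*c0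 + p1^2*a1*a2*b0^2*c3 + (-1)*p1^2*a0*a3*b1*b2*c0 + p1^2*a0*a3*b0*b1*c2 + p1^2*a0*a2*b1*b3*c0 + (-1)*p1^2*a0*a2*b0*b1*c3 + p1^2*a0*a1*b0*b3*c2 + (-1)*p1^2*a0*a1*b0*b2*c3 + (-1)*p1^2*a0^2*b1*b3*c2 + p1^2*a0^2*b1*b2*c3 + (-1)*p0*p3*a3^2*b0*b2*c1 + p0*p3*a3^2*b0*b1*c2 + p0*p3*a2*a3*b0*b3*c1 + (-1)*p0*p3*a2*a3*b0*b1*c3 + (-1)*p0*p3*a1*a3*b0*b3*c2 + p0*p3*a1*a3*b0*b2*c3 + p0*p3*a0*a3*b2*b3*c1 + (-1)*p0*p3*a0*a3*b1*b3*c2 + (-1)*p0*p3*a0*a2*c1 + (-1)*p0*p3*a0*a2*b3^2*c1 + p0*p3*a0*a2*b1*b3*c3 + p0*p3*a0*a1*c2 + p0*p3*a0*a1*b3^2*c2 + (-1)*p0*p3*a0*a1*b2*b3*c3 + (-1)*p0*p2*a2*a3*b0*b2*c1 + p0*p2*a2*a3*b0*b1*c2 + p0*p2*a2^2*b0*b3*c1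 + (-1)*p0*p2*a2^2*b0*b1*c3 + (-1)*p0*p2*a1*a2*b0*b3*c2 + p0*p2*a1*a2*b0*b2*c3 + p0*p2*a0*a3*c1 + p0*p2*a0*a3*b2^2*c1 + (-1)*p0*p2*a0*a3*b1*b2*c2 + (-1)*p0*p2*a0*a2*b2*b3*c1 + p0*p2*a0*a2*b1*b2*c3 + (-1)*p0*p2*a0*a1*c3 + p0*p2*a0*a1*b2*b3*c2 + (-1)*p0*p2*a0*a1*b2^2*c3 + (-1)*p0*p1*a1*a3*b0*b2*c1 + p0*p1*a1*a3*b0*b1*c2 + p0*p1*a1*a2*b0*b3*c1 + (-1)*p0*p1*a1*a2*b0*b1*c3 + (-1)*p0*p1*a1^2*b0*b3*c2 + p0*p1*a1^2*b0*b2*c3 + (-1)*p0*p1*a0*a3*c2 + p0*p1*a0*a3*b1*b2*c1 + (-1)*p0*p1*a0*a3*b1^2*c2 + p0*p1*a0*a2*c3 + (-1)*p0*p1*a0*a2*b1*b3*c1 + p0*p1*a0*a2*b1^2*c3 + p0*p1*a0*a1*b1*b3*c2 + (-1)*p0*p1*a0*a1*b1*b2*c3) * h3 + (p3^3*a2^3*c1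 + (-1)*p3^3*a1*a2^2*c2 + p3^3*a1^2*a2*c1 + (-1)*p3^3*a1^3*c2 + (-1)*p3^3*a0^2*a2*c1 + p3^3*a0^2*a1*c2 + (-3)*p2*p3^2*a2^2*a3*c1 + (2)*p2*p3^2*a1*a2*a3*c2 + p2*p3^2*a1*a2^2*c3 + (-1)*p2*p3^2*a1^2*a3*c1 + p2*p3^2*a1^3*c3 + p2*p3^2*a0^2*a3*c1 + (-1)*p2*p3^2*a0^2*a1*c3 + (3)*p2^2*p3*a2*a3^2*c1 + (-1)*p2^2*p3*a1*a3^2*c2 + (-2)*p2^2*p3*a1*a2*a3*c3 + p2^2*p3*a1^2*a2*c1 + (-1)*p2^2*p3*a1^3*c2 + (-1)*p2^2*p3*a0^2*a2*c1 + p2^2*p3*a0^2*a1*c2 + (-1)*p2^3*a3^3*c1 + p2^3*a1*a3^2*c3 + (-1)*p2^3*a1^2*a3*c1 + p2^3*a1^3*c3 + p2^3*a0^2*a3*c1 + (-1)*p2^3*a0^2*a1*c3 + p1*p3^2*a2^2*a3*c2 + (-1)*p1*p3^2*a2^3*c3 + (-2)*p1*p3^2*a1*a2*a3*c1 + (3)*p1*p3^2*a1^2*a3*c2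 + (-1)*p1*p3^2*a1^2*a2*c3 + (-1)*p1*p3^2*a0^2*a3*c2 + p1*p3^2*a0^2*a2*c3 + (-2)*p1*p2*p3*a2*a3^2*c2 + (2)*p1*p2*p3*a2^2*a3*c3 + (2)*p1*p2*p3*a1*a3^2*c1 + (-2)*p1*p2*p3*a1*a2^2*c1 + (-2)*p1*p2*p3*a1^2*a3*c3 + (2)*p1*p2*p3*a1^2*a2*c2 + p1*p2^2*a3^3*c2 + (-1)*p1*p2^2*a2*a3^2*c3 + (2)*p1*p2^2*a1*a2*a3*c1 + p1*p2^2*a1^2*a3*c2 + (-3)*p1*p2^2*a1^2*a2*c3 + (-1)*p1*p2^2*a0^2*a3*c2 + p1*p2^2*a0^2*a2*c3 + p1^2*p3*a2*a3^2*c1 + p1^2*p3*a2^3*c1 + (-3)*p1^2*p3*a1*a3^2*c2 + (2)*p1^2*p3*a1*a2*a3*c3 + (-1)*p1^2*p3*a1*a2^2*c2 + (-1)*p1^2*p3*a0^2*a2*c1 + p1^2*p3*a0^2*a1*c2 + (-1)*p1^2*p2*a3^3*c1 + (-1)*p1^2*p2*a2^2*a3*c1 + p1^2*p2*a1*a3^2*c3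 + (-2)*p1^2*p2*a1*a2*a3*c2 + (3)*p1^2*p2*a1*a2^2*c3 + p1^2*p2*a0^2*a3*c1 + (-1)*p1^2*p2*a0^2*a1*c3 + p1^3*a3^3*c2 + (-1)*p1^3*a2*a3^2*c3 + p1^3*a2^2*a3*c2 + (-1)*p1^3*a2^3*c3 + (-1)*p1^3*a0^2*a3*c2 + p1^3*a0^2*a2*c3 + (2)*p0*p3^2*a0*a2*a3*c1 + (-2)*p0*p3^2*a0*a1*a3*c2 + (-2)*p0*p2*p3*a0*a3^2*c1 + (2)*p0*p2*p3*a0*a2^2*c1 + (2)*p0*p2*p3*a0*a1*a3*c3 + (-2)*p0*p2*p3*a0*a1*a2*c2 + (-2)*p0*p2^2*a0*a2*a3*c1 + (2)*p0*p2^2*a0*a1*a2*c3 + (2)*p0*p1*p3*a0*a3^2*c2 + (-2)*p0*p1*p3*a0*a2*a3*c3 + (2)*p0*p1*p3*a0*a1*a2*c1 + (-2)*p0*p1*p3*a0*a1^2*c2 + (2)*p0*p1*p2*a0*a2*a3*c2 + (-2)*p0*p1*p2*a0*a2^2*c3 + (-2)*p0*p1*p2*a0*a1*a3*c1 + (2)*p0*p1*p2*a0*a1^2*c3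 + (2)*p0*p1^2*a0*a1*a3*c2 + (-2)*p0*p1^2*a0*a1*a2*c3 + (-1)*p0^2*p3*a2*a3^2*c1 + (-1)*p0^2*p3*a2^3*c1 + p0^2*p3*a1*a3^2*c2 + p0^2*p3*a1*a2^2*c2 + (-1)*p0^2*p3*a1^2*a2*c1 + p0^2*p3*a1^3*c2 + p0^2*p2*a3^3*c1 + p0^2*p2*a2^2*a3*c1 + (-1)*p0^2*p2*a1*a3^2*c3 + (-1)*p0^2*p2*a1*a2^2*c3 + p0^2*p2*a1^2*a3*c1 + (-1)*p0^2*p2*a1^3*c3 + (-1)*p0^2*p1*a3^3*c2 + p0^2*p1*a2*a3^2*c3 + (-1)*p0^2*p1*a2^2*a3*c2 + p0^2*p1*a2^3*c3 + (-1)*p0^2*p1*a1^2*a3*c2 + p0^2*p1*a1^2*a2*c3) * h4 + ((-1)*p3^3*a2^2*b2*c1 + p3^3*a2^2*b1*c2 + (-1)*p3^3*a1^2*b2*c1 + p3^3*a1^2*b1*c2 + p3^3*a0^2*b2*c1 + (-1)*p3^3*a0^2*b1*c2 + (2)*p2*p3^2*a2*a3*b2*c1 + (-2)*p2*p3^2*a2*a3*b1*c2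 + p2*p3^2*a2^2*b3*c1 + (-1)*p2*p3^2*a2^2*b1*c3 + p2*p3^2*a1^2*b3*c1 + (-1)*p2*p3^2*a1^2*b1*c3 + (-1)*p2*p3^2*a0^2*b3*c1 + p2*p3^2*a0^2*b1*c3 + (-1)*p2^2*p3*a3^2*b2*c1 + p2^2*p3*a3^2*b1*c2 + (-2)*p2^2*p3*a2*a3*b3*c1 + (2)*p2^2*p3*a2*a3*b1*c3 + (-1)*p2^2*p3*a1^2*b2*c1 + p2^2*p3*a1^2*b1*c2 + p2^2*p3*a0^2*b2*c1 + (-1)*p2^2*p3*a0^2*b1*c2 + p2^3*a3^2*b3*c1 + (-1)*p2^3*a3^2*b1*c3 + p2^3*a1^2*b3*c1 + (-1)*p2^3*a1^2*b1*c3 + (-1)*p2^3*a0^2*b3*c1 + p2^3*a0^2*b1*c3 + (-1)*p1*p3^2*a2^2*b3*c2 + p1*p3^2*a2^2*b2*c3 + (2)*p1*p3^2*a1*a3*b2*c1 + (-2)*p1*p3^2*a1*a3*b1*c2 + (-1)*p1*p3^2*a1^2*b3*c2 + p1*p3^2*a1^2*b2*c3 + p1*p3^2*a0^2*b3*c2 +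 (-1)*p1*p3^2*a0^2*b2*c3 + (2)*p1*p2*p3*a2*a3*b3*c2 + (-2)*p1*p2*p3*a2*a3*b2*c3 + (-2)*p1*p2*p3*a1*a3*b3*c1 + (2)*p1*p2*p3*a1*a3*b1*c3 + (2)*p1*p2*p3*a1*a2*b2*c1 + (-2)*p1*p2*p3*a1*a2*b1*c2 + (-1)*p1*p2^2*a3^2*b3*c2 + p1*p2^2*a3^2*b2*c3 + (-2)*p1*p2^2*a1*a2*b3*c1 + (2)*p1*p2^2*a1*a2*b1*c3 + (-1)*p1*p2^2*a1^2*b3*c2 + p1*p2^2*a1^2*b2*c3 + p1*p2^2*a0^2*b3*c2 + (-1)*p1*p2^2*a0^2*b2*c3 + (-1)*p1^2*p3*a3^2*b2*c1 + p1^2*p3*a3^2*b1*c2 + (-1)*p1^2*p3*a2^2*b2*c1 + p1^2*p3*a2^2*b1*c2 + (2)*p1^2*p3*a1*a3*b3*c2 + (-2)*p1^2*p3*a1*a3*b2*c3 + p1^2*p3*a0^2*b2*c1 + (-1)*p1^2*p3*a0^2*b1*c2 + p1^2*p2*a3^2*b3*c1 + (-1)*p1^2*p2*a3^2*b1*c3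 + p1^2*p2*a2^2*b3*c1 + (-1)*p1^2*p2*a2^2*b1*c3 + (2)*p1^2*p2*a1*a2*b3*c2 + (-2)*p1^2*p2*a1*a2*b2*c3 + (-1)*p1^2*p2*a0^2*b3*c1 + p1^2*p2*a0^2*b1*c3 + (-1)*p1^3*a3^2*b3*c2 + p1^3*a3^2*b2*c3 + (-1)*p1^3*a2^2*b3*c2 + p1^3*a2^2*b2*c3 + p1^3*a0^2*b3*c2 + (-1)*p1^3*a0^2*b2*c3 + (-2)*p0*p3^2*a0*a3*b2*c1 + (2)*p0*p3^2*a0*a3*b1*c2 + (2)*p0*p2*p3*a0*a3*b3*c1 + (-2)*p0*p2*p3*a0*a3*b1*c3 + (-2)*p0*p2*p3*a0*a2*b2*c1 + (2)*p0*p2*p3*a0*a2*b1*c2 + (2)*p0*p2^2*a0*a2*b3*c1 + (-2)*p0*p2^2*a0*a2*b1*c3 + (-2)*p0*p1*p3*a0*a3*b3*c2 + (2)*p0*p1*p3*a0*a3*b2*c3 + (-2)*p0*p1*p3*a0*a1*b2*c1 + (2)*p0*p1*p3*a0*a1*b1*c2 + (-2)*p0*p1*p2*a0*a2*b3*c2 +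 (2)*p0*p1*p2*a0*a2*b2*c3 + (2)*p0*p1*p2*a0*a1*b3*c1 + (-2)*p0*p1*p2*a0*a1*b1*c3 + (-2)*p0*p1^2*a0*a1*b3*c2 + (2)*p0*p1^2*a0*a1*b2*c3 + p0^2*p3*a3^2*b2*c1 + (-1)*p0^2*p3*a3^2*b1*c2 + p0^2*p3*a2^2*b2*c1 + (-1)*p0^2*p3*a2^2*b1*c2 + p0^2*p3*a1^2*b2*c1 + (-1)*p0^2*p3*a1^2*b1*c2 + (-1)*p0^2*p2*a3^2*b3*c1 + p0^2*p2*a3^2*b1*c3 + (-1)*p0^2*p2*a2^2*b3*c1 + p0^2*p2*a2^2*b1*c3 + (-1)*p0^2*p2*a1^2*b3*c1 + p0^2*p2*a1^2*b1*c3 + p0^2*p1*a3^2*b3*c2 + (-1)*p0^2*p1*a3^2*b2*c3 + p0^2*p1*a2^2*b3*c2 + (-1)*p0^2*p1*a2^2*b2*c3 + p0^2*p1*a1^2*b3*c2 + (-1)*p0^2*p1*a1^2*b2*c3) * h5 + (p3^2*a2^2*a3*b2*c1 + (-1)*p3^2*a2^2*a3*b1*c2 + (-1)*p3^2*a2^3*b3*c1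 + p3^2*a2^3*b1*c3 + p3^2*a1*a2^2*b3*c2 + (-1)*p3^2*a1*a2^2*b2*c3 + p3^2*a1^2*a3*b2*c1 + (-1)*p3^2*a1^2*a3*b1*c2 + (-1)*p3^2*a1^2*a2*b3*c1 + p3^2*a1^2*a2*b1*c3 + p3^2*a1^3*b3*c2 + (-1)*p3^2*a1^3*b2*c3 + p3^2*a0*a2*a3*b1*c0 + (-1)*p3^2*a0*a2*a3*b0*c1 + (-1)*p3^2*a0*a1*a3*b2*c0 + p3^2*a0*a1*a3*b0*c2 + p3^2*a0^2*a2*b3*c1 + (-1)*p3^2*a0^2*a2*b1*c3 + (-1)*p3^2*a0^2*a1*b3*c2 + p3^2*a0^2*a1*b2*c3 + (-2)*p2*p3*a2*a3^2*b2*c1 + (2)*p2*p3*a2*a3^2*b1*c2 + (2)*p2*p3*a2^2*a3*b3*c1 + (-2)*p2*p3*a2^2*a3*b1*c3 + (-2)*p2*p3*a1*a2*a3*b3*c2 + (2)*p2*p3*a1*a2*a3*b2*c3 + (-1)*p2*p3*a0*a3^2*b1*c0 + p2*p3*a0*a3^2*b0*c1 + p2*p3*a0*a2^2*b1*c0 +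 (-1)*p2*p3*a0*a2^2*b0*c1 + p2*p3*a0*a1*a3*b3*c0 + (-1)*p2*p3*a0*a1*a3*b0*c3 + (-1)*p2*p3*a0*a1*a2*b2*c0 + p2*p3*a0*a1*a2*b0*c2 + (-1)*p2*p3*a0^2*a3*b3*c1 + p2*p3*a0^2*a3*b1*c3 + p2*p3*a0^2*a2*b2*c1 + (-1)*p2*p3*a0^2*a2*b1*c2 + p2^2*a3^3*b2*c1 + (-1)*p2^2*a3^3*b1*c2 + (-1)*p2^2*a2*a3^2*b3*c1 + p2^2*a2*a3^2*b1*c3 + p2^2*a1*a3^2*b3*c2 + (-1)*p2^2*a1*a3^2*b2*c3 + p2^2*a1^2*a3*b2*c1 + (-1)*p2^2*a1^2*a3*b1*c2 + (-1)*p2^2*a1^2*a2*b3*c1 + p2^2*a1^2*a2*b1*c3 + p2^2*a1^3*b3*c2 + (-1)*p2^2*a1^3*b2*c3 + (-1)*p2^2*a0*a2*a3*b1*c0 + p2^2*a0*a2*a3*b0*c1 + p2^2*a0*a1*a2*b3*c0 + (-1)*p2^2*a0*a1*a2*b0*c3 + (-1)*p2^2*a0^2*a3*b2*c1 + p2^2*a0^2*a3*b1*c2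 + (-1)*p2^2*a0^2*a1*b3*c2 + p2^2*a0^2*a1*b2*c3 + (-2)*p1*p3*a1*a3^2*b2*c1 + (2)*p1*p3*a1*a3^2*b1*c2 + (2)*p1*p3*a1*a2*a3*b3*c1 + (-2)*p1*p3*a1*a2*a3*b1*c3 + (-2)*p1*p3*a1^2*a3*b3*c2 + (2)*p1*p3*a1^2*a3*b2*c3 + p1*p3*a0*a3^2*b2*c0 + (-1)*p1*p3*a0*a3^2*b0*c2 + (-1)*p1*p3*a0*a2*a3*b3*c0 + p1*p3*a0*a2*a3*b0*c3 + p1*p3*a0*a1*a2*b1*c0 + (-1)*p1*p3*a0*a1*a2*b0*c1 + (-1)*p1*p3*a0*a1^2*b2*c0 + p1*p3*a0*a1^2*b0*c2 + p1*p3*a0^2*a3*b3*c2 + (-1)*p1*p3*a0^2*a3*b2*c3 + p1*p3*a0^2*a1*b2*c1 + (-1)*p1*p3*a0^2*a1*b1*c2 + (-2)*p1*p2*a1*a2*a3*b2*c1 + (2)*p1*p2*a1*a2*a3*b1*c2 + (2)*p1*p2*a1*a2^2*b3*c1 + (-2)*p1*p2*a1*a2^2*b1*c3 + (-2)*p1*p2*a1^2*a2*b3*c2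 + (2)*p1*p2*a1^2*a2*b2*c3 + p1*p2*a0*a2*a3*b2*c0 + (-1)*p1*p2*a0*a2*a3*b0*c2 + (-1)*p1*p2*a0*a2^2*b3*c0 + p1*p2*a0*a2^2*b0*c3 + (-1)*p1*p2*a0*a1*a3*b1*c0 + p1*p2*a0*a1*a3*b0*c1 + p1*p2*a0*a1^2*b3*c0 + (-1)*p1*p2*a0*a1^2*b0*c3 + p1*p2*a0^2*a2*b3*c2 + (-1)*p1*p2*a0^2*a2*b2*c3 + (-1)*p1*p2*a0^2*a1*b3*c1 + p1*p2*a0^2*a1*b1*c3 + p1^2*a3^3*b2*c1 + (-1)*p1^2*a3^3*b1*c2 + (-1)*p1^2*a2*a3^2*b3*c1 + p1^2*a2*a3^2*b1*c3 + p1^2*a2^2*a3*b2*c1 + (-1)*p1^2*a2^2*a3*b1*c2 + (-1)*p1^2*a2^3*b3*c1 + p1^2*a2^3*b1*c3 + p1^2*a1*a3^2*b3*c2 + (-1)*p1^2*a1*a3^2*b2*c3 + p1^2*a1*a2^2*b3*c2 + (-1)*p1^2*a1*a2^2*b2*c3 + p1^2*a0*a1*a3*b2*c0 + (-1)*p1^2*a0*a1*a3*b0*c2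 + (-1)*p1^2*a0*a1*a2*b3*c0 + p1^2*a0*a1*a2*b0*c3 + (-1)*p1^2*a0^2*a3*b2*c1 + p1^2*a0^2*a3*b1*c2 + p1^2*a0^2*a2*b3*c1 + (-1)*p1^2*a0^2*a2*b1*c3 + p0*p3*a2*b1*c0 + (-1)*p0*p3*a2*b0*c1 + (-1)*p0*p3*a2*a3^2*b1*c0 + p0*p3*a2*a3^2*b0*c1 + (-1)*p0*p3*a2^3*b1*c0 + p0*p3*a2^3*b0*c1 + (-1)*p0*p3*a1*b2*c0 + p0*p3*a1*b0*c2 + p0*p3*a1*a3^2*b2*c0 + (-1)*p0*p3*a1*a3^2*b0*c2 + p0*p3*a1*a2^2*b2*c0 + (-1)*p0*p3*a1*a2^2*b0*c2 + (-1)*p0*p3*a1^2*a2*b1*c0 + p0*p3*a1^2*a2*b0*c1 + p0*p3*a1^3*b2*c0 + (-1)*p0*p3*a1^3*b0*c2 + p0*p3*a0*b2*c1 + (-1)*p0*p3*a0*b1*c2 + (-1)*p0*p3*a0*a2*a3*b3*c1 + p0*p3*a0*a2*a3*b1*c3 + (-1)*p0*p3*a0*a2^2*b2*c1 + p0*p3*a0*a2^2*b1*c2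 + p0*p3*a0*a1*a3*b3*c2 + (-1)*p0*p3*a0*a1*a3*b2*c3 + (-1)*p0*p3*a0*a1^2*b2*c1 + p0*p3*a0*a1^2*b1*c2 + (-1)*p0*p2*a3*b1*c0 + p0*p2*a3*b0*c1 + p0*p2*a3^3*b1*c0 + (-1)*p0*p2*a3^3*b0*c1 + p0*p2*a2^2*a3*b1*c0 + (-1)*p0*p2*a2^2*a3*b0*c1 + p0*p2*a1*b3*c0 + (-1)*p0*p2*a1*b0*c3 + (-1)*p0*p2*a1*a3^2*b3*c0 + p0*p2*a1*a3^2*b0*c3 + (-1)*p0*p2*a1*a2^2*b3*c0 + p0*p2*a1*a2^2*b0*c3 + p0*p2*a1^2*a3*b1*c0 + (-1)*p0*p2*a1^2*a3*b0*c1 + (-1)*p0*p2*a1^3*b3*c0 + p0*p2*a1^3*b0*c3 + (-1)*p0*p2*a0*b3*c1 + p0*p2*a0*b1*c3 + p0*p2*a0*a3^2*b3*c1 + (-1)*p0*p2*a0*a3^2*b1*c3 + p0*p2*a0*a2*a3*b2*c1 + (-1)*p0*p2*a0*a2*a3*b1*c2 + p0*p2*a0*a1*a2*b3*c2 + (-1)*p0*p2*a0*a1*a2*b2*c3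 + p0*p2*a0*a1^2*b3*c1 + (-1)*p0*p2*a0*a1^2*b1*c3 + p0*p1*a3*b2*c0 + (-1)*p0*p1*a3*b0*c2 + (-1)*p0*p1*a3^3*b2*c0 + p0*p1*a3^3*b0*c2 + (-1)*p0*p1*a2*b3*c0 + p0*p1*a2*b0*c3 + p0*p1*a2*a3^2*b3*c0 + (-1)*p0*p1*a2*a3^2*b0*c3 + (-1)*p0*p1*a2^2*a3*b2*c0 + p0*p1*a2^2*a3*b0*c2 + p0*p1*a2^3*b3*c0 + (-1)*p0*p1*a2^3*b0*c3 + (-1)*p0*p1*a1^2*a3*b2*c0 + p0*p1*a1^2*a3*b0*c2 + p0*p1*a1^2*a2*b3*c0 + (-1)*p0*p1*a1^2*a2*b0*c3 + p0*p1*a0*b3*c2 + (-1)*p0*p1*a0*b2*c3 + (-1)*p0*p1*a0*a3^2*b3*c2 + p0*p1*a0*a3^2*b2*c3 + (-1)*p0*p1*a0*a2^2*b3*c2 + p0*p1*a0*a2^2*b2*c3 + p0*p1*a0*a1*a3*b2*c1 + (-1)*p0*p1*a0*a1*a3*b1*c2 + (-1)*p0*p1*a0*a1*a2*b3*c1 +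 p0*p1*a0*a1*a2*b1*c3 + (-1)*p0^2*a3*b2*c1 + p0^2*a3*b1*c2 + p0^2*a2*b3*c1 + (-1)*p0^2*a2*b1*c3 + (-1)*p0^2*a1*b3*c2 + p0^2*a1*b2*c3) * h6 + ((-1)*p3^3*a2^3*b1 + p3^3*a1*a2^2*b2 + (-1)*p3^3*a1^2*a2*b1 + p3^3*a1^3*b2 + p3^3*a0^2*a2*b1 + (-1)*p3^3*a0^2*a1*b2 + (3)*p2*p3^2*a2^2*a3*b1 + (-2)*p2*p3^2*a1*a2*a3*b2 + (-1)*p2*p3^2*a1*a2^2*b3 + p2*p3^2*a1^2*a3*b1 + (-1)*p2*p3^2*a1^3*b3 + (-1)*p2*p3^2*a0^2*a3*b1 + p2*p3^2*a0^2*a1*b3 + (-3)*p2^2*p3*a2*a3^2*b1 + p2^2*p3*a1*a3^2*b2 + (2)*p2^2*p3*a1*a2*a3*b3 + (-1)*p2^2*p3*a1^2*a2*b1 + p2^2*p3*a1^3*b2 + p2^2*p3*a0^2*a2*b1 + (-1)*p2^2*p3*a0^2*a1*b2 + p2^3*a3^3*b1 + (-1)*p2^3*a1*a3^2*b3 + p2^3*a1^2*a3*b1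 + (-1)*p2^3*a1^3*b3 + (-1)*p2^3*a0^2*a3*b1 + p2^3*a0^2*a1*b3 + (-1)*p1*p3^2*a2^2*a3*b2 + p1*p3^2*a2^3*b3 + (2)*p1*p3^2*a1*a2*a3*b1 + (-3)*p1*p3^2*a1^2*a3*b2 + p1*p3^2*a1^2*a2*b3 + p1*p3^2*a0^2*a3*b2 + (-1)*p1*p3^2*a0^2*a2*b3 + (2)*p1*p2*p3*a2*a3^2*b2 + (-2)*p1*p2*p3*a2^2*a3*b3 + (-2)*p1*p2*p3*a1*a3^2*b1 + (2)*p1*p2*p3*a1*a2^2*b1 + (2)*p1*p2*p3*a1^2*a3*b3 + (-2)*p1*p2*p3*a1^2*a2*b2 + (-1)*p1*p2^2*a3^3*b2 + p1*p2^2*a2*a3^2*b3 + (-2)*p1*p2^2*a1*a2*a3*b1 + (-1)*p1*p2^2*a1^2*a3*b2 + (3)*p1*p2^2*a1^2*a2*b3 + p1*p2^2*a0^2*a3*b2 + (-1)*p1*p2^2*a0^2*a2*b3 + (-1)*p1^2*p3*a2*a3^2*b1 + (-1)*p1^2*p3*a2^3*b1 + (3)*p1^2*p3*a1*a3^2*b2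 + (-2)*p1^2*p3*a1*a2*a3*b3 + p1^2*p3*a1*a2^2*b2 + p1^2*p3*a0^2*a2*b1 + (-1)*p1^2*p3*a0^2*a1*b2 + p1^2*p2*a3^3*b1 + p1^2*p2*a2^2*a3*b1 + (-1)*p1^2*p2*a1*a3^2*b3 + (2)*p1^2*p2*a1*a2*a3*b2 + (-3)*p1^2*p2*a1*a2^2*b3 + (-1)*p1^2*p2*a0^2*a3*b1 + p1^2*p2*a0^2*a1*b3 + (-1)*p1^3*a3^3*b2 + p1^3*a2*a3^2*b3 + (-1)*p1^3*a2^2*a3*b2 + p1^3*a2^3*b3 + p1^3*a0^2*a3*b2 + (-1)*p1^3*a0^2*a2*b3 + (-2)*p0*p3^2*a0*a2*a3*b1 + (2)*p0*p3^2*a0*a1*a3*b2 + (2)*p0*p2*p3*a0*a3^2*b1 + (-2)*p0*p2*p3*a0*a2^2*b1 + (-2)*p0*p2*p3*a0*a1*a3*b3 + (2)*p0*p2*p3*a0*a1*a2*b2 + (2)*p0*p2^2*a0*a2*a3*b1 + (-2)*p0*p2^2*a0*a1*a2*b3 + (-2)*p0*p1*p3*a0*a3^2*b2 + (2)*p0*p1*p3*a0*a2*a3*b3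 + (-2)*p0*p1*p3*a0*a1*a2*b1 + (2)*p0*p1*p3*a0*a1^2*b2 + (-2)*p0*p1*p2*a0*a2*a3*b2 + (2)*p0*p1*p2*a0*a2^2*b3 + (2)*p0*p1*p2*a0*a1*a3*b1 + (-2)*p0*p1*p2*a0*a1^2*b3 + (-2)*p0*p1^2*a0*a1*a3*b2 + (2)*p0*p1^2*a0*a1*a2*b3 + p0^2*p3*a2*a3^2*b1 + p0^2*p3*a2^3*b1 + (-1)*p0^2*p3*a1*a3^2*b2 + (-1)*p0^2*p3*a1*a2^2*b2 + p0^2*p3*a1^2*a2*b1 + (-1)*p0^2*p3*a1^3*b2 + (-1)*p0^2*p2*a3^3*b1 + (-1)*p0^2*p2*a2^2*a3*b1 + p0^2*p2*a1*a3^2*b3 + p0^2*p2*a1*a2^2*b3 + (-1)*p0^2*p2*a1^2*a3*b1 + p0^2*p2*a1^3*b3 + p0^2*p1*a3^3*b2 + (-1)*p0^2*p1*a2*a3^2*b3 + p0^2*p1*a2^2*a3*b2 + (-1)*p0^2*p1*a2^3*b3 + p0^2*p1*a1^2*a3*b2 + (-1)*p0^2*p1*a1^2*a2*b3) * h9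

private lemma key2_1 (p0 p1 p2 p3 a0 a1 a2 a3 b0 b1 b2 b3 c0 c1 c2 c3 : ℝ)
    (h1 : -(p0*p0)+p1*p1+p2*p2+p3*p3 = 1)
    (h2 : -(a0*a0)+a1*a1+a2*a2+a3*a3 = 1)
    (h3 : -(a0*p0)+a1*p1+a2*p2+a3*p3 = 0)
    (h4 : -(b0*b0)+b1*b1+b2*b2+b3*b3 = -1)
    (h5 : -(a0*b0)+a1*b1+a2*b2+a3*b3 = 0)
    (h6 : -(b0*p0)+b1*p1+b2*p2+b3*p3 = 0)
    (h7 : -(a0*c0)+a1*c1+a2*c2+a3*c3 = 1)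
    (h8 : -(c0*p0)+c1*p1+c2*p2+c3*p3 = 0)
    (h9 : -(b0*c0)+b1*c1+b2*c2+b3*c3 = 0) :
    p3*a2*c0 + (-1)*p3*a0*c2 + (-1)*p2*a3*c0 + p2*a0*c3 + p0*a3*c2 + (-1)*p0*a2*c3 = ((-1)*p3*a2*b1*c0 + p3*a2*b0*c1 + p3*a1*b2*c0 + (-1)*p3*a1*b0*c2 + (-1)*p3*a0*b2*c1 + p3*a0*b1*c2 + p2*a3*b1*c0 + (-1)*p2*a3*b0*c1 + (-1)*p2*a1*b3*c0 + p2*a1*b0*c3 + p2*a0*b3*c1 + (-1)*p2*a0*b1*c3 + (-1)*p1*a3*b2*c0 + p1*a3*b0*c2 + p1*a2*b3*c0 + (-1)*p1*a2*b0*c3 + (-1)*p1*a0*b3*c2 + p1*a0*b2*c3 + p0*a3*b2*c1 + (-1)*p0*a3*b1*c2 + (-1)*p0*a2*b3*c1 + p0*a2*b1*c3 + p0*a1*b3*c2 + (-1)*p0*a1*b2*c3) * b1 := by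
  linear_combination ((-1)*p3*a2*c0 + (-1)*p3*a2*b1^2*c0 + p3*a2*b0*b1*c1 + p3*a1*b1*b2*c0 + (-1)*p3*a1*b0*b1*c2 + p3*a0*c2 + (-1)*p3*a0*b1*b2*c1 + p3*a0*b1^2*c2 + p2*a3*c0 + p2*a3*b1^2*c0 + (-1)*p2*a3*b0*b1*c1 + (-1)*p2*a1*b1*b3*c0 + p2*a1*b0*b1*c3 + (-1)*p2*a0*c3 + p2*a0*b1*b3*c1 + (-1)*p2*a0*b1^2*c3 + (-1)*p1*a3*b1*b2*c0 + p1*a3*b0*b1*c2 + p1*a2*b1*b3*c0 + (-1)*p1*a2*b0*b1*c3 + (-1)*p1*a0*b1*b3*c2 + p1*a0*b1*b2*c3 + (-1)*p0*a3*c2 + p0*a3*b1*b2*c1 + (-1)*p0*a3*b1^2*c2 + p0*a2*c3 + (-1)*p0*a2*b1*b3*c1 + p0*a2*b1^2*c3 + p0*a1*b1*b3*c2 + (-1)*p0*a1*b1*b2*c3) * h1 + ((-1)*p3^3*a2*c0 + (-1)*p3^3*a2*b1^2*c0 + p3^3*a2*b0*b1*c1 + p3^3*a1*b1*b2*c0 +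 (-1)*p3^3*a1*b0*b1*c2 + p3^3*a0*c2 + (-1)*p3^3*a0*b1*b2*c1 + p3^3*a0*b1^2*c2 + p2*p3^2*a3*c0 + p2*p3^2*a3*b1^2*c0 + (-1)*p2*p3^2*a3*b0*b1*c1 + (-1)*p2*p3^2*a1*b1*b3*c0 + p2*p3^2*a1*b0*b1*c3 + (-1)*p2*p3^2*a0*c3 + p2*p3^2*a0*b1*b3*c1 + (-1)*p2*p3^2*a0*b1^2*c3 + (-1)*p2^2*p3*a2*c0 + (-1)*p2^2*p3*a2*b1^2*c0 + p2^2*p3*a2*b0*b1*c1 + p2^2*p3*a1*b1*b2*c0 + (-1)*p2^2*p3*a1*b0*b1*c2 + p2^2*p3*a0*c2 + (-1)*p2^2*p3*a0*b1*b2*c1 + p2^2*p3*a0*b1^2*c2 + p2^3*a3*c0 + p2^3*a3*b1^2*c0 + (-1)*p2^3*a3*b0*b1*c1 + (-1)*p2^3*a1*b1*b3*c0 + p2^3*a1*b0*b1*c3 + (-1)*p2^3*a0*c3 + p2^3*a0*b1*b3*c1 + (-1)*p2^3*a0*b1^2*c3 + (-1)*p1*p3^2*a3*b1*b2*c0 +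 p1*p3^2*a3*b0*b1*c2 + (2)*p1*p3^2*a2*b1*b3*c0 + (-1)*p1*p3^2*a2*b0*b3*c1 + (-1)*p1*p3^2*a2*b0*b1*c3 + (-1)*p1*p3^2*a1*b2*b3*c0 + p1*p3^2*a1*b0*b3*c2 + p1*p3^2*a0*b2*b3*c1 + (-2)*p1*p3^2*a0*b1*b3*c2 + p1*p3^2*a0*b1*b2*c3 + (-1)*p1*p2*p3*a3*b1*b3*c0 + p1*p2*p3*a3*b0*b3*c1 + p1*p2*p3*a2*b1*b2*c0 + (-1)*p1*p2*p3*a2*b0*b2*c1 + p1*p2*p3*a1*b3^2*c0 + (-1)*p1*p2*p3*a1*b2^2*c0 + (-1)*p1*p2*p3*a1*b0*b3*c3 + p1*p2*p3*a1*b0*b2*c2 + (-1)*p1*p2*p3*a0*b3^2*c1 + p1*p2*p3*a0*b2^2*c1 + p1*p2*p3*a0*b1*b3*c3 + (-1)*p1*p2*p3*a0*b1*b2*c2 + (-2)*p1*p2^2*a3*b1*b2*c0 + p1*p2^2*a3*b0*b2*c1 + p1*p2^2*a3*b0*b1*c2 + p1*p2^2*a2*b1*b3*c0 + (-1)*p1*p2^2*a2*b0*b1*c3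 + p1*p2^2*a1*b2*b3*c0 + (-1)*p1*p2^2*a1*b0*b2*c3 + (-1)*p1*p2^2*a0*b2*b3*c1 + (-1)*p1*p2^2*a0*b1*b3*c2 + (2)*p1*p2^2*a0*b1*b2*c3 + p1^2*p3*a3*b2*b3*c0 + (-1)*p1^2*p3*a3*b0*b3*c2 + (-1)*p1^2*p3*a2*c0 + (-1)*p1^2*p3*a2*b3^2*c0 + p1^2*p3*a2*b0*b3*c3 + p1^2*p3*a0*c2 + p1^2*p3*a0*b3^2*c2 + (-1)*p1^2*p3*a0*b2*b3*c3 + p1^2*p2*a3*c0 + p1^2*p2*a3*b2^2*c0 + (-1)*p1^2*p2*a3*b0*b2*c2 + (-1)*p1^2*p2*a2*b2*b3*c0 + p1^2*p2*a2*b0*b2*c3 + (-1)*p1^2*p2*a0*c3 + p1^2*p2*a0*b2*b3*c2 + (-1)*p1^2*p2*a0*b2^2*c3 + (-1)*p0*p3^2*a3*c2 + p0*p3^2*a3*b1*b2*c1 + (-1)*p0*p3^2*a3*b1^2*c2 + p0*p3^2*a2*c3 + (-1)*p0*p3^2*a2*b1*b3*c1 + p0*p3^2*a2*b1^2*c3 +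 p0*p3^2*a1*b1*b3*c2 + (-1)*p0*p3^2*a1*b1*b2*c3 + (-1)*p0*p2^2*a3*c2 + p0*p2^2*a3*b1*b2*c1 + (-1)*p0*p2^2*a3*b1^2*c2 + p0*p2^2*a2*c3 + (-1)*p0*p2^2*a2*b1*b3*c1 + p0*p2^2*a2*b1^2*c3 + p0*p2^2*a1*b1*b3*c2 + (-1)*p0*p2^2*a1*b1*b2*c3 + (-1)*p0*p1*p3*a3*b2*b3*c1 + p0*p1*p3*a3*b1*b3*c2 + p0*p1*p3*a2*b3^2*c1 + (-1)*p0*p1*p3*a2*b1*b3*c3 + (-1)*p0*p1*p3*a2*b0*b1*c0 + p0*p1*p3*a2*b0^2*c1 + (-1)*p0*p1*p3*a1*b3^2*c2 + p0*p1*p3*a1*b2*b3*c3 + p0*p1*p3*a1*b0*b2*c0 + (-1)*p0*p1*p3*a1*b0^2*c2 + (-1)*p0*p1*p3*a0*b0*b2*c1 + p0*p1*p3*a0*b0*b1*c2 + (-1)*p0*p1*p2*a3*b2^2*c1 + p0*p1*p2*a3*b1*b2*c2 + p0*p1*p2*a3*b0*b1*c0 + (-1)*p0*p1*p2*a3*b0^2*c1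 + p0*p1*p2*a2*b2*b3*c1 + (-1)*p0*p1*p2*a2*b1*b2*c3 + (-1)*p0*p1*p2*a1*b2*b3*c2 + p0*p1*p2*a1*b2^2*c3 + (-1)*p0*p1*p2*a1*b0*b3*c0 + p0*p1*p2*a1*b0^2*c3 + p0*p1*p2*a0*b0*b3*c1 + (-1)*p0*p1*p2*a0*b0*b1*c3 + (-1)*p0*p1^2*a3*c2 + (-1)*p0*p1^2*a3*b0*b2*c0 + p0*p1^2*a3*b0^2*c2 + p0*p1^2*a2*c3 + p0*p1^2*a2*b0*b3*c0 + (-1)*p0*p1^2*a2*b0^2*c3 + (-1)*p0*p1^2*a0*b0*b3*c2 + p0*p1^2*a0*b0*b2*c3 + p0^2*p3*a2*c0 + p0^2*p3*a2*b1^2*c0 + (-1)*p0^2*p3*a2*b0*b1*c1 + (-1)*p0^2*p3*a1*b1*b2*c0 + p0^2*p3*a1*b0*b1*c2 + (-1)*p0^2*p3*a0*c2 + p0^2*p3*a0*b1*b2*c1 + (-1)*p0^2*p3*a0*b1^2*c2 + (-1)*p0^2*p2*a3*c0 + (-1)*p0^2*p2*a3*b1^2*c0 + p0^2*p2*a3*b0*b1*c1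 + p0^2*p2*a1*b1*b3*c0 + (-1)*p0^2*p2*a1*b0*b1*c3 + p0^2*p2*a0*c3 + (-1)*p0^2*p2*a0*b1*b3*c1 + p0^2*p2*a0*b1^2*c3 + p0^2*p1*a3*b1*b2*c0 + p0^2*p1*a3*b0*b2*c1 + (-2)*p0^2*p1*a3*b0*b1*c2 + (-1)*p0^2*p1*a2*b1*b3*c0 + (-1)*p0^2*p1*a2*b0*b3*c1 + (2)*p0^2*p1*a2*b0*b1*c3 + p0^2*p1*a1*b0*b3*c2 + (-1)*p0^2*p1*a1*b0*b2*c3 + p0^2*p1*a0*b1*b3*c2 + (-1)*p0^2*p1*a0*b1*b2*c3 + p0^3*a3*c2 + (-1)*p0^3*a3*b1*b2*c1 + p0^3*a3*b1^2*c2 + (-1)*p0^3*a2*c3 + p0^3*a2*b1*b3*c1 + (-1)*p0^3*a2*b1^2*c3 + (-1)*p0^3*a1*b1*b3*c2 + p0^3*a1*b1*b2*c3) * h2 + (p3^2*a2*a3*c0 + p3^2*a2*a3*b1^2*c0 + (-1)*p3^2*a2*a3*b0*b1*c1 + (-1)*p3^2*a1*a3*b1*b2*c0 + p3^2*a1*a3*b0*b1*c2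 + (-1)*p3^2*a1*a2*b1*b3*c0 + p3^2*a1*a2*b0*b3*c1 + p3^2*a1^2*b2*b3*c0 + (-1)*p3^2*a1^2*b0*b3*c2 + (-1)*p3^2*a0*a3*c2 + p3^2*a0*a3*b1*b2*c1 + (-1)*p3^2*a0*a3*b1^2*c2 + (-1)*p3^2*a0*a1*b2*b3*c1 + p3^2*a0*a1*b1*b3*c2 + (-1)*p2*p3*a3^2*c0 + (-1)*p2*p3*a3^2*b1^2*c0 + p2*p3*a3^2*b0*b1*c1 + p2*p3*a2^2*c0 + p2*p3*a2^2*b1^2*c0 + (-1)*p2*p3*a2^2*b0*b1*c1 + (2)*p2*p3*a1*a3*b1*b3*c0 + (-1)*p2*p3*a1*a3*b0*b3*c1 + (-1)*p2*p3*a1*a3*b0*b1*c3 + (-2)*p2*p3*a1*a2*b1*b2*c0 + p2*p3*a1*a2*b0*b2*c1 + p2*p3*a1*a2*b0*b1*c2 + (-1)*p2*p3*a1^2*b3^2*c0 + p2*p3*a1^2*b2^2*c0 + p2*p3*a1^2*b0*b3*c3 + (-1)*p2*p3*a1^2*b0*b2*c2 + p2*p3*a0*a3*c3 + (-1)*p2*p3*a0*a3*b1*b3*c1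 + p2*p3*a0*a3*b1^2*c3 + (-1)*p2*p3*a0*a2*c2 + p2*p3*a0*a2*b1*b2*c1 + (-1)*p2*p3*a0*a2*b1^2*c2 + p2*p3*a0*a1*b3^2*c1 + (-1)*p2*p3*a0*a1*b2^2*c1 + (-1)*p2*p3*a0*a1*b1*b3*c3 + p2*p3*a0*a1*b1*b2*c2 + (-1)*p2^2*a2*a3*c0 + (-1)*p2^2*a2*a3*b1^2*c0 + p2^2*a2*a3*b0*b1*c1 + p2^2*a1*a3*b1*b2*c0 + (-1)*p2^2*a1*a3*b0*b2*c1 + p2^2*a1*a2*b1*b3*c0 + (-1)*p2^2*a1*a2*b0*b1*c3 + (-1)*p2^2*a1^2*b2*b3*c0 + p2^2*a1^2*b0*b2*c3 + p2^2*a0*a2*c3 + (-1)*p2^2*a0*a2*b1*b3*c1 + p2^2*a0*a2*b1^2*c3 + p2^2*a0*a1*b2*b3*c1 + (-1)*p2^2*a0*a1*b1*b2*c3 + p1*p3*a3^2*b1*b2*c0 + (-1)*p1*p3*a3^2*b0*b1*c2 + (-1)*p1*p3*a2*a3*b1*b3*c0 + p1*p3*a2*a3*b0*b1*c3 + (-1)*p1*p3*a1*a3*b2*b3*c0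 + p1*p3*a1*a3*b0*b3*c2 + p1*p3*a1*a2*c0 + p1*p3*a1*a2*b3^2*c0 + (-1)*p1*p3*a1*a2*b0*b3*c3 + p1*p3*a0*a3*b1*b3*c2 + (-1)*p1*p3*a0*a3*b1*b2*c3 + (-1)*p1*p3*a0*a1*c2 + (-1)*p1*p3*a0*a1*b3^2*c2 + p1*p3*a0*a1*b2*b3*c3 + p1*p2*a2*a3*b1*b2*c0 + (-1)*p1*p2*a2*a3*b0*b1*c2 + (-1)*p1*p2*a2^2*b1*b3*c0 + p1*p2*a2^2*b0*b1*c3 + (-1)*p1*p2*a1*a3*c0 + (-1)*p1*p2*a1*a3*b2^2*c0 + p1*p2*a1*a3*b0*b2*c2 + p1*p2*a1*a2*b2*b3*c0 + (-1)*p1*p2*a1*a2*b0*b2*c3 + p1*p2*a0*a2*b1*b3*c2 + (-1)*p1*p2*a0*a2*b1*b2*c3 + p1*p2*a0*a1*c3 + (-1)*p1*p2*a0*a1*b2*b3*c2 + p1*p2*a0*a1*b2^2*c3 + p0*p3*a3^2*c2 + (-1)*p0*p3*a3^2*b1*b2*c1 + p0*p3*a3^2*b1^2*c2 + (-1)*p0*p3*a2*a3*c3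 + p0*p3*a2*a3*b1*b3*c1 + (-1)*p0*p3*a2*a3*b1^2*c3 + p0*p3*a1*a3*b2*b3*c1 + (-2)*p0*p3*a1*a3*b1*b3*c2 + p0*p3*a1*a3*b1*b2*c3 + (-1)*p0*p3*a1*a2*b3^2*c1 + p0*p3*a1*a2*b1*b3*c3 + p0*p3*a1*a2*b0*b1*c0 + (-1)*p0*p3*a1*a2*b0^2*c1 + p0*p3*a1^2*b3^2*c2 + (-1)*p0*p3*a1^2*b2*b3*c3 + (-1)*p0*p3*a1^2*b0*b2*c0 + p0*p3*a1^2*b0^2*c2 + (-1)*p0*p3*a0*a2*c0 + (-1)*p0*p3*a0*a2*b1^2*c0 + p0*p3*a0*a2*b0*b1*c1 + p0*p3*a0*a1*b1*b2*c0 + p0*p3*a0*a1*b0*b2*c1 + (-2)*p0*p3*a0*a1*b0*b1*c2 + p0*p3*a0^2*c2 + (-1)*p0*p3*a0^2*b1*b2*c1 + p0*p3*a0^2*b1^2*c2 + p0*p2*a2*a3*c2 + (-1)*p0*p2*a2*a3*b1*b2*c1 + p0*p2*a2*a3*b1^2*c2 + (-1)*p0*p2*a2^2*c3 + p0*p2*a2^2*b1*b3*c1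 + (-1)*p0*p2*a2^2*b1^2*c3 + p0*p2*a1*a3*b2^2*c1 + (-1)*p0*p2*a1*a3*b1*b2*c2 + (-1)*p0*p2*a1*a3*b0*b1*c0 + p0*p2*a1*a3*b0^2*c1 + (-1)*p0*p2*a1*a2*b2*b3*c1 + (-1)*p0*p2*a1*a2*b1*b3*c2 + (2)*p0*p2*a1*a2*b1*b2*c3 + p0*p2*a1^2*b2*b3*c2 + (-1)*p0*p2*a1^2*b2^2*c3 + p0*p2*a1^2*b0*b3*c0 + (-1)*p0*p2*a1^2*b0^2*c3 + p0*p2*a0*a3*c0 + p0*p2*a0*a3*b1^2*c0 + (-1)*p0*p2*a0*a3*b0*b1*c1 + (-1)*p0*p2*a0*a1*b1*b3*c0 + (-1)*p0*p2*a0*a1*b0*b3*c1 + (2)*p0*p2*a0*a1*b0*b1*c3 + (-1)*p0*p2*a0^2*c3 + p0*p2*a0^2*b1*b3*c1 + (-1)*p0*p2*a0^2*b1^2*c3 + p0*p1*a1*a3*c2 + p0*p1*a1*a3*b0*b2*c0 + (-1)*p0*p1*a1*a3*b0^2*c2 + (-1)*p0*p1*a1*a2*c3 + (-1)*p0*p1*a1*a2*b0*b3*c0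 + p0*p1*a1*a2*b0^2*c3 + (-1)*p0*p1*a0*a3*b1*b2*c0 + p0*p1*a0*a3*b0*b1*c2 + p0*p1*a0*a2*b1*b3*c0 + (-1)*p0*p1*a0*a2*b0*b1*c3 + p0*p1*a0*a1*b0*b3*c2 + (-1)*p0*p1*a0*a1*b0*b2*c3 + (-1)*p0*p1*a0^2*b1*b3*c2 + p0*p1*a0^2*b1*b2*c3 + (-1)*p0^2*a1*a3*b0*b2*c1 + p0^2*a1*a3*b0*b1*c2 + p0^2*a1*a2*b0*b3*c1 + (-1)*p0^2*a1*a2*b0*b1*c3 + (-1)*p0^2*a1^2*b0*b3*c2 + p0^2*a1^2*b0*b2*c3 + (-1)*p0^2*a0*a3*c2 + p0^2*a0*a3*b1*b2*c1 + (-1)*p0^2*a0*a3*b1^2*c2 + p0^2*a0*a2*c3 + (-1)*p0^2*a0*a2*b1*b3*c1 + p0^2*a0*a2*b1^2*c3 + p0^2*a0*a1*b1*b3*c2 + (-1)*p0^2*a0*a1*b1*b2*c3) * h3 + (p3^3*a2^3*c0 + p3^3*a1^2*a2*c0 + (-1)*p3^3*a0*a2^2*c2 + (-1)*p3^3*a0*a1^2*c2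 + (-1)*p3^3*a0^2*a2*c0 + p3^3*a0^3*c2 + (-3)*p2*p3^2*a2^2*a3*c0 + (-1)*p2*p3^2*a1^2*a3*c0 + (2)*p2*p3^2*a0*a2*a3*c2 + p2*p3^2*a0*a2^2*c3 + p2*p3^2*a0*a1^2*c3 + p2*p3^2*a0^2*a3*c0 + (-1)*p2*p3^2*a0^3*c3 + (3)*p2^2*p3*a2*a3^2*c0 + p2^2*p3*a1^2*a2*c0 + (-1)*p2^2*p3*a0*a3^2*c2 + (-2)*p2^2*p3*a0*a2*a3*c3 + (-1)*p2^2*p3*a0*a1^2*c2 + (-1)*p2^2*p3*a0^2*a2*c0 + p2^2*p3*a0^3*c2 + (-1)*p2^3*a3^3*c0 + (-1)*p2^3*a1^2*a3*c0 + p2^3*a0*a3^2*c3 + p2^3*a0*a1^2*c3 + p2^3*a0^2*a3*c0 + (-1)*p2^3*a0^3*c3 + (-2)*p1*p3^2*a1*a2*a3*c0 + (2)*p1*p3^2*a0*a1*a3*c2 + (2)*p1*p2*p3*a1*a3^2*c0 + (-2)*p1*p2*p3*a1*a2^2*c0 + (-2)*p1*p2*p3*a0*a1*a3*c3 + (2)*p1*p2*p3*a0*a1*a2*c2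 + (2)*p1*p2^2*a1*a2*a3*c0 + (-2)*p1*p2^2*a0*a1*a2*c3 + p1^2*p3*a2*a3^2*c0 + p1^2*p3*a2^3*c0 + (-1)*p1^2*p3*a0*a3^2*c2 + (-1)*p1^2*p3*a0*a2^2*c2 + (-1)*p1^2*p3*a0^2*a2*c0 + p1^2*p3*a0^3*c2 + (-1)*p1^2*p2*a3^3*c0 + (-1)*p1^2*p2*a2^2*a3*c0 + p1^2*p2*a0*a3^2*c3 + p1^2*p2*a0*a2^2*c3 + p1^2*p2*a0^2*a3*c0 + (-1)*p1^2*p2*a0^3*c3 + p0*p3^2*a2^2*a3*c2 + (-1)*p0*p3^2*a2^3*c3 + p0*p3^2*a1^2*a3*c2 + (-1)*p0*p3^2*a1^2*a2*c3 + (2)*p0*p3^2*a0*a2*a3*c0 + (-3)*p0*p3^2*a0^2*a3*c2 + p0*p3^2*a0^2*a2*c3 + (-2)*p0*p2*p3*a2*a3^2*c2 + (2)*p0*p2*p3*a2^2*a3*c3 + (-2)*p0*p2*p3*a0*a3^2*c0 + (2)*p0*p2*p3*a0*a2^2*c0 + (2)*p0*p2*p3*a0^2*a3*c3 + (-2)*p0*p2*p3*a0^2*a2*c2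 + p0*p2^2*a3^3*c2 + (-1)*p0*p2^2*a2*a3^2*c3 + p0*p2^2*a1^2*a3*c2 + (-1)*p0*p2^2*a1^2*a2*c3 + (-2)*p0*p2^2*a0*a2*a3*c0 + (-1)*p0*p2^2*a0^2*a3*c2 + (3)*p0*p2^2*a0^2*a2*c3 + (-2)*p0*p1*p3*a1*a3^2*c2 + (2)*p0*p1*p3*a1*a2*a3*c3 + (2)*p0*p1*p3*a0*a1*a2*c0 + (-2)*p0*p1*p3*a0^2*a1*c2 + (-2)*p0*p1*p2*a1*a2*a3*c2 + (2)*p0*p1*p2*a1*a2^2*c3 + (-2)*p0*p1*p2*a0*a1*a3*c0 + (2)*p0*p1*p2*a0^2*a1*c3 + p0*p1^2*a3^3*c2 + (-1)*p0*p1^2*a2*a3^2*c3 + p0*p1^2*a2^2*a3*c2 + (-1)*p0*p1^2*a2^3*c3 + (-1)*p0*p1^2*a0^2*a3*c2 + p0*p1^2*a0^2*a2*c3 + (-1)*p0^2*p3*a2*a3^2*c0 + (-1)*p0^2*p3*a2^3*c0 + (-1)*p0^2*p3*a1^2*a2*c0 + (3)*p0^2*p3*a0*a3^2*c2 + (-2)*p0^2*p3*a0*a2*a3*c3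 + p0^2*p3*a0*a2^2*c2 + p0^2*p3*a0*a1^2*c2 + p0^2*p2*a3^3*c0 + p0^2*p2*a2^2*a3*c0 + p0^2*p2*a1^2*a3*c0 + (-1)*p0^2*p2*a0*a3^2*c3 + (2)*p0^2*p2*a0*a2*a3*c2 + (-3)*p0^2*p2*a0*a2^2*c3 + (-1)*p0^2*p2*a0*a1^2*c3 + (2)*p0^2*p1*a0*a1*a3*c2 + (-2)*p0^2*p1*a0*a1*a2*c3 + (-1)*p0^3*a3^3*c2 + p0^3*a2*a3^2*c3 + (-1)*p0^3*a2^2*a3*c2 + p0^3*a2^3*c3 + (-1)*p0^3*a1^2*a3*c2 + p0^3*a1^2*a2*c3) * h4 + ((-1)*p3^3*a2^2*b2*c0 + p3^3*a2^2*b0*c2 + (-1)*p3^3*a1^2*b2*c0 + p3^3*a1^2*b0*c2 + p3^3*a0^2*b2*c0 + (-1)*p3^3*a0^2*b0*c2 + (2)*p2*p3^2*a2*a3*b2*c0 + (-2)*p2*p3^2*a2*a3*b0*c2 + p2*p3^2*a2^2*b3*c0 + (-1)*p2*p3^2*a2^2*b0*c3 + p2*p3^2*a1^2*b3*c0 + (-1)*p2*p3^2*a1^2*b0*c3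 + (-1)*p2*p3^2*a0^2*b3*c0 + p2*p3^2*a0^2*b0*c3 + (-1)*p2^2*p3*a3^2*b2*c0 + p2^2*p3*a3^2*b0*c2 + (-2)*p2^2*p3*a2*a3*b3*c0 + (2)*p2^2*p3*a2*a3*b0*c3 + (-1)*p2^2*p3*a1^2*b2*c0 + p2^2*p3*a1^2*b0*c2 + p2^2*p3*a0^2*b2*c0 + (-1)*p2^2*p3*a0^2*b0*c2 + p2^3*a3^2*b3*c0 + (-1)*p2^3*a3^2*b0*c3 + p2^3*a1^2*b3*c0 + (-1)*p2^3*a1^2*b0*c3 + (-1)*p2^3*a0^2*b3*c0 + p2^3*a0^2*b0*c3 + (2)*p1*p3^2*a1*a3*b2*c0 + (-2)*p1*p3^2*a1*a3*b0*c2 + (-2)*p1*p2*p3*a1*a3*b3*c0 + (2)*p1*p2*p3*a1*a3*b0*c3 + (2)*p1*p2*p3*a1*a2*b2*c0 + (-2)*p1*p2*p3*a1*a2*b0*c2 + (-2)*p1*p2^2*a1*a2*b3*c0 + (2)*p1*p2^2*a1*a2*b0*c3 + (-1)*p1^2*p3*a3^2*b2*c0 + p1^2*p3*a3^2*b0*c2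 + (-1)*p1^2*p3*a2^2*b2*c0 + p1^2*p3*a2^2*b0*c2 + p1^2*p3*a0^2*b2*c0 + (-1)*p1^2*p3*a0^2*b0*c2 + p1^2*p2*a3^2*b3*c0 + (-1)*p1^2*p2*a3^2*b0*c3 + p1^2*p2*a2^2*b3*c0 + (-1)*p1^2*p2*a2^2*b0*c3 + (-1)*p1^2*p2*a0^2*b3*c0 + p1^2*p2*a0^2*b0*c3 + (-1)*p0*p3^2*a2^2*b3*c2 + p0*p3^2*a2^2*b2*c3 + (-1)*p0*p3^2*a1^2*b3*c2 + p0*p3^2*a1^2*b2*c3 + (-2)*p0*p3^2*a0*a3*b2*c0 + (2)*p0*p3^2*a0*a3*b0*c2 + p0*p3^2*a0^2*b3*c2 + (-1)*p0*p3^2*a0^2*b2*c3 + (2)*p0*p2*p3*a2*a3*b3*c2 + (-2)*p0*p2*p3*a2*a3*b2*c3 + (2)*p0*p2*p3*a0*a3*b3*c0 + (-2)*p0*p2*p3*a0*a3*b0*c3 + (-2)*p0*p2*p3*a0*a2*b2*c0 + (2)*p0*p2*p3*a0*a2*b0*c2 + (-1)*p0*p2^2*a3^2*b3*c2 + p0*p2^2*a3^2*b2*c3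 + (-1)*p0*p2^2*a1^2*b3*c2 + p0*p2^2*a1^2*b2*c3 + (2)*p0*p2^2*a0*a2*b3*c0 + (-2)*p0*p2^2*a0*a2*b0*c3 + p0*p2^2*a0^2*b3*c2 + (-1)*p0*p2^2*a0^2*b2*c3 + (2)*p0*p1*p3*a1*a3*b3*c2 + (-2)*p0*p1*p3*a1*a3*b2*c3 + (-2)*p0*p1*p3*a0*a1*b2*c0 + (2)*p0*p1*p3*a0*a1*b0*c2 + (2)*p0*p1*p2*a1*a2*b3*c2 + (-2)*p0*p1*p2*a1*a2*b2*c3 + (2)*p0*p1*p2*a0*a1*b3*c0 + (-2)*p0*p1*p2*a0*a1*b0*c3 + (-1)*p0*p1^2*a3^2*b3*c2 + p0*p1^2*a3^2*b2*c3 + (-1)*p0*p1^2*a2^2*b3*c2 + p0*p1^2*a2^2*b2*c3 + p0*p1^2*a0^2*b3*c2 + (-1)*p0*p1^2*a0^2*b2*c3 + p0^2*p3*a3^2*b2*c0 + (-1)*p0^2*p3*a3^2*b0*c2 + p0^2*p3*a2^2*b2*c0 + (-1)*p0^2*p3*a2^2*b0*c2 + p0^2*p3*a1^2*b2*c0 +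 (-1)*p0^2*p3*a1^2*b0*c2 + (-2)*p0^2*p3*a0*a3*b3*c2 + (2)*p0^2*p3*a0*a3*b2*c3 + (-1)*p0^2*p2*a3^2*b3*c0 + p0^2*p2*a3^2*b0*c3 + (-1)*p0^2*p2*a2^2*b3*c0 + p0^2*p2*a2^2*b0*c3 + (-1)*p0^2*p2*a1^2*b3*c0 + p0^2*p2*a1^2*b0*c3 + (-2)*p0^2*p2*a0*a2*b3*c2 + (2)*p0^2*p2*a0*a2*b2*c3 + (-2)*p0^2*p1*a0*a1*b3*c2 + (2)*p0^2*p1*a0*a1*b2*c3 + p0^3*a3^2*b3*c2 + (-1)*p0^3*a3^2*b2*c3 + p0^3*a2^2*b3*c2 + (-1)*p0^3*a2^2*b2*c3 + p0^3*a1^2*b3*c2 + (-1)*p0^3*a1^2*b2*c3) * h5 + (p3^2*a2^2*a3*b2*c0 + (-1)*p3^2*a2^2*a3*b0*c2 + (-1)*p3^2*a2^3*b3*c0 + p3^2*a2^3*b0*c3 + p3^2*a1*a2*a3*b1*c0 + (-1)*p3^2*a1*a2*a3*b0*c1 + (-1)*p3^2*a1^2*a2*b3*c0 + p3^2*a1^2*a2*b0*c3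 + p3^2*a0*a2^2*b3*c2 + (-1)*p3^2*a0*a2^2*b2*c3 + p3^2*a0*a1*a3*b2*c1 + (-1)*p3^2*a0*a1*a3*b1*c2 + p3^2*a0*a1^2*b3*c2 + (-1)*p3^2*a0*a1^2*b2*c3 + (-1)*p3^2*a0^2*a3*b2*c0 + p3^2*a0^2*a3*b0*c2 + p3^2*a0^2*a2*b3*c0 + (-1)*p3^2*a0^2*a2*b0*c3 + (-1)*p3^2*a0^3*b3*c2 + p3^2*a0^3*b2*c3 + (-2)*p2*p3*a2*a3^2*b2*c0 + (2)*p2*p3*a2*a3^2*b0*c2 + (2)*p2*p3*a2^2*a3*b3*c0 + (-2)*p2*p3*a2^2*a3*b0*c3 + (-1)*p2*p3*a1*a3^2*b1*c0 + p2*p3*a1*a3^2*b0*c1 + p2*p3*a1*a2^2*b1*c0 + (-1)*p2*p3*a1*a2^2*b0*c1 + p2*p3*a1^2*a3*b3*c0 + (-1)*p2*p3*a1^2*a3*b0*c3 + (-1)*p2*p3*a1^2*a2*b2*c0 + p2*p3*a1^2*a2*b0*c2 + (-2)*p2*p3*a0*a2*a3*b3*c2 + (2)*p2*p3*a0*a2*a3*b2*c3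 + (-1)*p2*p3*a0*a1*a3*b3*c1 + p2*p3*a0*a1*a3*b1*c3 + p2*p3*a0*a1*a2*b2*c1 + (-1)*p2*p3*a0*a1*a2*b1*c2 + p2^2*a3^3*b2*c0 + (-1)*p2^2*a3^3*b0*c2 + (-1)*p2^2*a2*a3^2*b3*c0 + p2^2*a2*a3^2*b0*c3 + (-1)*p2^2*a1*a2*a3*b1*c0 + p2^2*a1*a2*a3*b0*c1 + p2^2*a1^2*a3*b2*c0 + (-1)*p2^2*a1^2*a3*b0*c2 + p2^2*a0*a3^2*b3*c2 + (-1)*p2^2*a0*a3^2*b2*c3 + (-1)*p2^2*a0*a1*a2*b3*c1 + p2^2*a0*a1*a2*b1*c3 + p2^2*a0*a1^2*b3*c2 + (-1)*p2^2*a0*a1^2*b2*c3 + (-1)*p2^2*a0^2*a3*b2*c0 + p2^2*a0^2*a3*b0*c2 + p2^2*a0^2*a2*b3*c0 + (-1)*p2^2*a0^2*a2*b0*c3 + (-1)*p2^2*a0^3*b3*c2 + p2^2*a0^3*b2*c3 + p1*p3*a2*b1*c0 + (-1)*p1*p3*a2*b0*c1 + (-1)*p1*p3*a2*a3^2*b1*c0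 + p1*p3*a2*a3^2*b0*c1 + (-1)*p1*p3*a2^3*b1*c0 + p1*p3*a2^3*b0*c1 + (-1)*p1*p3*a1*b2*c0 + p1*p3*a1*b0*c2 + p1*p3*a1*a2*a3*b3*c0 + (-1)*p1*p3*a1*a2*a3*b0*c3 + p1*p3*a1*a2^2*b2*c0 + (-1)*p1*p3*a1*a2^2*b0*c2 + p1*p3*a0*b2*c1 + (-1)*p1*p3*a0*b1*c2 + (-1)*p1*p3*a0*a3^2*b2*c1 + p1*p3*a0*a3^2*b1*c2 + (-1)*p1*p3*a0*a2^2*b2*c1 + p1*p3*a0*a2^2*b1*c2 + (-1)*p1*p3*a0*a1*a3*b3*c2 + p1*p3*a0*a1*a3*b2*c3 + p1*p3*a0^2*a2*b1*c0 + (-1)*p1*p3*a0^2*a2*b0*c1 + (-1)*p1*p3*a0^2*a1*b2*c0 + p1*p3*a0^2*a1*b0*c2 + p1*p3*a0^3*b2*c1 + (-1)*p1*p3*a0^3*b1*c2 + (-1)*p1*p2*a3*b1*c0 + p1*p2*a3*b0*c1 + p1*p2*a3^3*b1*c0 + (-1)*p1*p2*a3^3*b0*c1 + p1*p2*a2^2*a3*b1*c0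 + (-1)*p1*p2*a2^2*a3*b0*c1 + p1*p2*a1*b3*c0 + (-1)*p1*p2*a1*b0*c3 + (-1)*p1*p2*a1*a3^2*b3*c0 + p1*p2*a1*a3^2*b0*c3 + (-1)*p1*p2*a1*a2*a3*b2*c0 + p1*p2*a1*a2*a3*b0*c2 + (-1)*p1*p2*a0*b3*c1 + p1*p2*a0*b1*c3 + p1*p2*a0*a3^2*b3*c1 + (-1)*p1*p2*a0*a3^2*b1*c3 + p1*p2*a0*a2^2*b3*c1 + (-1)*p1*p2*a0*a2^2*b1*c3 + (-1)*p1*p2*a0*a1*a2*b3*c2 + p1*p2*a0*a1*a2*b2*c3 + (-1)*p1*p2*a0^2*a3*b1*c0 + p1*p2*a0^2*a3*b0*c1 + p1*p2*a0^2*a1*b3*c0 + (-1)*p1*p2*a0^2*a1*b0*c3 + (-1)*p1*p2*a0^3*b3*c1 + p1*p2*a0^3*b1*c3 + p1^2*a3*b2*c0 + (-1)*p1^2*a3*b0*c2 + (-1)*p1^2*a2*b3*c0 + p1^2*a2*b0*c3 + p1^2*a0*b3*c2 + (-1)*p1^2*a0*b2*c3 + (-1)*p0*p3*a1*a3^2*b2*c1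 + p0*p3*a1*a3^2*b1*c2 + p0*p3*a1*a2*a3*b3*c1 + (-1)*p0*p3*a1*a2*a3*b1*c3 + (-1)*p0*p3*a1^2*a3*b3*c2 + p0*p3*a1^2*a3*b2*c3 + (2)*p0*p3*a0*a3^2*b2*c0 + (-2)*p0*p3*a0*a3^2*b0*c2 + (-2)*p0*p3*a0*a2*a3*b3*c0 + (2)*p0*p3*a0*a2*a3*b0*c3 + (-1)*p0*p3*a0*a1*a2*b1*c0 + p0*p3*a0*a1*a2*b0*c1 + p0*p3*a0*a1^2*b2*c0 + (-1)*p0*p3*a0*a1^2*b0*c2 + (2)*p0*p3*a0^2*a3*b3*c2 + (-2)*p0*p3*a0^2*a3*b2*c3 + (-1)*p0*p3*a0^2*a1*b2*c1 + p0*p3*a0^2*a1*b1*c2 + (-1)*p0*p2*a1*a2*a3*b2*c1 + p0*p2*a1*a2*a3*b1*c2 + p0*p2*a1*a2^2*b3*c1 + (-1)*p0*p2*a1*a2^2*b1*c3 + (-1)*p0*p2*a1^2*a2*b3*c2 + p0*p2*a1^2*a2*b2*c3 + (2)*p0*p2*a0*a2*a3*b2*c0 + (-2)*p0*p2*a0*a2*a3*b0*c2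 + (-2)*p0*p2*a0*a2^2*b3*c0 + (2)*p0*p2*a0*a2^2*b0*c3 + p0*p2*a0*a1*a3*b1*c0 + (-1)*p0*p2*a0*a1*a3*b0*c1 + (-1)*p0*p2*a0*a1^2*b3*c0 + p0*p2*a0*a1^2*b0*c3 + (2)*p0*p2*a0^2*a2*b3*c2 + (-2)*p0*p2*a0^2*a2*b2*c3 + p0*p2*a0^2*a1*b3*c1 + (-1)*p0*p2*a0^2*a1*b1*c3 + (-1)*p0*p1*a3*b2*c1 + p0*p1*a3*b1*c2 + p0*p1*a3^3*b2*c1 + (-1)*p0*p1*a3^3*b1*c2 + p0*p1*a2*b3*c1 + (-1)*p0*p1*a2*b1*c3 + (-1)*p0*p1*a2*a3^2*b3*c1 + p0*p1*a2*a3^2*b1*c3 + p0*p1*a2^2*a3*b2*c1 + (-1)*p0*p1*a2^2*a3*b1*c2 + (-1)*p0*p1*a2^3*b3*c1 + p0*p1*a2^3*b1*c3 + (-1)*p0*p1*a1*b3*c2 + p0*p1*a1*b2*c3 + p0*p1*a1*a3^2*b3*c2 + (-1)*p0*p1*a1*a3^2*b2*c3 + p0*p1*a1*a2^2*b3*c2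 + (-1)*p0*p1*a1*a2^2*b2*c3 + p0*p1*a0*a1*a3*b2*c0 + (-1)*p0*p1*a0*a1*a3*b0*c2 + (-1)*p0*p1*a0*a1*a2*b3*c0 + p0*p1*a0*a1*a2*b0*c3 + (-1)*p0*p1*a0^2*a3*b2*c1 + p0*p1*a0^2*a3*b1*c2 + p0*p1*a0^2*a2*b3*c1 + (-1)*p0*p1*a0^2*a2*b1*c3 + (-1)*p0^2*a3^3*b2*c0 + p0^2*a3^3*b0*c2 + p0^2*a2*a3^2*b3*c0 + (-1)*p0^2*a2*a3^2*b0*c3 + (-1)*p0^2*a2^2*a3*b2*c0 + p0^2*a2^2*a3*b0*c2 + p0^2*a2^3*b3*c0 + (-1)*p0^2*a2^3*b0*c3 + (-1)*p0^2*a1^2*a3*b2*c0 + p0^2*a1^2*a3*b0*c2 + p0^2*a1^2*a2*b3*c0 + (-1)*p0^2*a1^2*a2*b0*c3 + (-1)*p0^2*a0*a3^2*b3*c2 + p0^2*a0*a3^2*b2*c3 + (-1)*p0^2*a0*a2^2*b3*c2 + p0^2*a0*a2^2*b2*c3 + p0^2*a0*a1*a3*b2*c1 + (-1)*p0^2*a0*a1*a3*b1*c2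 + (-1)*p0^2*a0*a1*a2*b3*c1 + p0^2*a0*a1*a2*b1*c3) * h6 + ((-1)*p3^3*a2^3*b0 + (-1)*p3^3*a1^2*a2*b0 + p3^3*a0*a2^2*b2 + p3^3*a0*a1^2*b2 + p3^3*a0^2*a2*b0 + (-1)*p3^3*a0^3*b2 + (3)*p2*p3^2*a2^2*a3*b0 + p2*p3^2*a1^2*a3*b0 + (-2)*p2*p3^2*a0*a2*a3*b2 + (-1)*p2*p3^2*a0*a2^2*b3 + (-1)*p2*p3^2*a0*a1^2*b3 + (-1)*p2*p3^2*a0^2*a3*b0 + p2*p3^2*a0^3*b3 + (-3)*p2^2*p3*a2*a3^2*b0 + (-1)*p2^2*p3*a1^2*a2*b0 + p2^2*p3*a0*a3^2*b2 + (2)*p2^2*p3*a0*a2*a3*b3 + p2^2*p3*a0*a1^2*b2 + p2^2*p3*a0^2*a2*b0 + (-1)*p2^2*p3*a0^3*b2 + p2^3*a3^3*b0 + p2^3*a1^2*a3*b0 + (-1)*p2^3*a0*a3^2*b3 + (-1)*p2^3*a0*a1^2*b3 + (-1)*p2^3*a0^2*a3*b0 + p2^3*a0^3*b3 + (2)*p1*p3^2*a1*a2*a3*b0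 + (-2)*p1*p3^2*a0*a1*a3*b2 + (-2)*p1*p2*p3*a1*a3^2*b0 + (2)*p1*p2*p3*a1*a2^2*b0 + (2)*p1*p2*p3*a0*a1*a3*b3 + (-2)*p1*p2*p3*a0*a1*a2*b2 + (-2)*p1*p2^2*a1*a2*a3*b0 + (2)*p1*p2^2*a0*a1*a2*b3 + (-1)*p1^2*p3*a2*a3^2*b0 + (-1)*p1^2*p3*a2^3*b0 + p1^2*p3*a0*a3^2*b2 + p1^2*p3*a0*a2^2*b2 + p1^2*p3*a0^2*a2*b0 + (-1)*p1^2*p3*a0^3*b2 + p1^2*p2*a3^3*b0 + p1^2*p2*a2^2*a3*b0 + (-1)*p1^2*p2*a0*a3^2*b3 + (-1)*p1^2*p2*a0*a2^2*b3 + (-1)*p1^2*p2*a0^2*a3*b0 + p1^2*p2*a0^3*b3 + (-1)*p0*p3^2*a2^2*a3*b2 + p0*p3^2*a2^3*b3 + (-1)*p0*p3^2*a1^2*a3*b2 + p0*p3^2*a1^2*a2*b3 + (-2)*p0*p3^2*a0*a2*a3*b0 + (3)*p0*p3^2*a0^2*a3*b2 + (-1)*p0*p3^2*a0^2*a2*b3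 + (2)*p0*p2*p3*a2*a3^2*b2 + (-2)*p0*p2*p3*a2^2*a3*b3 + (2)*p0*p2*p3*a0*a3^2*b0 + (-2)*p0*p2*p3*a0*a2^2*b0 + (-2)*p0*p2*p3*a0^2*a3*b3 + (2)*p0*p2*p3*a0^2*a2*b2 + (-1)*p0*p2^2*a3^3*b2 + p0*p2^2*a2*a3^2*b3 + (-1)*p0*p2^2*a1^2*a3*b2 + p0*p2^2*a1^2*a2*b3 + (2)*p0*p2^2*a0*a2*a3*b0 + p0*p2^2*a0^2*a3*b2 + (-3)*p0*p2^2*a0^2*a2*b3 + (2)*p0*p1*p3*a1*a3^2*b2 + (-2)*p0*p1*p3*a1*a2*a3*b3 + (-2)*p0*p1*p3*a0*a1*a2*b0 + (2)*p0*p1*p3*a0^2*a1*b2 + (2)*p0*p1*p2*a1*a2*a3*b2 + (-2)*p0*p1*p2*a1*a2^2*b3 + (2)*p0*p1*p2*a0*a1*a3*b0 + (-2)*p0*p1*p2*a0^2*a1*b3 + (-1)*p0*p1^2*a3^3*b2 + p0*p1^2*a2*a3^2*b3 + (-1)*p0*p1^2*a2^2*a3*b2 + p0*p1^2*a2^3*b3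 + p0*p1^2*a0^2*a3*b2 + (-1)*p0*p1^2*a0^2*a2*b3 + p0^2*p3*a2*a3^2*b0 + p0^2*p3*a2^3*b0 + p0^2*p3*a1^2*a2*b0 + (-3)*p0^2*p3*a0*a3^2*b2 + (2)*p0^2*p3*a0*a2*a3*b3 + (-1)*p0^2*p3*a0*a2^2*b2 + (-1)*p0^2*p3*a0*a1^2*b2 + (-1)*p0^2*p2*a3^3*b0 + (-1)*p0^2*p2*a2^2*a3*b0 + (-1)*p0^2*p2*a1^2*a3*b0 + p0^2*p2*a0*a3^2*b3 + (-2)*p0^2*p2*a0*a2*a3*b2 + (3)*p0^2*p2*a0*a2^2*b3 + p0^2*p2*a0*a1^2*b3 + (-2)*p0^2*p1*a0*a1*a3*b2 + (2)*p0^2*p1*a0*a1*a2*b3 + p0^3*a3^3*b2 + (-1)*p0^3*a2*a3^2*b3 + p0^3*a2^2*a3*b2 + (-1)*p0^3*a2^3*b3 + p0^3*a1^2*a3*b2 + (-1)*p0^3*a1^2*a2*b3) * h9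

private lemma key2_2 (p0 p1 p2 p3 a0 a1 a2 a3 b0 b1 b2 b3 c0 c1 c2 c3 : ℝ)
    (h1 : -(p0*p0)+p1*p1+p2*p2+p3*p3 = 1)
    (h2 : -(a0*a0)+a1*a1+a2*a2+a3*a3 = 1)
    (h3 : -(a0*p0)+a1*p1+a2*p2+a3*p3 = 0)
    (h4 : -(b0*b0)+b1*b1+b2*b2+b3*b3 = -1)
    (h5 : -(a0*b0)+a1*b1+a2*b2+a3*b3 = 0)
    (h6 : -(b0*p0)+b1*p1+b2*p2+b3*p3 = 0)
    (h7 : -(a0*c0)+a1*c1+a2*c2+a3*c3 = 1)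
    (h8 : -(c0*p0)+c1*p1+c2*p2+c3*p3 = 0)
    (h9 : -(b0*c0)+b1*c1+b2*c2+b3*c3 = 0) :
    (-1)*p3*a1*c0 + p3*a0*c1 + p1*a3*c0 + (-1)*p1*a0*c3 + (-1)*p0*a3*c1 + p0*a1*c3 = ((-1)*p3*a2*b1*c0 + p3*a2*b0*c1 + p3*a1*b2*c0 + (-1)*p3*a1*b0*c2 + (-1)*p3*a0*b2*c1 + p3*a0*b1*c2 + p2*a3*b1*c0 + (-1)*p2*a3*b0*c1 + (-1)*p2*a1*b3*c0 + p2*a1*b0*c3 + p2*a0*b3*c1 + (-1)*p2*a0*b1*c3 + (-1)*p1*a3*b2*c0 + p1*a3*b0*c2 + p1*a2*b3*c0 + (-1)*p1*a2*b0*c3 + (-1)*p1*a0*b3*c2 + p1*a0*b2*c3 + p0*a3*b2*c1 + (-1)*p0*a3*b1*c2 + (-1)*p0*a2*b3*c1 + p0*a2*b1*c3 + p0*a1*b3*c2 + (-1)*p0*a1*b2*c3) * b2 := by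
  linear_combination ((-1)*p3*a2*b1*b2*c0 + p3*a2*b0*b2*c1 + p3*a1*c0 + p3*a1*b2^2*c0 + (-1)*p3*a1*b0*b2*c2 + (-1)*p3*a0*c1 + (-1)*p3*a0*b2^2*c1 + p3*a0*b1*b2*c2 + p2*a3*b1*b2*c0 + (-1)*p2*a3*b0*b2*c1 + (-1)*p2*a1*b2*b3*c0 + p2*a1*b0*b2*c3 + p2*a0*b2*b3*c1 + (-1)*p2*a0*b1*b2*c3 + (-1)*p1*a3*c0 + (-1)*p1*a3*b2^2*c0 + p1*a3*b0*b2*c2 + p1*a2*b2*b3*c0 + (-1)*p1*a2*b0*b2*c3 + p1*a0*c3 + (-1)*p1*a0*b2*b3*c2 + p1*a0*b2^2*c3 + p0*a3*c1 + p0*a3*b2^2*c1 + (-1)*p0*a3*b1*b2*c2 + (-1)*p0*a2*b2*b3*c1 + p0*a2*b1*b2*c3 + (-1)*p0*a1*c3 + p0*a1*b2*b3*c2 + (-1)*p0*a1*b2^2*c3) * h1 + ((-1)*p3^3*a2*b1*b2*c0 + p3^3*a2*b0*b2*c1 + p3^3*a1*c0 + p3^3*a1*b2^2*c0 + (-1)*p3^3*a1*b0*b2*c2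 + (-1)*p3^3*a0*c1 + (-1)*p3^3*a0*b2^2*c1 + p3^3*a0*b1*b2*c2 + p2*p3^2*a3*b1*b2*c0 + (-1)*p2*p3^2*a3*b0*b2*c1 + p2*p3^2*a2*b1*b3*c0 + (-1)*p2*p3^2*a2*b0*b3*c1 + (-2)*p2*p3^2*a1*b2*b3*c0 + p2*p3^2*a1*b0*b3*c2 + p2*p3^2*a1*b0*b2*c3 + (2)*p2*p3^2*a0*b2*b3*c1 + (-1)*p2*p3^2*a0*b1*b3*c2 + (-1)*p2*p3^2*a0*b1*b2*c3 + (-1)*p2^2*p3*a3*b1*b3*c0 + p2^2*p3*a3*b0*b3*c1 + p2^2*p3*a1*c0 + p2^2*p3*a1*b3^2*c0 + (-1)*p2^2*p3*a1*b0*b3*c3 + (-1)*p2^2*p3*a0*c1 + (-1)*p2^2*p3*a0*b3^2*c1 + p2^2*p3*a0*b1*b3*c3 + (-1)*p1*p3^2*a3*c0 + (-1)*p1*p3^2*a3*b2^2*c0 + p1*p3^2*a3*b0*b2*c2 + p1*p3^2*a2*b2*b3*c0 + (-1)*p1*p3^2*a2*b0*b2*c3 + p1*p3^2*a0*c3 +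 (-1)*p1*p3^2*a0*b2*b3*c2 + p1*p3^2*a0*b2^2*c3 + p1*p2*p3*a3*b2*b3*c0 + (-1)*p1*p2*p3*a3*b0*b3*c2 + (-1)*p1*p2*p3*a2*b3^2*c0 + p1*p2*p3*a2*b1^2*c0 + p1*p2*p3*a2*b0*b3*c3 + (-1)*p1*p2*p3*a2*b0*b1*c1 + (-1)*p1*p2*p3*a1*b1*b2*c0 + p1*p2*p3*a1*b0*b1*c2 + p1*p2*p3*a0*b3^2*c2 + (-1)*p1*p2*p3*a0*b2*b3*c3 + p1*p2*p3*a0*b1*b2*c1 + (-1)*p1*p2*p3*a0*b1^2*c2 + (-1)*p1*p2^2*a3*c0 + (-1)*p1*p2^2*a3*b1^2*c0 + p1*p2^2*a3*b0*b1*c1 + p1*p2^2*a1*b1*b3*c0 + (-1)*p1*p2^2*a1*b0*b1*c3 + p1*p2^2*a0*c3 + (-1)*p1*p2^2*a0*b1*b3*c1 + p1*p2^2*a0*b1^2*c3 + (-1)*p1^2*p3*a2*b1*b2*c0 + p1^2*p3*a2*b0*b2*c1 + p1^2*p3*a1*c0 + p1^2*p3*a1*b2^2*c0 + (-1)*p1^2*p3*a1*b0*b2*c2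 + (-1)*p1^2*p3*a0*c1 + (-1)*p1^2*p3*a0*b2^2*c1 + p1^2*p3*a0*b1*b2*c2 + (2)*p1^2*p2*a3*b1*b2*c0 + (-1)*p1^2*p2*a3*b0*b2*c1 + (-1)*p1^2*p2*a3*b0*b1*c2 + (-1)*p1^2*p2*a2*b1*b3*c0 + p1^2*p2*a2*b0*b1*c3 + (-1)*p1^2*p2*a1*b2*b3*c0 + p1^2*p2*a1*b0*b2*c3 + p1^2*p2*a0*b2*b3*c1 + p1^2*p2*a0*b1*b3*c2 + (-2)*p1^2*p2*a0*b1*b2*c3 + (-1)*p1^3*a3*c0 + (-1)*p1^3*a3*b2^2*c0 + p1^3*a3*b0*b2*c2 + p1^3*a2*b2*b3*c0 + (-1)*p1^3*a2*b0*b2*c3 + p1^3*a0*c3 + (-1)*p1^3*a0*b2*b3*c2 + p1^3*a0*b2^2*c3 + p0*p3^2*a3*c1 + p0*p3^2*a3*b2^2*c1 + (-1)*p0*p3^2*a3*b1*b2*c2 + (-1)*p0*p3^2*a2*b2*b3*c1 + p0*p3^2*a2*b1*b2*c3 + (-1)*p0*p3^2*a1*c3 + p0*p3^2*a1*b2*b3*c2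 + (-1)*p0*p3^2*a1*b2^2*c3 + (-1)*p0*p2*p3*a3*b2*b3*c1 + p0*p2*p3*a3*b1*b3*c2 + p0*p2*p3*a2*b3^2*c1 + (-1)*p0*p2*p3*a2*b1*b3*c3 + (-1)*p0*p2*p3*a2*b0*b1*c0 + p0*p2*p3*a2*b0^2*c1 + (-1)*p0*p2*p3*a1*b3^2*c2 + p0*p2*p3*a1*b2*b3*c3 + p0*p2*p3*a1*b0*b2*c0 + (-1)*p0*p2*p3*a1*b0^2*c2 + (-1)*p0*p2*p3*a0*b0*b2*c1 + p0*p2*p3*a0*b0*b1*c2 + p0*p2^2*a3*c1 + p0*p2^2*a3*b0*b1*c0 + (-1)*p0*p2^2*a3*b0^2*c1 + (-1)*p0*p2^2*a1*c3 + (-1)*p0*p2^2*a1*b0*b3*c0 + p0*p2^2*a1*b0^2*c3 + p0*p2^2*a0*b0*b3*c1 + (-1)*p0*p2^2*a0*b0*b1*c3 + (-1)*p0*p1*p2*a3*b1*b2*c1 + p0*p1*p2*a3*b1^2*c2 + (-1)*p0*p1*p2*a3*b0*b2*c0 + p0*p1*p2*a3*b0^2*c2 + p0*p1*p2*a2*b1*b3*c1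 + (-1)*p0*p1*p2*a2*b1^2*c3 + p0*p1*p2*a2*b0*b3*c0 + (-1)*p0*p1*p2*a2*b0^2*c3 + (-1)*p0*p1*p2*a1*b1*b3*c2 + p0*p1*p2*a1*b1*b2*c3 + (-1)*p0*p1*p2*a0*b0*b3*c2 + p0*p1*p2*a0*b0*b2*c3 + p0*p1^2*a3*c1 + p0*p1^2*a3*b2^2*c1 + (-1)*p0*p1^2*a3*b1*b2*c2 + (-1)*p0*p1^2*a2*b2*b3*c1 + p0*p1^2*a2*b1*b2*c3 + (-1)*p0*p1^2*a1*c3 + p0*p1^2*a1*b2*b3*c2 + (-1)*p0*p1^2*a1*b2^2*c3 + p0^2*p3*a2*b1*b2*c0 + (-1)*p0^2*p3*a2*b0*b2*c1 + (-1)*p0^2*p3*a1*c0 + (-1)*p0^2*p3*a1*b2^2*c0 + p0^2*p3*a1*b0*b2*c2 + p0^2*p3*a0*c1 + p0^2*p3*a0*b2^2*c1 + (-1)*p0^2*p3*a0*b1*b2*c2 + (-1)*p0^2*p2*a3*b1*b2*c0 + (2)*p0^2*p2*a3*b0*b2*c1 + (-1)*p0^2*p2*a3*b0*b1*c2 + (-1)*p0^2*p2*a2*b0*b3*c1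 + p0^2*p2*a2*b0*b1*c3 + p0^2*p2*a1*b2*b3*c0 + p0^2*p2*a1*b0*b3*c2 + (-2)*p0^2*p2*a1*b0*b2*c3 + (-1)*p0^2*p2*a0*b2*b3*c1 + p0^2*p2*a0*b1*b2*c3 + p0^2*p1*a3*c0 + p0^2*p1*a3*b2^2*c0 + (-1)*p0^2*p1*a3*b0*b2*c2 + (-1)*p0^2*p1*a2*b2*b3*c0 + p0^2*p1*a2*b0*b2*c3 + (-1)*p0^2*p1*a0*c3 + p0^2*p1*a0*b2*b3*c2 + (-1)*p0^2*p1*a0*b2^2*c3 + (-1)*p0^3*a3*c1 + (-1)*p0^3*a3*b2^2*c1 + p0^3*a3*b1*b2*c2 + p0^3*a2*b2*b3*c1 + (-1)*p0^3*a2*b1*b2*c3 + p0^3*a1*c3 + (-1)*p0^3*a1*b2*b3*c2 + p0^3*a1*b2^2*c3) * h2 + (p3^2*a2*a3*b1*b2*c0 + (-1)*p3^2*a2*a3*b0*b2*c1 + (-1)*p3^2*a2^2*b1*b3*c0 + p3^2*a2^2*b0*b3*c1 + (-1)*p3^2*a1*a3*c0 + (-1)*p3^2*a1*a3*b2^2*c0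 + p3^2*a1*a3*b0*b2*c2 + p3^2*a1*a2*b2*b3*c0 + (-1)*p3^2*a1*a2*b0*b3*c2 + p3^2*a0*a3*c1 + p3^2*a0*a3*b2^2*c1 + (-1)*p3^2*a0*a3*b1*b2*c2 + (-1)*p3^2*a0*a2*b2*b3*c1 + p3^2*a0*a2*b1*b3*c2 + (-1)*p2*p3*a3^2*b1*b2*c0 + p2*p3*a3^2*b0*b2*c1 + p2*p3*a2*a3*b1*b3*c0 + (-1)*p2*p3*a2*a3*b0*b3*c1 + p2*p3*a1*a3*b2*b3*c0 + (-1)*p2*p3*a1*a3*b0*b2*c3 + (-1)*p2*p3*a1*a2*c0 + (-1)*p2*p3*a1*a2*b3^2*c0 + p2*p3*a1*a2*b0*b3*c3 + (-1)*p2*p3*a0*a3*b2*b3*c1 + p2*p3*a0*a3*b1*b2*c3 + p2*p3*a0*a2*c1 + p2*p3*a0*a2*b3^2*c1 + (-1)*p2*p3*a0*a2*b1*b3*c3 + p1*p3*a3^2*c0 + p1*p3*a3^2*b2^2*c0 + (-1)*p1*p3*a3^2*b0*b2*c2 + (-2)*p1*p3*a2*a3*b2*b3*c0 + p1*p3*a2*a3*b0*b3*c2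 + p1*p3*a2*a3*b0*b2*c3 + p1*p3*a2^2*b3^2*c0 + (-1)*p1*p3*a2^2*b1^2*c0 + (-1)*p1*p3*a2^2*b0*b3*c3 + p1*p3*a2^2*b0*b1*c1 + (2)*p1*p3*a1*a2*b1*b2*c0 + (-1)*p1*p3*a1*a2*b0*b2*c1 + (-1)*p1*p3*a1*a2*b0*b1*c2 + (-1)*p1*p3*a1^2*c0 + (-1)*p1*p3*a1^2*b2^2*c0 + p1*p3*a1^2*b0*b2*c2 + (-1)*p1*p3*a0*a3*c3 + p1*p3*a0*a3*b2*b3*c2 + (-1)*p1*p3*a0*a3*b2^2*c3 + (-1)*p1*p3*a0*a2*b3^2*c2 + p1*p3*a0*a2*b2*b3*c3 + (-1)*p1*p3*a0*a2*b1*b2*c1 + p1*p3*a0*a2*b1^2*c2 + p1*p3*a0*a1*c1 + p1*p3*a0*a1*b2^2*c1 + (-1)*p1*p3*a0*a1*b1*b2*c2 + p1*p2*a2*a3*c0 + p1*p2*a2*a3*b1^2*c0 + (-1)*p1*p2*a2*a3*b0*b1*c1 + (-1)*p1*p2*a1*a3*b1*b2*c0 + p1*p2*a1*a3*b0*b2*c1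 + (-1)*p1*p2*a1*a2*b1*b3*c0 + p1*p2*a1*a2*b0*b1*c3 + p1*p2*a1^2*b2*b3*c0 + (-1)*p1*p2*a1^2*b0*b2*c3 + (-1)*p1*p2*a0*a2*c3 + p1*p2*a0*a2*b1*b3*c1 + (-1)*p1*p2*a0*a2*b1^2*c3 + (-1)*p1*p2*a0*a1*b2*b3*c1 + p1*p2*a0*a1*b1*b2*c3 + (-1)*p1^2*a2*a3*b1*b2*c0 + p1^2*a2*a3*b0*b1*c2 + p1^2*a2^2*b1*b3*c0 + (-1)*p1^2*a2^2*b0*b1*c3 + p1^2*a1*a3*c0 + p1^2*a1*a3*b2^2*c0 + (-1)*p1^2*a1*a3*b0*b2*c2 + (-1)*p1^2*a1*a2*b2*b3*c0 + p1^2*a1*a2*b0*b2*c3 + (-1)*p1^2*a0*a2*b1*b3*c2 + p1^2*a0*a2*b1*b2*c3 + (-1)*p1^2*a0*a1*c3 + p1^2*a0*a1*b2*b3*c2 + (-1)*p1^2*a0*a1*b2^2*c3 + (-1)*p0*p3*a3^2*c1 + (-1)*p0*p3*a3^2*b2^2*c1 + p0*p3*a3^2*b1*b2*c2 + (2)*p0*p3*a2*a3*b2*b3*c1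 + (-1)*p0*p3*a2*a3*b1*b3*c2 + (-1)*p0*p3*a2*a3*b1*b2*c3 + (-1)*p0*p3*a2^2*b3^2*c1 + p0*p3*a2^2*b1*b3*c3 + p0*p3*a2^2*b0*b1*c0 + (-1)*p0*p3*a2^2*b0^2*c1 + p0*p3*a1*a3*c3 + (-1)*p0*p3*a1*a3*b2*b3*c2 + p0*p3*a1*a3*b2^2*c3 + p0*p3*a1*a2*b3^2*c2 + (-1)*p0*p3*a1*a2*b2*b3*c3 + (-1)*p0*p3*a1*a2*b0*b2*c0 + p0*p3*a1*a2*b0^2*c2 + (-1)*p0*p3*a0*a2*b1*b2*c0 + (2)*p0*p3*a0*a2*b0*b2*c1 + (-1)*p0*p3*a0*a2*b0*b1*c2 + p0*p3*a0*a1*c0 + p0*p3*a0*a1*b2^2*c0 + (-1)*p0*p3*a0*a1*b0*b2*c2 + (-1)*p0*p3*a0^2*c1 + (-1)*p0*p3*a0^2*b2^2*c1 + p0*p3*a0^2*b1*b2*c2 + (-1)*p0*p2*a2*a3*c1 + (-1)*p0*p2*a2*a3*b0*b1*c0 + p0*p2*a2*a3*b0^2*c1 + p0*p2*a1*a2*c3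 + p0*p2*a1*a2*b0*b3*c0 + (-1)*p0*p2*a1*a2*b0^2*c3 + p0*p2*a0*a3*b1*b2*c0 + (-1)*p0*p2*a0*a3*b0*b2*c1 + (-1)*p0*p2*a0*a2*b0*b3*c1 + p0*p2*a0*a2*b0*b1*c3 + (-1)*p0*p2*a0*a1*b2*b3*c0 + p0*p2*a0*a1*b0*b2*c3 + p0*p2*a0^2*b2*b3*c1 + (-1)*p0*p2*a0^2*b1*b2*c3 + p0*p1*a2*a3*b1*b2*c1 + (-1)*p0*p1*a2*a3*b1^2*c2 + p0*p1*a2*a3*b0*b2*c0 + (-1)*p0*p1*a2*a3*b0^2*c2 + (-1)*p0*p1*a2^2*b1*b3*c1 + p0*p1*a2^2*b1^2*c3 + (-1)*p0*p1*a2^2*b0*b3*c0 + p0*p1*a2^2*b0^2*c3 + (-1)*p0*p1*a1*a3*c1 + (-1)*p0*p1*a1*a3*b2^2*c1 + p0*p1*a1*a3*b1*b2*c2 + p0*p1*a1*a2*b2*b3*c1 + p0*p1*a1*a2*b1*b3*c2 + (-2)*p0*p1*a1*a2*b1*b2*c3 + p0*p1*a1^2*c3 + (-1)*p0*p1*a1^2*b2*b3*c2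 + p0*p1*a1^2*b2^2*c3 + (-1)*p0*p1*a0*a3*c0 + (-1)*p0*p1*a0*a3*b2^2*c0 + p0*p1*a0*a3*b0*b2*c2 + p0*p1*a0*a2*b2*b3*c0 + p0*p1*a0*a2*b0*b3*c2 + (-2)*p0*p1*a0*a2*b0*b2*c3 + p0*p1*a0^2*c3 + (-1)*p0*p1*a0^2*b2*b3*c2 + p0*p1*a0^2*b2^2*c3 + (-1)*p0^2*a2*a3*b0*b2*c1 + p0^2*a2*a3*b0*b1*c2 + p0^2*a2^2*b0*b3*c1 + (-1)*p0^2*a2^2*b0*b1*c3 + (-1)*p0^2*a1*a2*b0*b3*c2 + p0^2*a1*a2*b0*b2*c3 + p0^2*a0*a3*c1 + p0^2*a0*a3*b2^2*c1 + (-1)*p0^2*a0*a3*b1*b2*c2 + (-1)*p0^2*a0*a2*b2*b3*c1 + p0^2*a0*a2*b1*b2*c3 + (-1)*p0^2*a0*a1*c3 + p0^2*a0*a1*b2*b3*c2 + (-1)*p0^2*a0*a1*b2^2*c3) * h3 + ((-1)*p3^3*a1*a2^2*c0 + (-1)*p3^3*a1^3*c0 + p3^3*a0*a2^2*c1 + p3^3*a0*a1^2*c1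 + p3^3*a0^2*a1*c0 + (-1)*p3^3*a0^3*c1 + (2)*p2*p3^2*a1*a2*a3*c0 + (-2)*p2*p3^2*a0*a2*a3*c1 + (-1)*p2^2*p3*a1*a3^2*c0 + (-1)*p2^2*p3*a1^3*c0 + p2^2*p3*a0*a3^2*c1 + p2^2*p3*a0*a1^2*c1 + p2^2*p3*a0^2*a1*c0 + (-1)*p2^2*p3*a0^3*c1 + p1*p3^2*a2^2*a3*c0 + (3)*p1*p3^2*a1^2*a3*c0 + (-1)*p1*p3^2*a0*a2^2*c3 + (-2)*p1*p3^2*a0*a1*a3*c1 + (-1)*p1*p3^2*a0*a1^2*c3 + (-1)*p1*p3^2*a0^2*a3*c0 + p1*p3^2*a0^3*c3 + (-2)*p1*p2*p3*a2*a3^2*c0 + (2)*p1*p2*p3*a1^2*a2*c0 + (2)*p1*p2*p3*a0*a2*a3*c3 + (-2)*p1*p2*p3*a0*a1*a2*c1 + p1*p2^2*a3^3*c0 + p1*p2^2*a1^2*a3*c0 + (-1)*p1*p2^2*a0*a3^2*c3 + (-1)*p1*p2^2*a0*a1^2*c3 + (-1)*p1*p2^2*a0^2*a3*c0 + p1*p2^2*a0^3*c3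 + (-3)*p1^2*p3*a1*a3^2*c0 + (-1)*p1^2*p3*a1*a2^2*c0 + p1^2*p3*a0*a3^2*c1 + p1^2*p3*a0*a2^2*c1 + (2)*p1^2*p3*a0*a1*a3*c3 + p1^2*p3*a0^2*a1*c0 + (-1)*p1^2*p3*a0^3*c1 + (-2)*p1^2*p2*a1*a2*a3*c0 + (2)*p1^2*p2*a0*a1*a2*c3 + p1^3*a3^3*c0 + p1^3*a2^2*a3*c0 + (-1)*p1^3*a0*a3^2*c3 + (-1)*p1^3*a0*a2^2*c3 + (-1)*p1^3*a0^2*a3*c0 + p1^3*a0^3*c3 + (-1)*p0*p3^2*a2^2*a3*c1 + p0*p3^2*a1*a2^2*c3 + (-1)*p0*p3^2*a1^2*a3*c1 + p0*p3^2*a1^3*c3 + (-2)*p0*p3^2*a0*a1*a3*c0 + (3)*p0*p3^2*a0^2*a3*c1 + (-1)*p0*p3^2*a0^2*a1*c3 + (2)*p0*p2*p3*a2*a3^2*c1 + (-2)*p0*p2*p3*a1*a2*a3*c3 + (-2)*p0*p2*p3*a0*a1*a2*c0 + (2)*p0*p2*p3*a0^2*a2*c1 + (-1)*p0*p2^2*a3^3*c1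 + p0*p2^2*a1*a3^2*c3 + (-1)*p0*p2^2*a1^2*a3*c1 + p0*p2^2*a1^3*c3 + p0*p2^2*a0^2*a3*c1 + (-1)*p0*p2^2*a0^2*a1*c3 + (2)*p0*p1*p3*a1*a3^2*c1 + (-2)*p0*p1*p3*a1^2*a3*c3 + (2)*p0*p1*p3*a0*a3^2*c0 + (-2)*p0*p1*p3*a0*a1^2*c0 + (-2)*p0*p1*p3*a0^2*a3*c3 + (2)*p0*p1*p3*a0^2*a1*c1 + (2)*p0*p1*p2*a1*a2*a3*c1 + (-2)*p0*p1*p2*a1^2*a2*c3 + (2)*p0*p1*p2*a0*a2*a3*c0 + (-2)*p0*p1*p2*a0^2*a2*c3 + (-1)*p0*p1^2*a3^3*c1 + (-1)*p0*p1^2*a2^2*a3*c1 + p0*p1^2*a1*a3^2*c3 + p0*p1^2*a1*a2^2*c3 + (2)*p0*p1^2*a0*a1*a3*c0 + p0*p1^2*a0^2*a3*c1 + (-3)*p0*p1^2*a0^2*a1*c3 + p0^2*p3*a1*a3^2*c0 + p0^2*p3*a1*a2^2*c0 + p0^2*p3*a1^3*c0 + (-3)*p0^2*p3*a0*a3^2*c1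 + (-1)*p0^2*p3*a0*a2^2*c1 + (2)*p0^2*p3*a0*a1*a3*c3 + (-1)*p0^2*p3*a0*a1^2*c1 + (-2)*p0^2*p2*a0*a2*a3*c1 + (2)*p0^2*p2*a0*a1*a2*c3 + (-1)*p0^2*p1*a3^3*c0 + (-1)*p0^2*p1*a2^2*a3*c0 + (-1)*p0^2*p1*a1^2*a3*c0 + p0^2*p1*a0*a3^2*c3 + p0^2*p1*a0*a2^2*c3 + (-2)*p0^2*p1*a0*a1*a3*c1 + (3)*p0^2*p1*a0*a1^2*c3 + p0^3*a3^3*c1 + p0^3*a2^2*a3*c1 + (-1)*p0^3*a1*a3^2*c3 + (-1)*p0^3*a1*a2^2*c3 + p0^3*a1^2*a3*c1 + (-1)*p0^3*a1^3*c3) * h4 + (p3^3*a2^2*b1*c0 + (-1)*p3^3*a2^2*b0*c1 + p3^3*a1^2*b1*c0 + (-1)*p3^3*a1^2*b0*c1 + (-1)*p3^3*a0^2*b1*c0 + p3^3*a0^2*b0*c1 + (-2)*p2*p3^2*a2*a3*b1*c0 + (2)*p2*p3^2*a2*a3*b0*c1 + p2^2*p3*a3^2*b1*c0 + (-1)*p2^2*p3*a3^2*b0*c1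 + p2^2*p3*a1^2*b1*c0 + (-1)*p2^2*p3*a1^2*b0*c1 + (-1)*p2^2*p3*a0^2*b1*c0 + p2^2*p3*a0^2*b0*c1 + (-1)*p1*p3^2*a2^2*b3*c0 + p1*p3^2*a2^2*b0*c3 + (-2)*p1*p3^2*a1*a3*b1*c0 + (2)*p1*p3^2*a1*a3*b0*c1 + (-1)*p1*p3^2*a1^2*b3*c0 + p1*p3^2*a1^2*b0*c3 + p1*p3^2*a0^2*b3*c0 + (-1)*p1*p3^2*a0^2*b0*c3 + (2)*p1*p2*p3*a2*a3*b3*c0 + (-2)*p1*p2*p3*a2*a3*b0*c3 + (-2)*p1*p2*p3*a1*a2*b1*c0 + (2)*p1*p2*p3*a1*a2*b0*c1 + (-1)*p1*p2^2*a3^2*b3*c0 + p1*p2^2*a3^2*b0*c3 + (-1)*p1*p2^2*a1^2*b3*c0 + p1*p2^2*a1^2*b0*c3 + p1*p2^2*a0^2*b3*c0 + (-1)*p1*p2^2*a0^2*b0*c3 + p1^2*p3*a3^2*b1*c0 + (-1)*p1^2*p3*a3^2*b0*c1 + p1^2*p3*a2^2*b1*c0 + (-1)*p1^2*p3*a2^2*b0*c1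 + (2)*p1^2*p3*a1*a3*b3*c0 + (-2)*p1^2*p3*a1*a3*b0*c3 + (-1)*p1^2*p3*a0^2*b1*c0 + p1^2*p3*a0^2*b0*c1 + (2)*p1^2*p2*a1*a2*b3*c0 + (-2)*p1^2*p2*a1*a2*b0*c3 + (-1)*p1^3*a3^2*b3*c0 + p1^3*a3^2*b0*c3 + (-1)*p1^3*a2^2*b3*c0 + p1^3*a2^2*b0*c3 + p1^3*a0^2*b3*c0 + (-1)*p1^3*a0^2*b0*c3 + p0*p3^2*a2^2*b3*c1 + (-1)*p0*p3^2*a2^2*b1*c3 + p0*p3^2*a1^2*b3*c1 + (-1)*p0*p3^2*a1^2*b1*c3 + (2)*p0*p3^2*a0*a3*b1*c0 + (-2)*p0*p3^2*a0*a3*b0*c1 + (-1)*p0*p3^2*a0^2*b3*c1 + p0*p3^2*a0^2*b1*c3 + (-2)*p0*p2*p3*a2*a3*b3*c1 + (2)*p0*p2*p3*a2*a3*b1*c3 + (2)*p0*p2*p3*a0*a2*b1*c0 + (-2)*p0*p2*p3*a0*a2*b0*c1 + p0*p2^2*a3^2*b3*c1 + (-1)*p0*p2^2*a3^2*b1*c3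 + p0*p2^2*a1^2*b3*c1 + (-1)*p0*p2^2*a1^2*b1*c3 + (-1)*p0*p2^2*a0^2*b3*c1 + p0*p2^2*a0^2*b1*c3 + (-2)*p0*p1*p3*a1*a3*b3*c1 + (2)*p0*p1*p3*a1*a3*b1*c3 + (-2)*p0*p1*p3*a0*a3*b3*c0 + (2)*p0*p1*p3*a0*a3*b0*c3 + (2)*p0*p1*p3*a0*a1*b1*c0 + (-2)*p0*p1*p3*a0*a1*b0*c1 + (-2)*p0*p1*p2*a1*a2*b3*c1 + (2)*p0*p1*p2*a1*a2*b1*c3 + (-2)*p0*p1*p2*a0*a2*b3*c0 + (2)*p0*p1*p2*a0*a2*b0*c3 + p0*p1^2*a3^2*b3*c1 + (-1)*p0*p1^2*a3^2*b1*c3 + p0*p1^2*a2^2*b3*c1 + (-1)*p0*p1^2*a2^2*b1*c3 + (-2)*p0*p1^2*a0*a1*b3*c0 + (2)*p0*p1^2*a0*a1*b0*c3 + (-1)*p0*p1^2*a0^2*b3*c1 + p0*p1^2*a0^2*b1*c3 + (-1)*p0^2*p3*a3^2*b1*c0 + p0^2*p3*a3^2*b0*c1 + (-1)*p0^2*p3*a2^2*b1*c0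 + p0^2*p3*a2^2*b0*c1 + (-1)*p0^2*p3*a1^2*b1*c0 + p0^2*p3*a1^2*b0*c1 + (2)*p0^2*p3*a0*a3*b3*c1 + (-2)*p0^2*p3*a0*a3*b1*c3 + (2)*p0^2*p2*a0*a2*b3*c1 + (-2)*p0^2*p2*a0*a2*b1*c3 + p0^2*p1*a3^2*b3*c0 + (-1)*p0^2*p1*a3^2*b0*c3 + p0^2*p1*a2^2*b3*c0 + (-1)*p0^2*p1*a2^2*b0*c3 + p0^2*p1*a1^2*b3*c0 + (-1)*p0^2*p1*a1^2*b0*c3 + (2)*p0^2*p1*a0*a1*b3*c1 + (-2)*p0^2*p1*a0*a1*b1*c3 + (-1)*p0^3*a3^2*b3*c1 + p0^3*a3^2*b1*c3 + (-1)*p0^3*a2^2*b3*c1 + p0^3*a2^2*b1*c3 + (-1)*p0^3*a1^2*b3*c1 + p0^3*a1^2*b1*c3) * h5 + ((-1)*p3^2*a1*a2*a3*b2*c0 + p3^2*a1*a2*a3*b0*c2 + p3^2*a1*a2^2*b3*c0 + (-1)*p3^2*a1*a2^2*b0*c3 + (-1)*p3^2*a1^2*a3*b1*c0 + p3^2*a1^2*a3*b0*c1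 + p3^2*a1^3*b3*c0 + (-1)*p3^2*a1^3*b0*c3 + p3^2*a0*a2*a3*b2*c1 + (-1)*p3^2*a0*a2*a3*b1*c2 + (-1)*p3^2*a0*a2^2*b3*c1 + p3^2*a0*a2^2*b1*c3 + (-1)*p3^2*a0*a1^2*b3*c1 + p3^2*a0*a1^2*b1*c3 + p3^2*a0^2*a3*b1*c0 + (-1)*p3^2*a0^2*a3*b0*c1 + (-1)*p3^2*a0^2*a1*b3*c0 + p3^2*a0^2*a1*b0*c3 + p3^2*a0^3*b3*c1 + (-1)*p3^2*a0^3*b1*c3 + p2*p3*a2*b1*c0 + (-1)*p2*p3*a2*b0*c1 + (-1)*p2*p3*a1*b2*c0 + p2*p3*a1*b0*c2 + p2*p3*a1*a3^2*b2*c0 + (-1)*p2*p3*a1*a3^2*b0*c2 + (-1)*p2*p3*a1*a2*a3*b3*c0 + p2*p3*a1*a2*a3*b0*c3 + (-1)*p2*p3*a1^2*a2*b1*c0 + p2*p3*a1^2*a2*b0*c1 + p2*p3*a1^3*b2*c0 + (-1)*p2*p3*a1^3*b0*c2 + p2*p3*a0*b2*c1 + (-1)*p2*p3*a0*b1*c2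 + (-1)*p2*p3*a0*a3^2*b2*c1 + p2*p3*a0*a3^2*b1*c2 + p2*p3*a0*a2*a3*b3*c1 + (-1)*p2*p3*a0*a2*a3*b1*c3 + (-1)*p2*p3*a0*a1^2*b2*c1 + p2*p3*a0*a1^2*b1*c2 + p2*p3*a0^2*a2*b1*c0 + (-1)*p2*p3*a0^2*a2*b0*c1 + (-1)*p2*p3*a0^2*a1*b2*c0 + p2*p3*a0^2*a1*b0*c2 + p2*p3*a0^3*b2*c1 + (-1)*p2*p3*a0^3*b1*c2 + (-1)*p2^2*a3*b1*c0 + p2^2*a3*b0*c1 + p2^2*a1*b3*c0 + (-1)*p2^2*a1*b0*c3 + (-1)*p2^2*a0*b3*c1 + p2^2*a0*b1*c3 + p1*p3*a2*a3^2*b2*c0 + (-1)*p1*p3*a2*a3^2*b0*c2 + (-1)*p1*p3*a2^2*a3*b3*c0 + p1*p3*a2^2*a3*b0*c3 + (2)*p1*p3*a1*a3^2*b1*c0 + (-2)*p1*p3*a1*a3^2*b0*c1 + p1*p3*a1*a2^2*b1*c0 + (-1)*p1*p3*a1*a2^2*b0*c1 + (-2)*p1*p3*a1^2*a3*b3*c0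 + (2)*p1*p3*a1^2*a3*b0*c3 + (-1)*p1*p3*a1^2*a2*b2*c0 + p1*p3*a1^2*a2*b0*c2 + p1*p3*a0*a2*a3*b3*c2 + (-1)*p1*p3*a0*a2*a3*b2*c3 + (2)*p1*p3*a0*a1*a3*b3*c1 + (-2)*p1*p3*a0*a1*a3*b1*c3 + p1*p3*a0*a1*a2*b2*c1 + (-1)*p1*p3*a0*a1*a2*b1*c2 + p1*p2*a3*b2*c0 + (-1)*p1*p2*a3*b0*c2 + (-1)*p1*p2*a3^3*b2*c0 + p1*p2*a3^3*b0*c2 + (-1)*p1*p2*a2*b3*c0 + p1*p2*a2*b0*c3 + p1*p2*a2*a3^2*b3*c0 + (-1)*p1*p2*a2*a3^2*b0*c3 + p1*p2*a1*a2*a3*b1*c0 + (-1)*p1*p2*a1*a2*a3*b0*c1 + (-1)*p1*p2*a1^2*a3*b2*c0 + p1*p2*a1^2*a3*b0*c2 + p1*p2*a0*b3*c2 + (-1)*p1*p2*a0*b2*c3 + (-1)*p1*p2*a0*a3^2*b3*c2 + p1*p2*a0*a3^2*b2*c3 + p1*p2*a0*a1*a2*b3*c1 + (-1)*p1*p2*a0*a1*a2*b1*c3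 + (-1)*p1*p2*a0*a1^2*b3*c2 + p1*p2*a0*a1^2*b2*c3 + p1*p2*a0^2*a3*b2*c0 + (-1)*p1*p2*a0^2*a3*b0*c2 + (-1)*p1*p2*a0^2*a2*b3*c0 + p1*p2*a0^2*a2*b0*c3 + p1*p2*a0^3*b3*c2 + (-1)*p1*p2*a0^3*b2*c3 + (-1)*p1^2*a3^3*b1*c0 + p1^2*a3^3*b0*c1 + (-1)*p1^2*a2^2*a3*b1*c0 + p1^2*a2^2*a3*b0*c1 + p1^2*a1*a3^2*b3*c0 + (-1)*p1^2*a1*a3^2*b0*c3 + p1^2*a1*a2*a3*b2*c0 + (-1)*p1^2*a1*a2*a3*b0*c2 + (-1)*p1^2*a0*a3^2*b3*c1 + p1^2*a0*a3^2*b1*c3 + (-1)*p1^2*a0*a2^2*b3*c1 + p1^2*a0*a2^2*b1*c3 + p1^2*a0*a1*a2*b3*c2 + (-1)*p1^2*a0*a1*a2*b2*c3 + p1^2*a0^2*a3*b1*c0 + (-1)*p1^2*a0^2*a3*b0*c1 + (-1)*p1^2*a0^2*a1*b3*c0 + p1^2*a0^2*a1*b0*c3 + p1^2*a0^3*b3*c1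 + (-1)*p1^2*a0^3*b1*c3 + (-1)*p0*p3*a2*a3^2*b2*c1 + p0*p3*a2*a3^2*b1*c2 + p0*p3*a2^2*a3*b3*c1 + (-1)*p0*p3*a2^2*a3*b1*c3 + (-1)*p0*p3*a1*a2*a3*b3*c2 + p0*p3*a1*a2*a3*b2*c3 + (-2)*p0*p3*a0*a3^2*b1*c0 + (2)*p0*p3*a0*a3^2*b0*c1 + (-1)*p0*p3*a0*a2^2*b1*c0 + p0*p3*a0*a2^2*b0*c1 + (2)*p0*p3*a0*a1*a3*b3*c0 + (-2)*p0*p3*a0*a1*a3*b0*c3 + p0*p3*a0*a1*a2*b2*c0 + (-1)*p0*p3*a0*a1*a2*b0*c2 + (-2)*p0*p3*a0^2*a3*b3*c1 + (2)*p0*p3*a0^2*a3*b1*c3 + (-1)*p0*p3*a0^2*a2*b2*c1 + p0*p3*a0^2*a2*b1*c2 + (-1)*p0*p2*a3*b2*c1 + p0*p2*a3*b1*c2 + p0*p2*a3^3*b2*c1 + (-1)*p0*p2*a3^3*b1*c2 + p0*p2*a2*b3*c1 + (-1)*p0*p2*a2*b1*c3 + (-1)*p0*p2*a2*a3^2*b3*c1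 + p0*p2*a2*a3^2*b1*c3 + (-1)*p0*p2*a1*b3*c2 + p0*p2*a1*b2*c3 + p0*p2*a1*a3^2*b3*c2 + (-1)*p0*p2*a1*a3^2*b2*c3 + p0*p2*a1^2*a3*b2*c1 + (-1)*p0*p2*a1^2*a3*b1*c2 + (-1)*p0*p2*a1^2*a2*b3*c1 + p0*p2*a1^2*a2*b1*c3 + p0*p2*a1^3*b3*c2 + (-1)*p0*p2*a1^3*b2*c3 + (-1)*p0*p2*a0*a2*a3*b1*c0 + p0*p2*a0*a2*a3*b0*c1 + p0*p2*a0*a1*a2*b3*c0 + (-1)*p0*p2*a0*a1*a2*b0*c3 + (-1)*p0*p2*a0^2*a3*b2*c1 + p0*p2*a0^2*a3*b1*c2 + (-1)*p0*p2*a0^2*a1*b3*c2 + p0*p2*a0^2*a1*b2*c3 + (-1)*p0*p1*a1*a2*a3*b2*c1 + p0*p1*a1*a2*a3*b1*c2 + p0*p1*a1*a2^2*b3*c1 + (-1)*p0*p1*a1*a2^2*b1*c3 + (-1)*p0*p1*a1^2*a2*b3*c2 + p0*p1*a1^2*a2*b2*c3 + (-1)*p0*p1*a0*a2*a3*b2*c0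 + p0*p1*a0*a2*a3*b0*c2 + p0*p1*a0*a2^2*b3*c0 + (-1)*p0*p1*a0*a2^2*b0*c3 + (-2)*p0*p1*a0*a1*a3*b1*c0 + (2)*p0*p1*a0*a1*a3*b0*c1 + (2)*p0*p1*a0*a1^2*b3*c0 + (-2)*p0*p1*a0*a1^2*b0*c3 + (-1)*p0*p1*a0^2*a2*b3*c2 + p0*p1*a0^2*a2*b2*c3 + (-2)*p0*p1*a0^2*a1*b3*c1 + (2)*p0*p1*a0^2*a1*b1*c3 + p0^2*a3^3*b1*c0 + (-1)*p0^2*a3^3*b0*c1 + p0^2*a2^2*a3*b1*c0 + (-1)*p0^2*a2^2*a3*b0*c1 + (-1)*p0^2*a1*a3^2*b3*c0 + p0^2*a1*a3^2*b0*c3 + (-1)*p0^2*a1*a2^2*b3*c0 + p0^2*a1*a2^2*b0*c3 + p0^2*a1^2*a3*b1*c0 + (-1)*p0^2*a1^2*a3*b0*c1 + (-1)*p0^2*a1^3*b3*c0 + p0^2*a1^3*b0*c3 + p0^2*a0*a3^2*b3*c1 + (-1)*p0^2*a0*a3^2*b1*c3 + p0^2*a0*a2*a3*b2*c1 + (-1)*p0^2*a0*a2*a3*b1*c2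 + p0^2*a0*a1*a2*b3*c2 + (-1)*p0^2*a0*a1*a2*b2*c3 + p0^2*a0*a1^2*b3*c1 + (-1)*p0^2*a0*a1^2*b1*c3) * h6 + (p3^3*a1*a2^2*b0 + p3^3*a1^3*b0 + (-1)*p3^3*a0*a2^2*b1 + (-1)*p3^3*a0*a1^2*b1 + (-1)*p3^3*a0^2*a1*b0 + p3^3*a0^3*b1 + (-2)*p2*p3^2*a1*a2*a3*b0 + (2)*p2*p3^2*a0*a2*a3*b1 + p2^2*p3*a1*a3^2*b0 + p2^2*p3*a1^3*b0 + (-1)*p2^2*p3*a0*a3^2*b1 + (-1)*p2^2*p3*a0*a1^2*b1 + (-1)*p2^2*p3*a0^2*a1*b0 + p2^2*p3*a0^3*b1 + (-1)*p1*p3^2*a2^2*a3*b0 + (-3)*p1*p3^2*a1^2*a3*b0 + p1*p3^2*a0*a2^2*b3 + (2)*p1*p3^2*a0*a1*a3*b1 + p1*p3^2*a0*a1^2*b3 + p1*p3^2*a0^2*a3*b0 + (-1)*p1*p3^2*a0^3*b3 + (2)*p1*p2*p3*a2*a3^2*b0 + (-2)*p1*p2*p3*a1^2*a2*b0 + (-2)*p1*p2*p3*a0*a2*a3*b3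 + (2)*p1*p2*p3*a0*a1*a2*b1 + (-1)*p1*p2^2*a3^3*b0 + (-1)*p1*p2^2*a1^2*a3*b0 + p1*p2^2*a0*a3^2*b3 + p1*p2^2*a0*a1^2*b3 + p1*p2^2*a0^2*a3*b0 + (-1)*p1*p2^2*a0^3*b3 + (3)*p1^2*p3*a1*a3^2*b0 + p1^2*p3*a1*a2^2*b0 + (-1)*p1^2*p3*a0*a3^2*b1 + (-1)*p1^2*p3*a0*a2^2*b1 + (-2)*p1^2*p3*a0*a1*a3*b3 + (-1)*p1^2*p3*a0^2*a1*b0 + p1^2*p3*a0^3*b1 + (2)*p1^2*p2*a1*a2*a3*b0 + (-2)*p1^2*p2*a0*a1*a2*b3 + (-1)*p1^3*a3^3*b0 + (-1)*p1^3*a2^2*a3*b0 + p1^3*a0*a3^2*b3 + p1^3*a0*a2^2*b3 + p1^3*a0^2*a3*b0 + (-1)*p1^3*a0^3*b3 + p0*p3^2*a2^2*a3*b1 + (-1)*p0*p3^2*a1*a2^2*b3 + p0*p3^2*a1^2*a3*b1 + (-1)*p0*p3^2*a1^3*b3 + (2)*p0*p3^2*a0*a1*a3*b0 + (-3)*p0*p3^2*a0^2*a3*b1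 + p0*p3^2*a0^2*a1*b3 + (-2)*p0*p2*p3*a2*a3^2*b1 + (2)*p0*p2*p3*a1*a2*a3*b3 + (2)*p0*p2*p3*a0*a1*a2*b0 + (-2)*p0*p2*p3*a0^2*a2*b1 + p0*p2^2*a3^3*b1 + (-1)*p0*p2^2*a1*a3^2*b3 + p0*p2^2*a1^2*a3*b1 + (-1)*p0*p2^2*a1^3*b3 + (-1)*p0*p2^2*a0^2*a3*b1 + p0*p2^2*a0^2*a1*b3 + (-2)*p0*p1*p3*a1*a3^2*b1 + (2)*p0*p1*p3*a1^2*a3*b3 + (-2)*p0*p1*p3*a0*a3^2*b0 + (2)*p0*p1*p3*a0*a1^2*b0 + (2)*p0*p1*p3*a0^2*a3*b3 + (-2)*p0*p1*p3*a0^2*a1*b1 + (-2)*p0*p1*p2*a1*a2*a3*b1 + (2)*p0*p1*p2*a1^2*a2*b3 + (-2)*p0*p1*p2*a0*a2*a3*b0 + (2)*p0*p1*p2*a0^2*a2*b3 + p0*p1^2*a3^3*b1 + p0*p1^2*a2^2*a3*b1 + (-1)*p0*p1^2*a1*a3^2*b3 + (-1)*p0*p1^2*a1*a2^2*b3 + (-2)*p0*p1^2*a0*a1*a3*b0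 + (-1)*p0*p1^2*a0^2*a3*b1 + (3)*p0*p1^2*a0^2*a1*b3 + (-1)*p0^2*p3*a1*a3^2*b0 + (-1)*p0^2*p3*a1*a2^2*b0 + (-1)*p0^2*p3*a1^3*b0 + (3)*p0^2*p3*a0*a3^2*b1 + p0^2*p3*a0*a2^2*b1 + (-2)*p0^2*p3*a0*a1*a3*b3 + p0^2*p3*a0*a1^2*b1 + (2)*p0^2*p2*a0*a2*a3*b1 + (-2)*p0^2*p2*a0*a1*a2*b3 + p0^2*p1*a3^3*b0 + p0^2*p1*a2^2*a3*b0 + p0^2*p1*a1^2*a3*b0 + (-1)*p0^2*p1*a0*a3^2*b3 + (-1)*p0^2*p1*a0*a2^2*b3 + (2)*p0^2*p1*a0*a1*a3*b1 + (-3)*p0^2*p1*a0*a1^2*b3 + (-1)*p0^3*a3^3*b1 + (-1)*p0^3*a2^2*a3*b1 + p0^3*a1*a3^2*b3 + p0^3*a1*a2^2*b3 + (-1)*p0^3*a1^2*a3*b1 + p0^3*a1^3*b3) * h9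

private lemma key2_3 (p0 p1 p2 p3 a0 a1 a2 a3 b0 b1 b2 b3 c0 c1 c2 c3 : ℝ)
    (h1 : -(p0*p0)+p1*p1+p2*p2+p3*p3 = 1)
    (h2 : -(a0*a0)+a1*a1+a2*a2+a3*a3 = 1)
    (h3 : -(a0*p0)+a1*p1+a2*p2+a3*p3 = 0)
    (h4 : -(b0*b0)+b1*b1+b2*b2+b3*b3 = -1)
    (h5 : -(a0*b0)+a1*b1+a2*b2+a3*b3 = 0)
    (h6 : -(b0*p0)+b1*p1+b2*p2+b3*p3 = 0)
    (h7 : -(a0*c0)+a1*c1+a2*c2+a3*c3 = 1)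
    (h8 : -(c0*p0)+c1*p1+c2*p2+c3*p3 = 0)
    (h9 : -(b0*c0)+b1*c1+b2*c2+b3*c3 = 0) :
    p2*a1*c0 + (-1)*p2*a0*c1 + (-1)*p1*a2*c0 + p1*a0*c2 + p0*a2*c1 + (-1)*p0*a1*c2 = ((-1)*p3*a2*b1*c0 + p3*a2*b0*c1 + p3*a1*b2*c0 + (-1)*p3*a1*b0*c2 + (-1)*p3*a0*b2*c1 + p3*a0*b1*c2 + p2*a3*b1*c0 + (-1)*p2*a3*b0*c1 + (-1)*p2*a1*b3*c0 + p2*a1*b0*c3 + p2*a0*b3*c1 + (-1)*p2*a0*b1*c3 + (-1)*p1*a3*b2*c0 + p1*a3*b0*c2 + p1*a2*b3*c0 + (-1)*p1*a2*b0*c3 + (-1)*p1*a0*b3*c2 + p1*a0*b2*c3 + p0*a3*b2*c1 + (-1)*p0*a3*b1*c2 + (-1)*p0*a2*b3*c1 + p0*a2*b1*c3 + p0*a1*b3*c2 + (-1)*p0*a1*b2*c3) * b3 := by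
  linear_combination ((-1)*p3*a2*b1*b3*c0 + p3*a2*b0*b3*c1 + p3*a1*b2*b3*c0 + (-1)*p3*a1*b0*b3*c2 + (-1)*p3*a0*b2*b3*c1 + p3*a0*b1*b3*c2 + p2*a3*b1*b3*c0 + (-1)*p2*a3*b0*b3*c1 + (-1)*p2*a1*c0 + (-1)*p2*a1*b3^2*c0 + p2*a1*b0*b3*c3 + p2*a0*c1 + p2*a0*b3^2*c1 + (-1)*p2*a0*b1*b3*c3 + (-1)*p1*a3*b2*b3*c0 + p1*a3*b0*b3*c2 + p1*a2*c0 + p1*a2*b3^2*c0 + (-1)*p1*a2*b0*b3*c3 + (-1)*p1*a0*c2 + (-1)*p1*a0*b3^2*c2 + p1*a0*b2*b3*c3 + p0*a3*b2*b3*c1 + (-1)*p0*a3*b1*b3*c2 + (-1)*p0*a2*c1 + (-1)*p0*a2*b3^2*c1 + p0*a2*b1*b3*c3 + p0*a1*c2 + p0*a1*b3^2*c2 + (-1)*p0*a1*b2*b3*c3) * h1 + (p2*p3^2*a2*b1*b2*c0 + (-1)*p2*p3^2*a2*b0*b2*c1 + (-1)*p2*p3^2*a1*c0 + (-1)*p2*p3^2*a1*b2^2*c0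 + p2*p3^2*a1*b0*b2*c2 + p2*p3^2*a0*c1 + p2*p3^2*a0*b2^2*c1 + (-1)*p2*p3^2*a0*b1*b2*c2 + (-1)*p2^2*p3*a3*b1*b2*c0 + p2^2*p3*a3*b0*b2*c1 + (-1)*p2^2*p3*a2*b1*b3*c0 + p2^2*p3*a2*b0*b3*c1 + (2)*p2^2*p3*a1*b2*b3*c0 + (-1)*p2^2*p3*a1*b0*b3*c2 + (-1)*p2^2*p3*a1*b0*b2*c3 + (-2)*p2^2*p3*a0*b2*b3*c1 + p2^2*p3*a0*b1*b3*c2 + p2^2*p3*a0*b1*b2*c3 + p2^3*a3*b1*b3*c0 + (-1)*p2^3*a3*b0*b3*c1 + (-1)*p2^3*a1*c0 + (-1)*p2^3*a1*b3^2*c0 + p2^3*a1*b0*b3*c3 + p2^3*a0*c1 + p2^3*a0*b3^2*c1 + (-1)*p2^3*a0*b1*b3*c3 + p1*p3^2*a2*c0 + p1*p3^2*a2*b1^2*c0 + (-1)*p1*p3^2*a2*b0*b1*c1 + (-1)*p1*p3^2*a1*b1*b2*c0 + p1*p3^2*a1*b0*b1*c2 + (-1)*p1*p3^2*a0*c2 +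 p1*p3^2*a0*b1*b2*c1 + (-1)*p1*p3^2*a0*b1^2*c2 + p1*p2*p3*a3*b2^2*c0 + (-1)*p1*p2*p3*a3*b1^2*c0 + (-1)*p1*p2*p3*a3*b0*b2*c2 + p1*p2*p3*a3*b0*b1*c1 + (-1)*p1*p2*p3*a2*b2*b3*c0 + p1*p2*p3*a2*b0*b2*c3 + p1*p2*p3*a1*b1*b3*c0 + (-1)*p1*p2*p3*a1*b0*b1*c3 + p1*p2*p3*a0*b2*b3*c2 + (-1)*p1*p2*p3*a0*b2^2*c3 + (-1)*p1*p2*p3*a0*b1*b3*c1 + p1*p2*p3*a0*b1^2*c3 + (-1)*p1*p2^2*a3*b2*b3*c0 + p1*p2^2*a3*b0*b3*c2 + p1*p2^2*a2*c0 + p1*p2^2*a2*b3^2*c0 + (-1)*p1*p2^2*a2*b0*b3*c3 + (-1)*p1*p2^2*a0*c2 + (-1)*p1*p2^2*a0*b3^2*c2 + p1*p2^2*a0*b2*b3*c3 + p1^2*p3*a3*b1*b2*c0 + (-1)*p1^2*p3*a3*b0*b1*c2 + (-2)*p1^2*p3*a2*b1*b3*c0 + p1^2*p3*a2*b0*b3*c1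 + p1^2*p3*a2*b0*b1*c3 + p1^2*p3*a1*b2*b3*c0 + (-1)*p1^2*p3*a1*b0*b3*c2 + (-1)*p1^2*p3*a0*b2*b3*c1 + (2)*p1^2*p3*a0*b1*b3*c2 + (-1)*p1^2*p3*a0*b1*b2*c3 + p1^2*p2*a3*b1*b3*c0 + (-1)*p1^2*p2*a3*b0*b3*c1 + (-1)*p1^2*p2*a1*c0 + (-1)*p1^2*p2*a1*b3^2*c0 + p1^2*p2*a1*b0*b3*c3 + p1^2*p2*a0*c1 + p1^2*p2*a0*b3^2*c1 + (-1)*p1^2*p2*a0*b1*b3*c3 + (-1)*p1^3*a3*b2*b3*c0 + p1^3*a3*b0*b3*c2 + p1^3*a2*c0 + p1^3*a2*b3^2*c0 + (-1)*p1^3*a2*b0*b3*c3 + (-1)*p1^3*a0*c2 + (-1)*p1^3*a0*b3^2*c2 + p1^3*a0*b2*b3*c3 + (-1)*p0*p3^2*a2*c1 + (-1)*p0*p3^2*a2*b0*b1*c0 + p0*p3^2*a2*b0^2*c1 + p0*p3^2*a1*c2 + p0*p3^2*a1*b0*b2*c0 + (-1)*p0*p3^2*a1*b0^2*c2 + (-1)*p0*p3^2*a0*b0*b2*c1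 + p0*p3^2*a0*b0*b1*c2 + (-1)*p0*p2*p3*a3*b2^2*c1 + p0*p2*p3*a3*b1*b2*c2 + p0*p2*p3*a3*b0*b1*c0 + (-1)*p0*p2*p3*a3*b0^2*c1 + p0*p2*p3*a2*b2*b3*c1 + (-1)*p0*p2*p3*a2*b1*b2*c3 + (-1)*p0*p2*p3*a1*b2*b3*c2 + p0*p2*p3*a1*b2^2*c3 + (-1)*p0*p2*p3*a1*b0*b3*c0 + p0*p2*p3*a1*b0^2*c3 + p0*p2*p3*a0*b0*b3*c1 + (-1)*p0*p2*p3*a0*b0*b1*c3 + p0*p2^2*a3*b2*b3*c1 + (-1)*p0*p2^2*a3*b1*b3*c2 + (-1)*p0*p2^2*a2*c1 + (-1)*p0*p2^2*a2*b3^2*c1 + p0*p2^2*a2*b1*b3*c3 + p0*p2^2*a1*c2 + p0*p2^2*a1*b3^2*c2 + (-1)*p0*p2^2*a1*b2*b3*c3 + (-1)*p0*p1*p3*a3*b1*b2*c1 + p0*p1*p3*a3*b1^2*c2 + (-1)*p0*p1*p3*a3*b0*b2*c0 + p0*p1*p3*a3*b0^2*c2 + p0*p1*p3*a2*b1*b3*c1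 + (-1)*p0*p1*p3*a2*b1^2*c3 + p0*p1*p3*a2*b0*b3*c0 + (-1)*p0*p1*p3*a2*b0^2*c3 + (-1)*p0*p1*p3*a1*b1*b3*c2 + p0*p1*p3*a1*b1*b2*c3 + (-1)*p0*p1*p3*a0*b0*b3*c2 + p0*p1*p3*a0*b0*b2*c3 + p0*p1^2*a3*b2*b3*c1 + (-1)*p0*p1^2*a3*b1*b3*c2 + (-1)*p0*p1^2*a2*c1 + (-1)*p0*p1^2*a2*b3^2*c1 + p0*p1^2*a2*b1*b3*c3 + p0*p1^2*a1*c2 + p0*p1^2*a1*b3^2*c2 + (-1)*p0*p1^2*a1*b2*b3*c3 + p0^2*p3*a3*b0*b2*c1 + (-1)*p0^2*p3*a3*b0*b1*c2 + p0^2*p3*a2*b1*b3*c0 + (-2)*p0^2*p3*a2*b0*b3*c1 + p0^2*p3*a2*b0*b1*c3 + (-1)*p0^2*p3*a1*b2*b3*c0 + (2)*p0^2*p3*a1*b0*b3*c2 + (-1)*p0^2*p3*a1*b0*b2*c3 + p0^2*p3*a0*b2*b3*c1 + (-1)*p0^2*p3*a0*b1*b3*c2 + (-1)*p0^2*p2*a3*b1*b3*c0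 + p0^2*p2*a3*b0*b3*c1 + p0^2*p2*a1*c0 + p0^2*p2*a1*b3^2*c0 + (-1)*p0^2*p2*a1*b0*b3*c3 + (-1)*p0^2*p2*a0*c1 + (-1)*p0^2*p2*a0*b3^2*c1 + p0^2*p2*a0*b1*b3*c3 + p0^2*p1*a3*b2*b3*c0 + (-1)*p0^2*p1*a3*b0*b3*c2 + (-1)*p0^2*p1*a2*c0 + (-1)*p0^2*p1*a2*b3^2*c0 + p0^2*p1*a2*b0*b3*c3 + p0^2*p1*a0*c2 + p0^2*p1*a0*b3^2*c2 + (-1)*p0^2*p1*a0*b2*b3*c3 + (-1)*p0^3*a3*b2*b3*c1 + p0^3*a3*b1*b3*c2 + p0^3*a2*c1 + p0^3*a2*b3^2*c1 + (-1)*p0^3*a2*b1*b3*c3 + (-1)*p0^3*a1*c2 + (-1)*p0^3*a1*b3^2*c2 + p0^3*a1*b2*b3*c3) * h2 + ((-1)*p2*p3*a2*a3*b1*b2*c0 + p2*p3*a2*a3*b0*b2*c1 + p2*p3*a2^2*b1*b3*c0 + (-1)*p2*p3*a2^2*b0*b3*c1 + p2*p3*a1*a3*c0 + p2*p3*a1*a3*b2^2*c0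 + (-1)*p2*p3*a1*a3*b0*b2*c2 + (-1)*p2*p3*a1*a2*b2*b3*c0 + p2*p3*a1*a2*b0*b3*c2 + (-1)*p2*p3*a0*a3*c1 + (-1)*p2*p3*a0*a3*b2^2*c1 + p2*p3*a0*a3*b1*b2*c2 + p2*p3*a0*a2*b2*b3*c1 + (-1)*p2*p3*a0*a2*b1*b3*c2 + p2^2*a3^2*b1*b2*c0 + (-1)*p2^2*a3^2*b0*b2*c1 + (-1)*p2^2*a2*a3*b1*b3*c0 + p2^2*a2*a3*b0*b3*c1 + (-1)*p2^2*a1*a3*b2*b3*c0 + p2^2*a1*a3*b0*b2*c3 + p2^2*a1*a2*c0 + p2^2*a1*a2*b3^2*c0 + (-1)*p2^2*a1*a2*b0*b3*c3 + p2^2*a0*a3*b2*b3*c1 + (-1)*p2^2*a0*a3*b1*b2*c3 + (-1)*p2^2*a0*a2*c1 + (-1)*p2^2*a0*a2*b3^2*c1 + p2^2*a0*a2*b1*b3*c3 + (-1)*p1*p3*a2*a3*c0 + (-1)*p1*p3*a2*a3*b1^2*c0 + p1*p3*a2*a3*b0*b1*c1 + p1*p3*a1*a3*b1*b2*c0 +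 (-1)*p1*p3*a1*a3*b0*b1*c2 + p1*p3*a1*a2*b1*b3*c0 + (-1)*p1*p3*a1*a2*b0*b3*c1 + (-1)*p1*p3*a1^2*b2*b3*c0 + p1*p3*a1^2*b0*b3*c2 + p1*p3*a0*a3*c2 + (-1)*p1*p3*a0*a3*b1*b2*c1 + p1*p3*a0*a3*b1^2*c2 + p1*p3*a0*a1*b2*b3*c1 + (-1)*p1*p3*a0*a1*b1*b3*c2 + (-1)*p1*p2*a3^2*b2^2*c0 + p1*p2*a3^2*b1^2*c0 + p1*p2*a3^2*b0*b2*c2 + (-1)*p1*p2*a3^2*b0*b1*c1 + (2)*p1*p2*a2*a3*b2*b3*c0 + (-1)*p1*p2*a2*a3*b0*b3*c2 + (-1)*p1*p2*a2*a3*b0*b2*c3 + (-1)*p1*p2*a2^2*c0 + (-1)*p1*p2*a2^2*b3^2*c0 + p1*p2*a2^2*b0*b3*c3 + (-2)*p1*p2*a1*a3*b1*b3*c0 + p1*p2*a1*a3*b0*b3*c1 + p1*p2*a1*a3*b0*b1*c3 + p1*p2*a1^2*c0 + p1*p2*a1^2*b3^2*c0 + (-1)*p1*p2*a1^2*b0*b3*c3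 + (-1)*p1*p2*a0*a3*b2*b3*c2 + p1*p2*a0*a3*b2^2*c3 + p1*p2*a0*a3*b1*b3*c1 + (-1)*p1*p2*a0*a3*b1^2*c3 + p1*p2*a0*a2*c2 + p1*p2*a0*a2*b3^2*c2 + (-1)*p1*p2*a0*a2*b2*b3*c3 + (-1)*p1*p2*a0*a1*c1 + (-1)*p1*p2*a0*a1*b3^2*c1 + p1*p2*a0*a1*b1*b3*c3 + (-1)*p1^2*a3^2*b1*b2*c0 + p1^2*a3^2*b0*b1*c2 + p1^2*a2*a3*b1*b3*c0 + (-1)*p1^2*a2*a3*b0*b1*c3 + p1^2*a1*a3*b2*b3*c0 + (-1)*p1^2*a1*a3*b0*b3*c2 + (-1)*p1^2*a1*a2*c0 + (-1)*p1^2*a1*a2*b3^2*c0 + p1^2*a1*a2*b0*b3*c3 + (-1)*p1^2*a0*a3*b1*b3*c2 + p1^2*a0*a3*b1*b2*c3 + p1^2*a0*a1*c2 + p1^2*a0*a1*b3^2*c2 + (-1)*p1^2*a0*a1*b2*b3*c3 + p0*p3*a2*a3*c1 + p0*p3*a2*a3*b0*b1*c0 + (-1)*p0*p3*a2*a3*b0^2*c1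 + (-1)*p0*p3*a1*a3*c2 + (-1)*p0*p3*a1*a3*b0*b2*c0 + p0*p3*a1*a3*b0^2*c2 + p0*p3*a0*a3*b0*b2*c1 + (-1)*p0*p3*a0*a3*b0*b1*c2 + (-1)*p0*p3*a0*a2*b1*b3*c0 + p0*p3*a0*a2*b0*b3*c1 + p0*p3*a0*a1*b2*b3*c0 + (-1)*p0*p3*a0*a1*b0*b3*c2 + (-1)*p0*p3*a0^2*b2*b3*c1 + p0*p3*a0^2*b1*b3*c2 + p0*p2*a3^2*b2^2*c1 + (-1)*p0*p2*a3^2*b1*b2*c2 + (-1)*p0*p2*a3^2*b0*b1*c0 + p0*p2*a3^2*b0^2*c1 + (-2)*p0*p2*a2*a3*b2*b3*c1 + p0*p2*a2*a3*b1*b3*c2 + p0*p2*a2*a3*b1*b2*c3 + p0*p2*a2^2*c1 + p0*p2*a2^2*b3^2*c1 + (-1)*p0*p2*a2^2*b1*b3*c3 + p0*p2*a1*a3*b2*b3*c2 + (-1)*p0*p2*a1*a3*b2^2*c3 + p0*p2*a1*a3*b0*b3*c0 + (-1)*p0*p2*a1*a3*b0^2*c3 + (-1)*p0*p2*a1*a2*c2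 + (-1)*p0*p2*a1*a2*b3^2*c2 + p0*p2*a1*a2*b2*b3*c3 + p0*p2*a0*a3*b1*b3*c0 + (-2)*p0*p2*a0*a3*b0*b3*c1 + p0*p2*a0*a3*b0*b1*c3 + (-1)*p0*p2*a0*a1*c0 + (-1)*p0*p2*a0*a1*b3^2*c0 + p0*p2*a0*a1*b0*b3*c3 + p0*p2*a0^2*c1 + p0*p2*a0^2*b3^2*c1 + (-1)*p0*p2*a0^2*b1*b3*c3 + p0*p1*a3^2*b1*b2*c1 + (-1)*p0*p1*a3^2*b1^2*c2 + p0*p1*a3^2*b0*b2*c0 + (-1)*p0*p1*a3^2*b0^2*c2 + (-1)*p0*p1*a2*a3*b1*b3*c1 + p0*p1*a2*a3*b1^2*c3 + (-1)*p0*p1*a2*a3*b0*b3*c0 + p0*p1*a2*a3*b0^2*c3 + (-1)*p0*p1*a1*a3*b2*b3*c1 + (2)*p0*p1*a1*a3*b1*b3*c2 + (-1)*p0*p1*a1*a3*b1*b2*c3 + p0*p1*a1*a2*c1 + p0*p1*a1*a2*b3^2*c1 + (-1)*p0*p1*a1*a2*b1*b3*c3 + (-1)*p0*p1*a1^2*c2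 + (-1)*p0*p1*a1^2*b3^2*c2 + p0*p1*a1^2*b2*b3*c3 + (-1)*p0*p1*a0*a3*b2*b3*c0 + (2)*p0*p1*a0*a3*b0*b3*c2 + (-1)*p0*p1*a0*a3*b0*b2*c3 + p0*p1*a0*a2*c0 + p0*p1*a0*a2*b3^2*c0 + (-1)*p0*p1*a0*a2*b0*b3*c3 + (-1)*p0*p1*a0^2*c2 + (-1)*p0*p1*a0^2*b3^2*c2 + p0*p1*a0^2*b2*b3*c3 + (-1)*p0^2*a3^2*b0*b2*c1 + p0^2*a3^2*b0*b1*c2 + p0^2*a2*a3*b0*b3*c1 + (-1)*p0^2*a2*a3*b0*b1*c3 + (-1)*p0^2*a1*a3*b0*b3*c2 + p0^2*a1*a3*b0*b2*c3 + p0^2*a0*a3*b2*b3*c1 + (-1)*p0^2*a0*a3*b1*b3*c2 + (-1)*p0^2*a0*a2*c1 + (-1)*p0^2*a0*a2*b3^2*c1 + p0^2*a0*a2*b1*b3*c3 + p0^2*a0*a1*c2 + p0^2*a0*a1*b3^2*c2 + (-1)*p0^2*a0*a1*b2*b3*c3) * h3 + (p2*p3^2*a1*a2^2*c0 + p2*p3^2*a1^3*c0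 + (-1)*p2*p3^2*a0*a2^2*c1 + (-1)*p2*p3^2*a0*a1^2*c1 + (-1)*p2*p3^2*a0^2*a1*c0 + p2*p3^2*a0^3*c1 + (-2)*p2^2*p3*a1*a2*a3*c0 + (2)*p2^2*p3*a0*a2*a3*c1 + p2^3*a1*a3^2*c0 + p2^3*a1^3*c0 + (-1)*p2^3*a0*a3^2*c1 + (-1)*p2^3*a0*a1^2*c1 + (-1)*p2^3*a0^2*a1*c0 + p2^3*a0^3*c1 + (-1)*p1*p3^2*a2^3*c0 + (-1)*p1*p3^2*a1^2*a2*c0 + p1*p3^2*a0*a2^2*c2 + p1*p3^2*a0*a1^2*c2 + p1*p3^2*a0^2*a2*c0 + (-1)*p1*p3^2*a0^3*c2 + (2)*p1*p2*p3*a2^2*a3*c0 + (-2)*p1*p2*p3*a1^2*a3*c0 + (-2)*p1*p2*p3*a0*a2*a3*c2 + (2)*p1*p2*p3*a0*a1*a3*c1 + (-1)*p1*p2^2*a2*a3^2*c0 + (-3)*p1*p2^2*a1^2*a2*c0 + p1*p2^2*a0*a3^2*c2 + (2)*p1*p2^2*a0*a1*a2*c1 + p1*p2^2*a0*a1^2*c2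 + p1*p2^2*a0^2*a2*c0 + (-1)*p1*p2^2*a0^3*c2 + (2)*p1^2*p3*a1*a2*a3*c0 + (-2)*p1^2*p3*a0*a1*a3*c2 + p1^2*p2*a1*a3^2*c0 + (3)*p1^2*p2*a1*a2^2*c0 + (-1)*p1^2*p2*a0*a3^2*c1 + (-1)*p1^2*p2*a0*a2^2*c1 + (-2)*p1^2*p2*a0*a1*a2*c2 + (-1)*p1^2*p2*a0^2*a1*c0 + p1^2*p2*a0^3*c1 + (-1)*p1^3*a2*a3^2*c0 + (-1)*p1^3*a2^3*c0 + p1^3*a0*a3^2*c2 + p1^3*a0*a2^2*c2 + p1^3*a0^2*a2*c0 + (-1)*p1^3*a0^3*c2 + p0*p3^2*a2^3*c1 + (-1)*p0*p3^2*a1*a2^2*c2 + p0*p3^2*a1^2*a2*c1 + (-1)*p0*p3^2*a1^3*c2 + (-1)*p0*p3^2*a0^2*a2*c1 + p0*p3^2*a0^2*a1*c2 + (-2)*p0*p2*p3*a2^2*a3*c1 + (2)*p0*p2*p3*a1*a2*a3*c2 + (2)*p0*p2*p3*a0*a1*a3*c0 + (-2)*p0*p2*p3*a0^2*a3*c1 +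 p0*p2^2*a2*a3^2*c1 + (-1)*p0*p2^2*a1*a3^2*c2 + p0*p2^2*a1^2*a2*c1 + (-1)*p0*p2^2*a1^3*c2 + (2)*p0*p2^2*a0*a1*a2*c0 + (-3)*p0*p2^2*a0^2*a2*c1 + p0*p2^2*a0^2*a1*c2 + (-2)*p0*p1*p3*a1*a2*a3*c1 + (2)*p0*p1*p3*a1^2*a3*c2 + (-2)*p0*p1*p3*a0*a2*a3*c0 + (2)*p0*p1*p3*a0^2*a3*c2 + (-2)*p0*p1*p2*a1*a2^2*c1 + (2)*p0*p1*p2*a1^2*a2*c2 + (-2)*p0*p1*p2*a0*a2^2*c0 + (2)*p0*p1*p2*a0*a1^2*c0 + (2)*p0*p1*p2*a0^2*a2*c2 + (-2)*p0*p1*p2*a0^2*a1*c1 + p0*p1^2*a2*a3^2*c1 + p0*p1^2*a2^3*c1 + (-1)*p0*p1^2*a1*a3^2*c2 + (-1)*p0*p1^2*a1*a2^2*c2 + (-2)*p0*p1^2*a0*a1*a2*c0 + (-1)*p0*p1^2*a0^2*a2*c1 + (3)*p0*p1^2*a0^2*a1*c2 + (2)*p0^2*p3*a0*a2*a3*c1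 + (-2)*p0^2*p3*a0*a1*a3*c2 + (-1)*p0^2*p2*a1*a3^2*c0 + (-1)*p0^2*p2*a1*a2^2*c0 + (-1)*p0^2*p2*a1^3*c0 + p0^2*p2*a0*a3^2*c1 + (3)*p0^2*p2*a0*a2^2*c1 + (-2)*p0^2*p2*a0*a1*a2*c2 + p0^2*p2*a0*a1^2*c1 + p0^2*p1*a2*a3^2*c0 + p0^2*p1*a2^3*c0 + p0^2*p1*a1^2*a2*c0 + (-1)*p0^2*p1*a0*a3^2*c2 + (-1)*p0^2*p1*a0*a2^2*c2 + (2)*p0^2*p1*a0*a1*a2*c1 + (-3)*p0^2*p1*a0*a1^2*c2 + (-1)*p0^3*a2*a3^2*c1 + (-1)*p0^3*a2^3*c1 + p0^3*a1*a3^2*c2 + p0^3*a1*a2^2*c2 + (-1)*p0^3*a1^2*a2*c1 + p0^3*a1^3*c2) * h4 + ((-1)*p2*p3^2*a2^2*b1*c0 + p2*p3^2*a2^2*b0*c1 + (-1)*p2*p3^2*a1^2*b1*c0 + p2*p3^2*a1^2*b0*c1 + p2*p3^2*a0^2*b1*c0 + (-1)*p2*p3^2*a0^2*b0*c1 + (2)*p2^2*p3*a2*a3*b1*c0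 + (-2)*p2^2*p3*a2*a3*b0*c1 + (-1)*p2^3*a3^2*b1*c0 + p2^3*a3^2*b0*c1 + (-1)*p2^3*a1^2*b1*c0 + p2^3*a1^2*b0*c1 + p2^3*a0^2*b1*c0 + (-1)*p2^3*a0^2*b0*c1 + p1*p3^2*a2^2*b2*c0 + (-1)*p1*p3^2*a2^2*b0*c2 + p1*p3^2*a1^2*b2*c0 + (-1)*p1*p3^2*a1^2*b0*c2 + (-1)*p1*p3^2*a0^2*b2*c0 + p1*p3^2*a0^2*b0*c2 + (-2)*p1*p2*p3*a2*a3*b2*c0 + (2)*p1*p2*p3*a2*a3*b0*c2 + (2)*p1*p2*p3*a1*a3*b1*c0 + (-2)*p1*p2*p3*a1*a3*b0*c1 + p1*p2^2*a3^2*b2*c0 + (-1)*p1*p2^2*a3^2*b0*c2 + (2)*p1*p2^2*a1*a2*b1*c0 + (-2)*p1*p2^2*a1*a2*b0*c1 + p1*p2^2*a1^2*b2*c0 + (-1)*p1*p2^2*a1^2*b0*c2 + (-1)*p1*p2^2*a0^2*b2*c0 + p1*p2^2*a0^2*b0*c2 + (-2)*p1^2*p3*a1*a3*b2*c0 + (2)*p1^2*p3*a1*a3*b0*c2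 + (-1)*p1^2*p2*a3^2*b1*c0 + p1^2*p2*a3^2*b0*c1 + (-1)*p1^2*p2*a2^2*b1*c0 + p1^2*p2*a2^2*b0*c1 + (-2)*p1^2*p2*a1*a2*b2*c0 + (2)*p1^2*p2*a1*a2*b0*c2 + p1^2*p2*a0^2*b1*c0 + (-1)*p1^2*p2*a0^2*b0*c1 + p1^3*a3^2*b2*c0 + (-1)*p1^3*a3^2*b0*c2 + p1^3*a2^2*b2*c0 + (-1)*p1^3*a2^2*b0*c2 + (-1)*p1^3*a0^2*b2*c0 + p1^3*a0^2*b0*c2 + (-1)*p0*p3^2*a2^2*b2*c1 + p0*p3^2*a2^2*b1*c2 + (-1)*p0*p3^2*a1^2*b2*c1 + p0*p3^2*a1^2*b1*c2 + p0*p3^2*a0^2*b2*c1 + (-1)*p0*p3^2*a0^2*b1*c2 + (2)*p0*p2*p3*a2*a3*b2*c1 + (-2)*p0*p2*p3*a2*a3*b1*c2 + (-2)*p0*p2*p3*a0*a3*b1*c0 + (2)*p0*p2*p3*a0*a3*b0*c1 + (-1)*p0*p2^2*a3^2*b2*c1 + p0*p2^2*a3^2*b1*c2 + (-1)*p0*p2^2*a1^2*b2*c1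 + p0*p2^2*a1^2*b1*c2 + (-2)*p0*p2^2*a0*a2*b1*c0 + (2)*p0*p2^2*a0*a2*b0*c1 + p0*p2^2*a0^2*b2*c1 + (-1)*p0*p2^2*a0^2*b1*c2 + (2)*p0*p1*p3*a1*a3*b2*c1 + (-2)*p0*p1*p3*a1*a3*b1*c2 + (2)*p0*p1*p3*a0*a3*b2*c0 + (-2)*p0*p1*p3*a0*a3*b0*c2 + (2)*p0*p1*p2*a1*a2*b2*c1 + (-2)*p0*p1*p2*a1*a2*b1*c2 + (2)*p0*p1*p2*a0*a2*b2*c0 + (-2)*p0*p1*p2*a0*a2*b0*c2 + (-2)*p0*p1*p2*a0*a1*b1*c0 + (2)*p0*p1*p2*a0*a1*b0*c1 + (-1)*p0*p1^2*a3^2*b2*c1 + p0*p1^2*a3^2*b1*c2 + (-1)*p0*p1^2*a2^2*b2*c1 + p0*p1^2*a2^2*b1*c2 + (2)*p0*p1^2*a0*a1*b2*c0 + (-2)*p0*p1^2*a0*a1*b0*c2 + p0*p1^2*a0^2*b2*c1 + (-1)*p0*p1^2*a0^2*b1*c2 + (-2)*p0^2*p3*a0*a3*b2*c1 + (2)*p0^2*p3*a0*a3*b1*c2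 + p0^2*p2*a3^2*b1*c0 + (-1)*p0^2*p2*a3^2*b0*c1 + p0^2*p2*a2^2*b1*c0 + (-1)*p0^2*p2*a2^2*b0*c1 + p0^2*p2*a1^2*b1*c0 + (-1)*p0^2*p2*a1^2*b0*c1 + (-2)*p0^2*p2*a0*a2*b2*c1 + (2)*p0^2*p2*a0*a2*b1*c2 + (-1)*p0^2*p1*a3^2*b2*c0 + p0^2*p1*a3^2*b0*c2 + (-1)*p0^2*p1*a2^2*b2*c0 + p0^2*p1*a2^2*b0*c2 + (-1)*p0^2*p1*a1^2*b2*c0 + p0^2*p1*a1^2*b0*c2 + (-2)*p0^2*p1*a0*a1*b2*c1 + (2)*p0^2*p1*a0*a1*b1*c2 + p0^3*a3^2*b2*c1 + (-1)*p0^3*a3^2*b1*c2 + p0^3*a2^2*b2*c1 + (-1)*p0^3*a2^2*b1*c2 + p0^3*a1^2*b2*c1 + (-1)*p0^3*a1^2*b1*c2) * h5 + (p3^2*a2*b1*c0 + (-1)*p3^2*a2*b0*c1 + (-1)*p3^2*a1*b2*c0 + p3^2*a1*b0*c2 + p3^2*a0*b2*c1 + (-1)*p3^2*a0*b1*c2 +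 (-1)*p2*p3*a3*b1*c0 + p2*p3*a3*b0*c1 + p2*p3*a1*b3*c0 + (-1)*p2*p3*a1*b0*c3 + p2*p3*a1*a2*a3*b2*c0 + (-1)*p2*p3*a1*a2*a3*b0*c2 + (-1)*p2*p3*a1*a2^2*b3*c0 + p2*p3*a1*a2^2*b0*c3 + p2*p3*a1^2*a3*b1*c0 + (-1)*p2*p3*a1^2*a3*b0*c1 + (-1)*p2*p3*a1^3*b3*c0 + p2*p3*a1^3*b0*c3 + (-1)*p2*p3*a0*b3*c1 + p2*p3*a0*b1*c3 + (-1)*p2*p3*a0*a2*a3*b2*c1 + p2*p3*a0*a2*a3*b1*c2 + p2*p3*a0*a2^2*b3*c1 + (-1)*p2*p3*a0*a2^2*b1*c3 + p2*p3*a0*a1^2*b3*c1 + (-1)*p2*p3*a0*a1^2*b1*c3 + (-1)*p2*p3*a0^2*a3*b1*c0 + p2*p3*a0^2*a3*b0*c1 + p2*p3*a0^2*a1*b3*c0 + (-1)*p2*p3*a0^2*a1*b0*c3 + (-1)*p2*p3*a0^3*b3*c1 + p2*p3*a0^3*b1*c3 + (-1)*p2^2*a1*a3^2*b2*c0 + p2^2*a1*a3^2*b0*c2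 + p2^2*a1*a2*a3*b3*c0 + (-1)*p2^2*a1*a2*a3*b0*c3 + p2^2*a1^2*a2*b1*c0 + (-1)*p2^2*a1^2*a2*b0*c1 + (-1)*p2^2*a1^3*b2*c0 + p2^2*a1^3*b0*c2 + p2^2*a0*a3^2*b2*c1 + (-1)*p2^2*a0*a3^2*b1*c2 + (-1)*p2^2*a0*a2*a3*b3*c1 + p2^2*a0*a2*a3*b1*c3 + p2^2*a0*a1^2*b2*c1 + (-1)*p2^2*a0*a1^2*b1*c2 + (-1)*p2^2*a0^2*a2*b1*c0 + p2^2*a0^2*a2*b0*c1 + p2^2*a0^2*a1*b2*c0 + (-1)*p2^2*a0^2*a1*b0*c2 + (-1)*p2^2*a0^3*b2*c1 + p2^2*a0^3*b1*c2 + p1*p3*a3*b2*c0 + (-1)*p1*p3*a3*b0*c2 + (-1)*p1*p3*a2*b3*c0 + p1*p3*a2*b0*c3 + (-1)*p1*p3*a2^2*a3*b2*c0 + p1*p3*a2^2*a3*b0*c2 + p1*p3*a2^3*b3*c0 + (-1)*p1*p3*a2^3*b0*c3 + (-1)*p1*p3*a1*a2*a3*b1*c0 + p1*p3*a1*a2*a3*b0*c1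 + p1*p3*a1^2*a2*b3*c0 + (-1)*p1*p3*a1^2*a2*b0*c3 + p1*p3*a0*b3*c2 + (-1)*p1*p3*a0*b2*c3 + (-1)*p1*p3*a0*a2^2*b3*c2 + p1*p3*a0*a2^2*b2*c3 + (-1)*p1*p3*a0*a1*a3*b2*c1 + p1*p3*a0*a1*a3*b1*c2 + (-1)*p1*p3*a0*a1^2*b3*c2 + p1*p3*a0*a1^2*b2*c3 + p1*p3*a0^2*a3*b2*c0 + (-1)*p1*p3*a0^2*a3*b0*c2 + (-1)*p1*p3*a0^2*a2*b3*c0 + p1*p3*a0^2*a2*b0*c3 + p1*p3*a0^3*b3*c2 + (-1)*p1*p3*a0^3*b2*c3 + p1*p2*a2*a3^2*b2*c0 + (-1)*p1*p2*a2*a3^2*b0*c2 + (-1)*p1*p2*a2^2*a3*b3*c0 + p1*p2*a2^2*a3*b0*c3 + (-1)*p1*p2*a1*a3^2*b1*c0 + p1*p2*a1*a3^2*b0*c1 + (-2)*p1*p2*a1*a2^2*b1*c0 + (2)*p1*p2*a1*a2^2*b0*c1 + p1*p2*a1^2*a3*b3*c0 + (-1)*p1*p2*a1^2*a3*b0*c3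 + (2)*p1*p2*a1^2*a2*b2*c0 + (-2)*p1*p2*a1^2*a2*b0*c2 + p1*p2*a0*a2*a3*b3*c2 + (-1)*p1*p2*a0*a2*a3*b2*c3 + (-1)*p1*p2*a0*a1*a3*b3*c1 + p1*p2*a0*a1*a3*b1*c3 + (-2)*p1*p2*a0*a1*a2*b2*c1 + (2)*p1*p2*a0*a1*a2*b1*c2 + p1^2*a2*a3^2*b1*c0 + (-1)*p1^2*a2*a3^2*b0*c1 + p1^2*a2^3*b1*c0 + (-1)*p1^2*a2^3*b0*c1 + (-1)*p1^2*a1*a2*a3*b3*c0 + p1^2*a1*a2*a3*b0*c3 + (-1)*p1^2*a1*a2^2*b2*c0 + p1^2*a1*a2^2*b0*c2 + p1^2*a0*a3^2*b2*c1 + (-1)*p1^2*a0*a3^2*b1*c2 + p1^2*a0*a2^2*b2*c1 + (-1)*p1^2*a0*a2^2*b1*c2 + p1^2*a0*a1*a3*b3*c2 + (-1)*p1^2*a0*a1*a3*b2*c3 + (-1)*p1^2*a0^2*a2*b1*c0 + p1^2*a0^2*a2*b0*c1 + p1^2*a0^2*a1*b2*c0 + (-1)*p1^2*a0^2*a1*b0*c2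 + (-1)*p1^2*a0^3*b2*c1 + p1^2*a0^3*b1*c2 + (-1)*p0*p3*a3*b2*c1 + p0*p3*a3*b1*c2 + p0*p3*a2*b3*c1 + (-1)*p0*p3*a2*b1*c3 + p0*p3*a2^2*a3*b2*c1 + (-1)*p0*p3*a2^2*a3*b1*c2 + (-1)*p0*p3*a2^3*b3*c1 + p0*p3*a2^3*b1*c3 + (-1)*p0*p3*a1*b3*c2 + p0*p3*a1*b2*c3 + p0*p3*a1*a2^2*b3*c2 + (-1)*p0*p3*a1*a2^2*b2*c3 + p0*p3*a1^2*a3*b2*c1 + (-1)*p0*p3*a1^2*a3*b1*c2 + (-1)*p0*p3*a1^2*a2*b3*c1 + p0*p3*a1^2*a2*b1*c3 + p0*p3*a1^3*b3*c2 + (-1)*p0*p3*a1^3*b2*c3 + p0*p3*a0*a2*a3*b1*c0 + (-1)*p0*p3*a0*a2*a3*b0*c1 + (-1)*p0*p3*a0*a1*a3*b2*c0 + p0*p3*a0*a1*a3*b0*c2 + p0*p3*a0^2*a2*b3*c1 + (-1)*p0*p3*a0^2*a2*b1*c3 + (-1)*p0*p3*a0^2*a1*b3*c2 + p0*p3*a0^2*a1*b2*c3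 + (-1)*p0*p2*a2*a3^2*b2*c1 + p0*p2*a2*a3^2*b1*c2 + p0*p2*a2^2*a3*b3*c1 + (-1)*p0*p2*a2^2*a3*b1*c3 + (-1)*p0*p2*a1*a2*a3*b3*c2 + p0*p2*a1*a2*a3*b2*c3 + p0*p2*a0*a3^2*b1*c0 + (-1)*p0*p2*a0*a3^2*b0*c1 + (2)*p0*p2*a0*a2^2*b1*c0 + (-2)*p0*p2*a0*a2^2*b0*c1 + (-1)*p0*p2*a0*a1*a3*b3*c0 + p0*p2*a0*a1*a3*b0*c3 + (-2)*p0*p2*a0*a1*a2*b2*c0 + (2)*p0*p2*a0*a1*a2*b0*c2 + p0*p2*a0^2*a3*b3*c1 + (-1)*p0*p2*a0^2*a3*b1*c3 + (2)*p0*p2*a0^2*a2*b2*c1 + (-2)*p0*p2*a0^2*a2*b1*c2 + (-1)*p0*p1*a1*a3^2*b2*c1 + p0*p1*a1*a3^2*b1*c2 + p0*p1*a1*a2*a3*b3*c1 + (-1)*p0*p1*a1*a2*a3*b1*c3 + (-1)*p0*p1*a1^2*a3*b3*c2 + p0*p1*a1^2*a3*b2*c3 + (-1)*p0*p1*a0*a3^2*b2*c0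 + p0*p1*a0*a3^2*b0*c2 + p0*p1*a0*a2*a3*b3*c0 + (-1)*p0*p1*a0*a2*a3*b0*c3 + (2)*p0*p1*a0*a1*a2*b1*c0 + (-2)*p0*p1*a0*a1*a2*b0*c1 + (-2)*p0*p1*a0*a1^2*b2*c0 + (2)*p0*p1*a0*a1^2*b0*c2 + (-1)*p0*p1*a0^2*a3*b3*c2 + p0*p1*a0^2*a3*b2*c3 + (2)*p0*p1*a0^2*a1*b2*c1 + (-2)*p0*p1*a0^2*a1*b1*c2 + (-1)*p0^2*a2*a3^2*b1*c0 + p0^2*a2*a3^2*b0*c1 + (-1)*p0^2*a2^3*b1*c0 + p0^2*a2^3*b0*c1 + p0^2*a1*a3^2*b2*c0 + (-1)*p0^2*a1*a3^2*b0*c2 + p0^2*a1*a2^2*b2*c0 + (-1)*p0^2*a1*a2^2*b0*c2 + (-1)*p0^2*a1^2*a2*b1*c0 + p0^2*a1^2*a2*b0*c1 + p0^2*a1^3*b2*c0 + (-1)*p0^2*a1^3*b0*c2 + (-1)*p0^2*a0*a2*a3*b3*c1 + p0^2*a0*a2*a3*b1*c3 + (-1)*p0^2*a0*a2^2*b2*c1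 + p0^2*a0*a2^2*b1*c2 + p0^2*a0*a1*a3*b3*c2 + (-1)*p0^2*a0*a1*a3*b2*c3 + (-1)*p0^2*a0*a1^2*b2*c1 + p0^2*a0*a1^2*b1*c2) * h6 + ((-1)*p2*p3^2*a1*a2^2*b0 + (-1)*p2*p3^2*a1^3*b0 + p2*p3^2*a0*a2^2*b1 + p2*p3^2*a0*a1^2*b1 + p2*p3^2*a0^2*a1*b0 + (-1)*p2*p3^2*a0^3*b1 + (2)*p2^2*p3*a1*a2*a3*b0 + (-2)*p2^2*p3*a0*a2*a3*b1 + (-1)*p2^3*a1*a3^2*b0 + (-1)*p2^3*a1^3*b0 + p2^3*a0*a3^2*b1 + p2^3*a0*a1^2*b1 + p2^3*a0^2*a1*b0 + (-1)*p2^3*a0^3*b1 + p1*p3^2*a2^3*b0 + p1*p3^2*a1^2*a2*b0 + (-1)*p1*p3^2*a0*a2^2*b2 + (-1)*p1*p3^2*a0*a1^2*b2 + (-1)*p1*p3^2*a0^2*a2*b0 + p1*p3^2*a0^3*b2 + (-2)*p1*p2*p3*a2^2*a3*b0 + (2)*p1*p2*p3*a1^2*a3*b0 + (2)*p1*p2*p3*a0*a2*a3*b2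 + (-2)*p1*p2*p3*a0*a1*a3*b1 + p1*p2^2*a2*a3^2*b0 + (3)*p1*p2^2*a1^2*a2*b0 + (-1)*p1*p2^2*a0*a3^2*b2 + (-2)*p1*p2^2*a0*a1*a2*b1 + (-1)*p1*p2^2*a0*a1^2*b2 + (-1)*p1*p2^2*a0^2*a2*b0 + p1*p2^2*a0^3*b2 + (-2)*p1^2*p3*a1*a2*a3*b0 + (2)*p1^2*p3*a0*a1*a3*b2 + (-1)*p1^2*p2*a1*a3^2*b0 + (-3)*p1^2*p2*a1*a2^2*b0 + p1^2*p2*a0*a3^2*b1 + p1^2*p2*a0*a2^2*b1 + (2)*p1^2*p2*a0*a1*a2*b2 + p1^2*p2*a0^2*a1*b0 + (-1)*p1^2*p2*a0^3*b1 + p1^3*a2*a3^2*b0 + p1^3*a2^3*b0 + (-1)*p1^3*a0*a3^2*b2 + (-1)*p1^3*a0*a2^2*b2 + (-1)*p1^3*a0^2*a2*b0 + p1^3*a0^3*b2 + (-1)*p0*p3^2*a2^3*b1 + p0*p3^2*a1*a2^2*b2 + (-1)*p0*p3^2*a1^2*a2*b1 + p0*p3^2*a1^3*b2 + p0*p3^2*a0^2*a2*b1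 + (-1)*p0*p3^2*a0^2*a1*b2 + (2)*p0*p2*p3*a2^2*a3*b1 + (-2)*p0*p2*p3*a1*a2*a3*b2 + (-2)*p0*p2*p3*a0*a1*a3*b0 + (2)*p0*p2*p3*a0^2*a3*b1 + (-1)*p0*p2^2*a2*a3^2*b1 + p0*p2^2*a1*a3^2*b2 + (-1)*p0*p2^2*a1^2*a2*b1 + p0*p2^2*a1^3*b2 + (-2)*p0*p2^2*a0*a1*a2*b0 + (3)*p0*p2^2*a0^2*a2*b1 + (-1)*p0*p2^2*a0^2*a1*b2 + (2)*p0*p1*p3*a1*a2*a3*b1 + (-2)*p0*p1*p3*a1^2*a3*b2 + (2)*p0*p1*p3*a0*a2*a3*b0 + (-2)*p0*p1*p3*a0^2*a3*b2 + (2)*p0*p1*p2*a1*a2^2*b1 + (-2)*p0*p1*p2*a1^2*a2*b2 + (2)*p0*p1*p2*a0*a2^2*b0 + (-2)*p0*p1*p2*a0*a1^2*b0 + (-2)*p0*p1*p2*a0^2*a2*b2 + (2)*p0*p1*p2*a0^2*a1*b1 + (-1)*p0*p1^2*a2*a3^2*b1 + (-1)*p0*p1^2*a2^3*b1 + p0*p1^2*a1*a3^2*b2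 + p0*p1^2*a1*a2^2*b2 + (2)*p0*p1^2*a0*a1*a2*b0 + p0*p1^2*a0^2*a2*b1 + (-3)*p0*p1^2*a0^2*a1*b2 + (-2)*p0^2*p3*a0*a2*a3*b1 + (2)*p0^2*p3*a0*a1*a3*b2 + p0^2*p2*a1*a3^2*b0 + p0^2*p2*a1*a2^2*b0 + p0^2*p2*a1^3*b0 + (-1)*p0^2*p2*a0*a3^2*b1 + (-3)*p0^2*p2*a0*a2^2*b1 + (2)*p0^2*p2*a0*a1*a2*b2 + (-1)*p0^2*p2*a0*a1^2*b1 + (-1)*p0^2*p1*a2*a3^2*b0 + (-1)*p0^2*p1*a2^3*b0 + (-1)*p0^2*p1*a1^2*a2*b0 + p0^2*p1*a0*a3^2*b2 + p0^2*p1*a0*a2^2*b2 + (-2)*p0^2*p1*a0*a1*a2*b1 + (3)*p0^2*p1*a0*a1^2*b2 + p0^3*a2*a3^2*b1 + p0^3*a2^3*b1 + (-1)*p0^3*a1*a3^2*b2 + (-1)*p0^3*a1*a2^2*b2 + p0^3*a1^2*a2*b1 + (-1)*p0^3*a1^3*b2) * h9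

/-- Properties of the unit normal `ξ(u,v) = -N_γ(u)` of the timelike conical
surface `Φ(u,v) = cos v • p + sin v • γ(u)`, where `N_γ(u) = p × γ(u) × γ'(u)`. -/
theorem cone_normal_properties
    (p : Fin 4 → ℝ) (hp : mdot p p = 1)
    (γ : ℝ → Fin 4 → ℝ) (hγsm : ContDiff ℝ (⊤ : ℕ∞) γ)
    (hγ1 : ∀ u, mdot (γ u) (γ u) = 1)
    (hγp : ∀ u, mdot (γ u) p = 0)
    (hγ' : ∀ u, mdot (deriv γ u) (deriv γ u) = -1)
    (Φ : ℝ → ℝ → Fin 4 → ℝ)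
    (hΦ : ∀ u v, Φ u v = Real.cos v • p + Real.sin v • γ u)
    (Nγ : ℝ → Fin 4 → ℝ)
    (hNγ : ∀ u x, mdot x (Nγ u) = (Matrix.of ![x, p, γ u, deriv γ u]).det)
    (ξ : ℝ → ℝ → Fin 4 → ℝ) (hξ : ∀ u v, ξ u v = -Nγ u)
    (κγ : ℝ → ℝ)
    (hκγ : ∀ u, κγ u = (Matrix.of ![γ u, deriv γ u, deriv (deriv γ) u, p]).det) :
    ∀ u v, Real.sin v ≠ 0 →
      mdot (ξ u v) (ξ u v) = 1 ∧
      mdot (ξ u v) (Φ u v) = 0 ∧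
      mdot (ξ u v) (deriv (fun u' => Φ u' v) u) = 0 ∧
      mdot (ξ u v) (deriv (fun v' => Φ u v') v) = 0 ∧
      deriv (fun v' => ξ u v') v = 0 ∧
      deriv (fun u' => ξ u' v) u
        = -(κγ u / Real.sin v) • deriv (fun u' => Φ u' v) u := by
  intro u v hsv
  have hdiff : Differentiable ℝ γ := hγsm.differentiable (by simp)
  have hγsm' : ContDiff ℝ (⊤ : ℕ∞) (deriv γ) := (contDiff_infty_iff_deriv.mp hγsm).2
  have hdiff' : Differentiable ℝ (deriv γ) := hγsm'.differentiable (by simp)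
  have hab : ∀ t, mdot (γ t) (deriv γ t) = 0 := by
    intro t
    have H := hasDerivAt_mdot (hdiff t).hasDerivAt (hdiff t).hasDerivAt
    have H0 : HasDerivAt (fun s => mdot (γ s) (γ s)) 0 t := by
      have e : (fun s => mdot (γ s) (γ s)) = fun _ => (1:ℝ) := funext fun s => hγ1 s
      rw [e]; exact hasDerivAt_const _ _
    have h2 := H.unique H0
    have hc := mdot_comm (deriv γ t) (γ t)
    linarith
  have hbp : ∀ t, mdot (deriv γ t) p = 0 := by
    intro t
    have H := hasDerivAt_mdot (hdiff t).hasDerivAt (hasDerivAt_const t p)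
    have H0 : HasDerivAt (fun s => mdot (γ s) p) 0 t := by
      have e : (fun s => mdot (γ s) p) = fun _ => (0:ℝ) := funext fun s => hγp s
      rw [e]; exact hasDerivAt_const _ _
    have h2 := H.unique H0
    simp only [mdot, Pi.zero_apply] at h2 ⊢
    linarith
  have hac : mdot (γ u) (deriv (deriv γ) u) = 1 := by
    have H := hasDerivAt_mdot (hdiff u).hasDerivAt (hdiff' u).hasDerivAt
    have H0 : HasDerivAt (fun s => mdot (γ s) (deriv γ s)) 0 u := by
      have e : (fun s => mdot (γ s) (deriv γ s)) = fun _ => (0:ℝ) := funext fun s => hab s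
      rw [e]; exact hasDerivAt_const _ _
    have h2 := H.unique H0
    rw [hγ' u] at h2
    linarith
  have hcp : mdot (deriv (deriv γ) u) p = 0 := by
    have H := hasDerivAt_mdot (hdiff' u).hasDerivAt (hasDerivAt_const u p)
    have H0 : HasDerivAt (fun s => mdot (deriv γ s) p) 0 u := by
      have e : (fun s => mdot (deriv γ s) p) = fun _ => (0:ℝ) := funext fun s => hbp s
      rw [e]; exact hasDerivAt_const _ _
    have h2 := H.unique H0
    simp only [mdot, Pi.zero_apply] at h2 ⊢
    linarith
  have hbc : mdot (deriv γ u) (deriv (deriv γ) u) = 0 := by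
    have H := hasDerivAt_mdot (hdiff' u).hasDerivAt (hdiff' u).hasDerivAt
    have H0 : HasDerivAt (fun s => mdot (deriv γ s) (deriv γ s)) 0 u := by
      have e : (fun s => mdot (deriv γ s) (deriv γ s)) = fun _ => (-1:ℝ) := funext fun s => hγ' s
      rw [e]; exact hasDerivAt_const _ _
    have h2 := H.unique H0
    have hc := mdot_comm (deriv (deriv γ) u) (deriv γ u)
    linarith
  have H1 : -(p 0*p 0)+p 1*p 1+p 2*p 2+p 3*p 3 = 1 := hp
  have H2 : -(γ u 0*γ u 0)+γ u 1*γ u 1+γ u 2*γ u 2+γ u 3*γ u 3 = 1 := hγ1 u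
  have H3 : -(γ u 0*p 0)+γ u 1*p 1+γ u 2*p 2+γ u 3*p 3 = 0 := hγp u
  have H4 : -(deriv γ u 0*deriv γ u 0)+deriv γ u 1*deriv γ u 1+deriv γ u 2*deriv γ u 2+deriv γ u 3*deriv γ u 3 = -1 := hγ' u
  have H5 : -(γ u 0*deriv γ u 0)+γ u 1*deriv γ u 1+γ u 2*deriv γ u 2+γ u 3*deriv γ u 3 = 0 := hab u
  have H6 : -(deriv γ u 0*p 0)+deriv γ u 1*p 1+deriv γ u 2*p 2+deriv γ u 3*p 3 = 0 := hbp u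
  have H7 : -(γ u 0*deriv (deriv γ) u 0)+γ u 1*deriv (deriv γ) u 1+γ u 2*deriv (deriv γ) u 2+γ u 3*deriv (deriv γ) u 3 = 1 := hac
  have H8 : -(deriv (deriv γ) u 0*p 0)+deriv (deriv γ) u 1*p 1+deriv (deriv γ) u 2*p 2+deriv (deriv γ) u 3*p 3 = 0 := hcp
  have H9 : -(deriv γ u 0*deriv (deriv γ) u 0)+deriv γ u 1*deriv (deriv γ) u 1+deriv γ u 2*deriv (deriv γ) u 2+deriv γ u 3*deriv (deriv γ) u 3 = 0 := hbc
  have hNfun : ∀ t, Nγ t =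
      ![ -(p 1 * (γ t 2 * deriv γ t 3 - γ t 3 * deriv γ t 2) - p 2 * (γ t 1 * deriv γ t 3 - γ t 3 * deriv γ t 1) + p 3 * (γ t 1 * deriv γ t 2 - γ t 2 * deriv γ t 1)),
         -(p 0 * (γ t 2 * deriv γ t 3 - γ t 3 * deriv γ t 2) - p 2 * (γ t 0 * deriv γ t 3 - γ t 3 * deriv γ t 0) + p 3 * (γ t 0 * deriv γ t 2 - γ t 2 * deriv γ t 0)),
         p 0 * (γ t 1 * deriv γ t 3 - γ t 3 * deriv γ t 1) - p 1 * (γ t 0 * deriv γ t 3 - γ t 3 * deriv γ t 0) + p 3 * (γ t 0 * deriv γ t 1 - γ t 1 * deriv γ t 0),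
         -(p 0 * (γ t 1 * deriv γ t 2 - γ t 2 * deriv γ t 1) - p 1 * (γ t 0 * deriv γ t 2 - γ t 2 * deriv γ t 0) + p 2 * (γ t 0 * deriv γ t 1 - γ t 1 * deriv γ t 0))] :=
    fun t => normal_eq p (γ t) (deriv γ t) (Nγ t) (fun x => hNγ t x)
  have hΦufun : (fun u' => Φ u' v) = fun u' => Real.cos v • p + Real.sin v • γ u' :=
    funext fun t => hΦ t v
  have hΦu : HasDerivAt (fun u' => Φ u' v) (Real.sin v • deriv γ u) u := by
    rw [hΦufun]
    simpa using (HasDerivAt.const_smul (Real.sin v) (hdiff u).hasDerivAt).const_add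
      (Real.cos v • p)
  have hΦv : HasDerivAt (fun v' => Φ u v') ((-Real.sin v) • p + Real.cos v • γ u) v := by
    have e : (fun v' => Φ u v') = fun v' => Real.cos v' • p + Real.sin v' • γ u :=
      funext fun t => hΦ u t
    rw [e]
    exact ((Real.hasDerivAt_cos v).smul_const p).add ((Real.hasDerivAt_sin v).smul_const (γ u))
  have hT : ∀ k l : Fin 4, HasDerivAt (fun t => γ t k * deriv γ t l - γ t l * deriv γ t k)
      ((deriv γ u k * deriv γ u l + γ u k * deriv (deriv γ) u l)
        - (deriv γ u l * deriv γ u k + γ u l * deriv (deriv γ) u k)) u :=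
    fun k l => ((hasDerivAt_pi.mp (hdiff u).hasDerivAt k).mul (hasDerivAt_pi.mp (hdiff' u).hasDerivAt l)).sub
      ((hasDerivAt_pi.mp (hdiff u).hasDerivAt l).mul (hasDerivAt_pi.mp (hdiff' u).hasDerivAt k))
  have hD0 : HasDerivAt (fun t => Nγ t 0) (κγ u * deriv γ u 0) u := by
    have e : (fun t => Nγ t 0) = fun t =>
        -(p 1 * (γ t 2 * deriv γ t 3 - γ t 3 * deriv γ t 2) - p 2 * (γ t 1 * deriv γ t 3 - γ t 3 * deriv γ t 1) + p 3 * (γ t 1 * deriv γ t 2 - γ t 2 * deriv γ t 1)) := by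
      funext t; rw [hNfun t]; simp
    rw [e]
    have H : HasDerivAt (fun t =>
        -(p 1 * (γ t 2 * deriv γ t 3 - γ t 3 * deriv γ t 2) - p 2 * (γ t 1 * deriv γ t 3 - γ t 3 * deriv γ t 1) + p 3 * (γ t 1 * deriv γ t 2 - γ t 2 * deriv γ t 1)))
        (-(p 1 * ((deriv γ u 2 * deriv γ u 3 + γ u 2 * deriv (deriv γ) u 3) - (deriv γ u 3 * deriv γ u 2 + γ u 3 * deriv (deriv γ) u 2)) - p 2 * ((deriv γ u 1 * deriv γ u 3 + γ u 1 * deriv (deriv γ) u 3) - (deriv γ u 3 * deriv γ u 1 + γ u 3 * deriv (deriv γ) u 1)) + p 3 * ((deriv γ u 1 * deriv γ u 2 + γ u 1 * deriv (deriv γ) u 2) - (deriv γ u 2 * deriv γ u 1 + γ u 2 * deriv (deriv γ) u 1)))) u :=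
      ((((hT 2 3).const_mul (p 1)).sub ((hT 1 3).const_mul (p 2))).add ((hT 1 2).const_mul (p 3))).neg
    have he : -(p 1 * ((deriv γ u 2 * deriv γ u 3 + γ u 2 * deriv (deriv γ) u 3) - (deriv γ u 3 * deriv γ u 2 + γ u 3 * deriv (deriv γ) u 2)) - p 2 * ((deriv γ u 1 * deriv γ u 3 + γ u 1 * deriv (deriv γ) u 3) - (deriv γ u 3 * deriv γ u 1 + γ u 3 * deriv (deriv γ) u 1)) + p 3 * ((deriv γ u 1 * deriv γ u 2 + γ u 1 * deriv (deriv γ) u 2) - (deriv γ u 2 * deriv γ u 1 + γ u 2 * deriv (deriv γ) u 1)))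
        = κγ u * deriv γ u 0 := by
      rw [hκγ u, det4_expand]
      linear_combination key2_0 (p 0) (p 1) (p 2) (p 3) (γ u 0) (γ u 1) (γ u 2) (γ u 3) (deriv γ u 0) (deriv γ u 1) (deriv γ u 2) (deriv γ u 3) (deriv (deriv γ) u 0) (deriv (deriv γ) u 1) (deriv (deriv γ) u 2) (deriv (deriv γ) u 3) H1 H2 H3 H4 H5 H6 H7 H8 H9
    exact he ▸ H
  have hD1 : HasDerivAt (fun t => Nγ t 1) (κγ u * deriv γ u 1) u := by
    have e : (fun t => Nγ t 1) = fun t =>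
        -(p 0 * (γ t 2 * deriv γ t 3 - γ t 3 * deriv γ t 2) - p 2 * (γ t 0 * deriv γ t 3 - γ t 3 * deriv γ t 0) + p 3 * (γ t 0 * deriv γ t 2 - γ t 2 * deriv γ t 0)) := by
      funext t; rw [hNfun t]; simp
    rw [e]
    have H : HasDerivAt (fun t =>
        -(p 0 * (γ t 2 * deriv γ t 3 - γ t 3 * deriv γ t 2) - p 2 * (γ t 0 * deriv γ t 3 - γ t 3 * deriv γ t 0) + p 3 * (γ t 0 * deriv γ t 2 - γ t 2 * deriv γ t 0)))
        (-(p 0 * ((deriv γ u 2 * deriv γ u 3 + γ u 2 * deriv (deriv γ) u 3) - (deriv γ u 3 * deriv γ u 2 + γ u 3 * deriv (deriv γ) u 2)) - p 2 * ((deriv γ u 0 * deriv γ u 3 + γ u 0 * deriv (deriv γ) u 3) - (deriv γ u 3 * deriv γ u 0 + γ u 3 * deriv (deriv γ) u 0)) + p 3 * ((deriv γ u 0 * deriv γ u 2 + γ u 0 * deriv (deriv γ) u 2) - (deriv γ u 2 * deriv γ u 0 + γ u 2 * deriv (deriv γ) u 0)))) u :=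
      ((((hT 2 3).const_mul (p 0)).sub ((hT 0 3).const_mul (p 2))).add ((hT 0 2).const_mul (p 3))).neg
    have he : -(p 0 * ((deriv γ u 2 * deriv γ u 3 + γ u 2 * deriv (deriv γ) u 3) - (deriv γ u 3 * deriv γ u 2 + γ u 3 * deriv (deriv γ) u 2)) - p 2 * ((deriv γ u 0 * deriv γ u 3 + γ u 0 * deriv (deriv γ) u 3) - (deriv γ u 3 * deriv γ u 0 + γ u 3 * deriv (deriv γ) u 0)) + p 3 * ((deriv γ u 0 * deriv γ u 2 + γ u 0 * deriv (deriv γ) u 2) - (deriv γ u 2 * deriv γ u 0 + γ u 2 * deriv (deriv γ) u 0)))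
        = κγ u * deriv γ u 1 := by
      rw [hκγ u, det4_expand]
      linear_combination key2_1 (p 0) (p 1) (p 2) (p 3) (γ u 0) (γ u 1) (γ u 2) (γ u 3) (deriv γ u 0) (deriv γ u 1) (deriv γ u 2) (deriv γ u 3) (deriv (deriv γ) u 0) (deriv (deriv γ) u 1) (deriv (deriv γ) u 2) (deriv (deriv γ) u 3) H1 H2 H3 H4 H5 H6 H7 H8 H9
    exact he ▸ H
  have hD2 : HasDerivAt (fun t => Nγ t 2) (κγ u * deriv γ u 2) u := by
    have e : (fun t => Nγ t 2) = fun t =>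
        (p 0 * (γ t 1 * deriv γ t 3 - γ t 3 * deriv γ t 1) - p 1 * (γ t 0 * deriv γ t 3 - γ t 3 * deriv γ t 0) + p 3 * (γ t 0 * deriv γ t 1 - γ t 1 * deriv γ t 0)) := by
      funext t; rw [hNfun t]; simp
    rw [e]
    have H : HasDerivAt (fun t =>
        (p 0 * (γ t 1 * deriv γ t 3 - γ t 3 * deriv γ t 1) - p 1 * (γ t 0 * deriv γ t 3 - γ t 3 * deriv γ t 0) + p 3 * (γ t 0 * deriv γ t 1 - γ t 1 * deriv γ t 0)))
        ((p 0 * ((deriv γ u 1 * deriv γ u 3 + γ u 1 * deriv (deriv γ) u 3) - (deriv γ u 3 * deriv γ u 1 + γ u 3 * deriv (deriv γ) u 1)) - p 1 * ((deriv γ u 0 * deriv γ u 3 + γ u 0 * deriv (deriv γ) u 3) - (deriv γ u 3 * deriv γ u 0 + γ u 3 * deriv (deriv γ) u 0)) + p 3 * ((deriv γ u 0 * deriv γ u 1 + γ u 0 * deriv (deriv γ) u 1) - (deriv γ u 1 * deriv γ u 0 + γ u 1 * deriv (deriv γ) u 0)))) u :=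
      (((hT 1 3).const_mul (p 0)).sub ((hT 0 3).const_mul (p 1))).add ((hT 0 1).const_mul (p 3))
    have he : (p 0 * ((deriv γ u 1 * deriv γ u 3 + γ u 1 * deriv (deriv γ) u 3) - (deriv γ u 3 * deriv γ u 1 + γ u 3 * deriv (deriv γ) u 1)) - p 1 * ((deriv γ u 0 * deriv γ u 3 + γ u 0 * deriv (deriv γ) u 3) - (deriv γ u 3 * deriv γ u 0 + γ u 3 * deriv (deriv γ) u 0)) + p 3 * ((deriv γ u 0 * deriv γ u 1 + γ u 0 * deriv (deriv γ) u 1) - (deriv γ u 1 * deriv γ u 0 + γ u 1 * deriv (deriv γ) u 0)))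
        = κγ u * deriv γ u 2 := by
      rw [hκγ u, det4_expand]
      linear_combination key2_2 (p 0) (p 1) (p 2) (p 3) (γ u 0) (γ u 1) (γ u 2) (γ u 3) (deriv γ u 0) (deriv γ u 1) (deriv γ u 2) (deriv γ u 3) (deriv (deriv γ) u 0) (deriv (deriv γ) u 1) (deriv (deriv γ) u 2) (deriv (deriv γ) u 3) H1 H2 H3 H4 H5 H6 H7 H8 H9
    exact he ▸ H
  have hD3 : HasDerivAt (fun t => Nγ t 3) (κγ u * deriv γ u 3) u := by
    have e : (fun t => Nγ t 3) = fun t =>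
        -(p 0 * (γ t 1 * deriv γ t 2 - γ t 2 * deriv γ t 1) - p 1 * (γ t 0 * deriv γ t 2 - γ t 2 * deriv γ t 0) + p 2 * (γ t 0 * deriv γ t 1 - γ t 1 * deriv γ t 0)) := by
      funext t; rw [hNfun t]; simp
    rw [e]
    have H : HasDerivAt (fun t =>
        -(p 0 * (γ t 1 * deriv γ t 2 - γ t 2 * deriv γ t 1) - p 1 * (γ t 0 * deriv γ t 2 - γ t 2 * deriv γ t 0) + p 2 * (γ t 0 * deriv γ t 1 - γ t 1 * deriv γ t 0)))
        (-(p 0 * ((deriv γ u 1 * deriv γ u 2 + γ u 1 * deriv (deriv γ) u 2) - (deriv γ u 2 * deriv γ u 1 + γ u 2 * deriv (deriv γ) u 1)) - p 1 * ((deriv γ u 0 * deriv γ u 2 + γ u 0 * deriv (deriv γ) u 2) - (deriv γ u 2 * deriv γ u 0 + γ u 2 * deriv (deriv γ) u 0)) + p 2 * ((deriv γ u 0 * deriv γ u 1 + γ u 0 * deriv (deriv γ) u 1) - (deriv γ u 1 * deriv γ u 0 + γ u 1 * deriv (deriv γ) u 0)))) u :=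
      ((((hT 1 2).const_mul (p 0)).sub ((hT 0 2).const_mul (p 1))).add ((hT 0 1).const_mul (p 2))).neg
    have he : -(p 0 * ((deriv γ u 1 * deriv γ u 2 + γ u 1 * deriv (deriv γ) u 2) - (deriv γ u 2 * deriv γ u 1 + γ u 2 * deriv (deriv γ) u 1)) - p 1 * ((deriv γ u 0 * deriv γ u 2 + γ u 0 * deriv (deriv γ) u 2) - (deriv γ u 2 * deriv γ u 0 + γ u 2 * deriv (deriv γ) u 0)) + p 2 * ((deriv γ u 0 * deriv γ u 1 + γ u 0 * deriv (deriv γ) u 1) - (deriv γ u 1 * deriv γ u 0 + γ u 1 * deriv (deriv γ) u 0)))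
        = κγ u * deriv γ u 3 := by
      rw [hκγ u, det4_expand]
      linear_combination key2_3 (p 0) (p 1) (p 2) (p 3) (γ u 0) (γ u 1) (γ u 2) (γ u 3) (deriv γ u 0) (deriv γ u 1) (deriv γ u 2) (deriv γ u 3) (deriv (deriv γ) u 0) (deriv (deriv γ) u 1) (deriv (deriv γ) u 2) (deriv (deriv γ) u 3) H1 H2 H3 H4 H5 H6 H7 H8 H9
    exact he ▸ H
  refine ⟨?_, ?_, ?_, ?_, ?_, ?_⟩
  · rw [hξ u v, mdot_neg_neg, hNfun u]
    simp only [mdot, Matrix.cons_val_zero, Matrix.cons_val_one, Matrix.head_cons,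
      Matrix.cons_val_two, Matrix.cons_val_three, Matrix.tail_cons]
    linear_combination key1 (p 0) (p 1) (p 2) (p 3) (γ u 0) (γ u 1) (γ u 2) (γ u 3) (deriv γ u 0) (deriv γ u 1) (deriv γ u 2) (deriv γ u 3) H1 H2 H3 H4 H5 H6
  · rw [hξ u v, hΦ u v, hNfun u]
    simp only [mdot, Pi.neg_apply, Pi.add_apply, Pi.smul_apply, smul_eq_mul,
      Matrix.cons_val_zero, Matrix.cons_val_one, Matrix.head_cons,
      Matrix.cons_val_two, Matrix.cons_val_three, Matrix.tail_cons]
    ring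
  · rw [hξ u v, hΦu.deriv, hNfun u]
    simp only [mdot, Pi.neg_apply, Pi.smul_apply, smul_eq_mul,
      Matrix.cons_val_zero, Matrix.cons_val_one, Matrix.head_cons,
      Matrix.cons_val_two, Matrix.cons_val_three, Matrix.tail_cons]
    ring
  · rw [hξ u v, hΦv.deriv, hNfun u]
    simp only [mdot, Pi.neg_apply, Pi.add_apply, Pi.smul_apply, smul_eq_mul,
      Matrix.cons_val_zero, Matrix.cons_val_one, Matrix.head_cons,
      Matrix.cons_val_two, Matrix.cons_val_three, Matrix.tail_cons]
    ring
  · have e : (fun v' => ξ u v') = fun _ => -Nγ u := funext fun t => hξ u t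
    rw [e]; exact deriv_const _ _
  · have HN : HasDerivAt Nγ (κγ u • deriv γ u) u := by
      apply hasDerivAt_pi.mpr
      intro i
      fin_cases i
      · exact hD0
      · exact hD1
      · exact hD2
      · exact hD3
    have e : (fun u' => ξ u' v) = fun u' => -Nγ u' := funext fun t => hξ t v
    have Hξ : HasDerivAt (fun u' => ξ u' v) (-(κγ u • deriv γ u)) u := by
      rw [e]; exact HN.neg
    rw [Hξ.deriv, hΦu.deriv, smul_smul,
      show -(κγ u / Real.sin v) * Real.sin v = -κγ u from by field_simp,
      neg_smul]
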